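/- arXiv:0802.4459 — 4 statements merged into one kernel-verified Lean document; each statement's English description precedes it below -/
import Mathlib

section
/- There exists a constant C₁ > 0 such that for μ-almost every irrational x ∈ (0,1] there is N ∈ ℕ with q̂_n(x) ≤ e^{C₁·n} for all n ≥ N. -/
open MeasureTheory Filter

noncomputable section

/-- The ECF digit `k` of a point `x ∈ (0,1]`: `x ∈ B(k,ξ)`. -/
def ecfK (x : ℝ) : ℕ := (⌊1/x⌋ + 1).toNat / 2

/-- The ECF digit `ξ` of a point `x ∈ (0,1]`. -/
def ecfXi (x : ℝ) : ℤ := if ⌊1/x⌋ % 2 = 0 then 1 else -1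

/-- The ECF Gauss-like map `T(x) = ξ (1/x - 2k)` for `x ∈ B(k,ξ)`. -/
def ecfT (x : ℝ) : ℝ := (ecfXi x : ℝ) * (1/x - 2 * (ecfK x : ℝ))

/-- The domain: irrational points of `(0,1]`. -/
def ECFdom : Set ℝ := {x | x ∈ Set.Ioc (0:ℝ) 1 ∧ Irrational x}

/-- The `n`-th ECF digit `k_n(x)` (for `n ≥ 1`). -/
def ecfDigK (x : ℝ) (n : ℕ) : ℕ := ecfK (ecfT^[n-1] x)

/-- The `n`-th ECF digit `ξ_n(x)` (for `n ≥ 1`), with the convention `ξ_0 = 1`. -/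
def ecfDigXi (x : ℝ) (n : ℕ) : ℤ := if n = 0 then 1 else ecfXi (ecfT^[n-1] x)

/-- Numerators of continued fractions with even partial quotients built from digit
sequences `(k_n)_{n≥1}`, `(ξ_n)_{n≥0}`:
`p_n = 2 k_n p_{n-1} + ξ_{n-1} p_{n-2}`, `p_0 = 0`, `p_{-1} = 1`. -/
def cfP (k : ℕ → ℕ) (ξ : ℕ → ℤ) : ℕ → ℤ
  | 0 => 0
  | 1 => ξ 0
  | (n+2) => 2 * (k (n+2) : ℤ) * cfP k ξ (n+1) + ξ (n+1) * cfP k ξ n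

/-- Denominators: `q_n = 2 k_n q_{n-1} + ξ_{n-1} q_{n-2}`, `q_0 = 1`, `q_{-1} = 0`. -/
def cfQ (k : ℕ → ℕ) (ξ : ℕ → ℤ) : ℕ → ℤ
  | 0 => 1
  | 1 => 2 * (k 1 : ℤ)
  | (n+2) => 2 * (k (n+2) : ℤ) * cfQ k ξ (n+1) + ξ (n+1) * cfQ k ξ n

/-- The ECF convergent numerators `p_n(x)`. -/
def ecfP (x : ℝ) : ℕ → ℤ := cfP (ecfDigK x) (ecfDigXi x)

/-- The ECF convergent denominators `q_n(x)`. -/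
def ecfQ (x : ℝ) : ℕ → ℤ := cfQ (ecfDigK x) (ecfDigXi x)

/-- `τ(x) = min {j ≥ 0 : T^j(x) ∈ (0,1/2]}`. -/
def ecfTau (x : ℝ) : ℕ := sInf {j : ℕ | ecfT^[j] x ∈ Set.Ioc (0:ℝ) (1/2)}

/-- The jump transformation `R(x) = T^{τ(x)+1}(x)`. -/
def ecfR (x : ℝ) : ℝ := ecfT^[ecfTau x + 1] x

/-- `ν_0(x) = 1`, `ν_n(x) = ν_{n-1}(x) + τ(R^{n-1}(x)) + 1`. -/
def ecfNu (x : ℝ) : ℕ → ℕ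
  | 0 => 1
  | (n+1) => ecfNu x n + ecfTau (ecfR^[n] x) + 1

/-- The `R`-denominators: `q̂_0(x) = 1`, `q̂_n(x) = q_{ν_n(x)}(x)`. -/
def ecfQhat (x : ℝ) (n : ℕ) : ℤ := if n = 0 then 1 else ecfQ x (ecfNu x n)

/-- The renewal time `n̂_L(x) = min {n ≥ 1 : q̂_n(x) > L}`. -/
def ecfNhat (x : ℝ) (L : ℝ) : ℕ := sInf {n : ℕ | 1 ≤ n ∧ L < (ecfQhat x n : ℝ)}

/-- The `R`-invariant probability measure `μ`, with density
`f(x) = (1/log 3)(1/(3-x) + 1/(1+x))` on `(0,1]`. -/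
def ecfMu : Measure ℝ :=
  (volume.restrict (Set.Ioc 0 1)).withDensity
    (fun x => ENNReal.ofReal ((1/Real.log 3) * (1/(3-x) + 1/(1+x))))

/-- Σ-coding components: `h_n(x) = τ(R^{n-1}(x))`. -/
def sigmaH (x : ℝ) (n : ℕ) : ℕ := ecfTau (ecfR^[n-1] x)

/-- Σ-coding components: `m_n(x) = k_{ν_n(x)-1}(x)`. -/
def sigmaM (x : ℝ) (n : ℕ) : ℕ := ecfDigK x (ecfNu x n - 1)

/-- Σ-coding components: `ε_n(x) = ξ_{ν_n(x)-1}(x)`. -/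
def sigmaE (x : ℝ) (n : ℕ) : ℤ := ecfDigXi x (ecfNu x n - 1)

/-- The alphabet `Σ = ℕ₀ × ((ℕ × {±1}) ∖ {(1,-1)})`, as a subset of `ℕ × (ℕ × ℤ)`. -/
def SigmaSymb : Set (ℕ × (ℕ × ℤ)) :=
  {s | 1 ≤ s.2.1 ∧ ((s.2.2 = 1 ∨ s.2.2 = -1) ∧ ¬(s.2.1 = 1 ∧ s.2.2 = -1))}

/-- The full Σ-coding `σ_n(x) = (h_n, (m_n, ε_n))`. -/
def sigmaCode (x : ℝ) (n : ℕ) : ℕ × (ℕ × ℤ) := (sigmaH x n, (sigmaM x n, sigmaE x n))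

end

namespace ECFaux


def dom : Set ℝ := {x | x ∈ Set.Ioo (0:ℝ) 1 ∧ Irrational x}

lemma floor_facts {x : ℝ} (hx : x ∈ dom) :
    1 ≤ ⌊1/x⌋ ∧ (⌊1/x⌋ : ℝ) < 1/x ∧ 1/x < ⌊1/x⌋ + 1 ∧ Irrational (1/x) := by
  obtain ⟨⟨h0, h1⟩, hirr⟩ := hx
  have hinv : Irrational (1/x) := by rw [one_div]; exact hirr.inv
  have h2 : (1:ℝ) < 1/x := by rw [lt_div_iff₀ h0]; linarith
  refine ⟨Int.le_floor.2 (by exact_mod_cast h2.le), ?_, Int.lt_floor_add_one _, hinv⟩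
  exact lt_of_le_of_ne (Int.floor_le _) fun h => hinv.ne_int _ h.symm

lemma ecfK_cast (x : ℝ) (h : 1 ≤ ⌊1/x⌋) : (ecfK x : ℤ) = (⌊1/x⌋ + 1)/2 := by
  rw [ecfK]
  rw [Int.natCast_div,
    Int.toNat_of_nonneg (by omega)]
  norm_num

lemma step {x : ℝ} (hx : x ∈ dom) :
    1 ≤ ecfK x ∧ (ecfXi x = 1 ∨ ecfXi x = -1) ∧ ecfT x ∈ dom ∧
      2*(ecfK x:ℝ) + (ecfXi x:ℝ) * ecfT x = 1/x := by
  obtain ⟨hm1, hlt, hlt2, hinv⟩ := floor_facts hx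
  set m : ℤ := ⌊1/x⌋ with hm
  have hk : (ecfK x : ℤ) = (m+1)/2 := ecfK_cast x hm1
  rcases Int.even_or_odd m with ⟨a, ha⟩ | ⟨a, ha⟩
  · -- m = 2a, ξ = 1, k = a
    have hxi : ecfXi x = 1 := by rw [ecfXi, if_pos (by omega)]
    have hka : (ecfK x : ℤ) = a := by omega
    have hkr : (ecfK x : ℝ) = (a : ℤ) := by exact_mod_cast hka
    have hTx : ecfT x = 1/x - (m:ℝ) := by
      rw [ecfT, hxi, hkr]; push_cast [ha]; ring
    have hma : ((m:ℤ):ℝ) = 2*(a:ℝ) := by push_cast [ha]; ring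
    refine ⟨by omega, Or.inl hxi, ⟨⟨by linarith, by linarith⟩, ?_⟩, ?_⟩
    · rw [hTx]; exact hinv.sub_intCast m
    · rw [hTx, hxi, hkr]; push_cast; linarith [hma]
  · -- m = 2a+1, ξ = -1, k = a+1
    have hxi : ecfXi x = -1 := by rw [ecfXi, if_neg (by omega)]
    have hka : (ecfK x : ℤ) = a + 1 := by omega
    have hkr : (ecfK x : ℝ) = ((a:ℤ):ℝ) + 1 := by exact_mod_cast hka
    have hTx : ecfT x = ((m:ℝ) + 1) - 1/x := by
      rw [ecfT, hxi, hkr]; push_cast [ha]; ring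
    refine ⟨by omega, Or.inr hxi, ⟨⟨by linarith, by linarith⟩, ?_⟩, ?_⟩
    · rw [hTx]
      have : Irrational ((m:ℝ) + 1 - 1/x) := by
        have := hinv.intCast_sub (m+1)
        push_cast at this ⊢
        convert this using 2 <;> push_cast <;> ring_nf
      exact this
    · rw [hTx, hxi, hkr]; push_cast [ha]; ring




variable {x : ℝ}

lemma xi_pm (y : ℝ) : ecfXi y = 1 ∨ ecfXi y = -1 := by
  rw [ecfXi]; split <;> simp

lemma digxi_pm (y : ℝ) (i : ℕ) : ecfDigXi y i = 1 ∨ ecfDigXi y i = -1 := by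
  rw [ecfDigXi]; split
  · simp
  · exact xi_pm _

lemma iter_dom (hx : x ∈ dom) (n : ℕ) : ecfT^[n] x ∈ dom := by
  induction n with
  | zero => exact hx
  | succ n ih => rw [Function.iterate_succ_apply']; exact (step ih).2.2.1

lemma digit_of_half_lt {y : ℝ} (hy : y ∈ dom) (hh : 1/2 < y) :
    ecfK y = 1 ∧ ecfXi y = -1 := by
  obtain ⟨⟨h0, h1⟩, hirr⟩ := hy
  have h2 : 1/y < 2 := by rw [div_lt_iff₀ h0]; linarith
  have h2' : (1:ℝ) < 1/y := by rw [lt_div_iff₀ h0]; linarith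
  have hm : ⌊1/y⌋ = 1 := by
    have := Int.floor_le (1/y)
    have h3 : ⌊1/y⌋ < 2 := by exact_mod_cast Int.floor_lt.2 (by exact_mod_cast h2)
    have h4 : (1:ℤ) ≤ ⌊1/y⌋ := Int.le_floor.2 (by exact_mod_cast h2'.le)
    omega
  constructor
  · rw [ecfK, hm]; rfl
  · rw [ecfXi, hm]; norm_num

lemma digit_of_lt_half {y : ℝ} (hy : y ∈ dom) (hh : y < 1/2) :
    (ecfXi y = -1 → 2 ≤ ecfK y) := by
  obtain ⟨⟨h0, h1⟩, hirr⟩ := hy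
  intro hxi
  have h2 : (2:ℝ) ≤ 1/y := by rw [le_div_iff₀ h0]; linarith
  have hm : (2:ℤ) ≤ ⌊1/y⌋ := Int.le_floor.2 (by exact_mod_cast h2)
  have hodd : ¬ (⌊1/y⌋ % 2 = 0) := by
    intro h; rw [ecfXi, if_pos h] at hxi; exact absurd hxi (by norm_num)
  have hk : (ecfK y : ℤ) = (⌊1/y⌋ + 1)/2 := by
    rw [ecfK, Int.natCast_div,
      Int.toNat_of_nonneg (by omega)]
    norm_num
  omega

lemma ecfK_pos {y : ℝ} (hy : y ∈ dom) : 1 ≤ ecfK y := (step hy).1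

lemma ecfK_bounds {y : ℝ} (hy : y ∈ dom) :
    (2*(ecfK y:ℝ) - 1) * y < 1 ∧ 1 < (2*(ecfK y:ℝ)+1) * y := by
  obtain ⟨⟨h0, h1⟩, hirr⟩ := hy
  have h2' : (1:ℝ) < 1/y := by rw [lt_div_iff₀ h0]; linarith
  have h4 : (1:ℤ) ≤ ⌊1/y⌋ := Int.le_floor.2 (by exact_mod_cast h2'.le)
  have hk : (ecfK y : ℤ) = (⌊1/y⌋ + 1)/2 := by
    rw [ecfK, Int.natCast_div,
      Int.toNat_of_nonneg (by omega)]
    norm_num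
  have hlow : (2*(ecfK y:ℤ) - 1) ≤ ⌊1/y⌋ := by omega
  have hhigh : ⌊1/y⌋ + 1 ≤ 2*(ecfK y:ℤ) + 1 := by omega
  have hinv : Irrational (1/y) := by rw [one_div]; exact hirr.inv
  have hfl : (⌊1/y⌋:ℝ) < 1/y :=
    lt_of_le_of_ne (Int.floor_le _) fun h => hinv.ne_int _ h.symm
  have hfu : 1/y < (⌊1/y⌋:ℝ) + 1 := Int.lt_floor_add_one _
  constructor
  · have h5 : (2*(ecfK y:ℝ) - 1) < 1/y := by
      calc (2*(ecfK y:ℝ) - 1) ≤ (⌊1/y⌋:ℝ) := by exact_mod_cast hlow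
        _ < 1/y := hfl
    rw [lt_div_iff₀ h0] at h5; linarith
  · have h5 : 1/y < (2*(ecfK y:ℝ)+1) := by
      have : ((⌊1/y⌋:ℝ)) + 1 ≤ 2*(ecfK y:ℝ) + 1 := by exact_mod_cast hhigh
      linarith
    rw [div_lt_iff₀ h0] at h5; linarith


lemma run_step {y : ℝ} (hy : y ∈ dom) (hh : 1/2 < y) :
    1/(1 - ecfT y) = 1/(1-y) - 1 := by
  obtain ⟨hk, hxi⟩ := digit_of_half_lt hy hh
  obtain ⟨⟨h0, h1⟩, _⟩ := hy
  have hT : ecfT y = 2 - 1/y := by rw [ecfT, hxi, hk]; push_cast; ring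
  rw [hT]
  have hy1 : (0:ℝ) < 1 - y := by linarith
  have hy2 : 1 - (2 - 1/y) = (1-y)/y := by field_simp; ring
  rw [hy2, one_div_div]
  field_simp; ring

lemma tau_nonempty (hx : x ∈ dom) :
    {j : ℕ | ecfT^[j] x ∈ Set.Ioc (0:ℝ) (1/2)}.Nonempty := by
  by_contra h
  rw [Set.not_nonempty_iff_eq_empty] at h
  have hbig : ∀ j : ℕ, 1/2 < ecfT^[j] x := by
    intro j
    have hd := iter_dom hx j
    by_contra hle
    push_neg at hle
    have : j ∈ {j : ℕ | ecfT^[j] x ∈ Set.Ioc (0:ℝ) (1/2)} := ⟨hd.1.1, hle⟩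
    rw [h] at this; exact this
  have key : ∀ j : ℕ, 1/(1 - ecfT^[j] x) = 1/(1-x) - j := by
    intro j
    induction j with
    | zero => simp
    | succ j ih =>
      rw [Function.iterate_succ_apply', run_step (iter_dom hx j) (hbig j), ih]
      push_cast; ring
  set j := ⌈1/(1-x)⌉₊ with hj
  have h1 : 1/(1 - ecfT^[j] x) > 0 := by
    have hd := iter_dom hx j
    have h3 : (0:ℝ) < 1 - ecfT^[j] x := by linarith [hd.1.2]
    positivity
  have h2 : 1/(1-x) ≤ (j:ℝ) := Nat.le_ceil _
  have := key j
  linarith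

lemma tau_mem (hx : x ∈ dom) : ecfT^[ecfTau x] x ∈ Set.Ioc (0:ℝ) (1/2) :=
  Nat.sInf_mem (tau_nonempty hx)

lemma tau_lt (hx : x ∈ dom) {l : ℕ} (hl : l < ecfTau x) : 1/2 < ecfT^[l] x := by
  have : l ∉ {j : ℕ | ecfT^[j] x ∈ Set.Ioc (0:ℝ) (1/2)} := Nat.notMem_of_lt_sInf hl
  have hd := iter_dom hx l
  by_contra hle
  push_neg at hle
  exact this ⟨hd.1.1, hle⟩

lemma R_dom (hx : x ∈ dom) : ecfR x ∈ dom := iter_dom hx _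

lemma R_iter_dom (hx : x ∈ dom) (j : ℕ) : ecfR^[j] x ∈ dom := by
  induction j with
  | zero => exact hx
  | succ j ih => rw [Function.iterate_succ_apply']; exact R_dom ih

lemma nu_pos (j : ℕ) : 1 ≤ ecfNu x j := by
  cases j with
  | zero => exact le_refl 1
  | succ j => rw [ecfNu]; omega

lemma nu_succ (j : ℕ) : ecfNu x (j+1) = ecfNu x j + sigmaH x (j+1) + 1 := by
  rw [ecfNu, sigmaH]; norm_num

lemma R_iter_eq (j : ℕ) : ecfR^[j] x = ecfT^[ecfNu x j - 1] x := by
  induction j with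
  | zero => rfl
  | succ j ih =>
    have hnu : ecfNu x (j+1) = ecfNu x j + ecfTau (ecfR^[j] x) + 1 := rfl
    have hp := nu_pos (x := x) j
    rw [hnu, Function.iterate_succ_apply', ecfR, ih, ← Function.iterate_add_apply]
    congr 1
    omega

lemma dig_run (hx : x ∈ dom) (j l : ℕ) (hl : l < sigmaH x (j+1)) :
    ecfDigK x (ecfNu x j + l) = 1 ∧ ecfDigXi x (ecfNu x j + l) = -1 := by
  have hnu := nu_pos (x := x) j
  have hpt : ecfT^[ecfNu x j + l - 1] x = ecfT^[l] (ecfR^[j] x) := by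
    rw [R_iter_eq, ← Function.iterate_add_apply]
    congr 1
    omega
  have hdom : ecfT^[l] (ecfR^[j] x) ∈ dom := iter_dom (R_iter_dom hx j) l
  have hhalf : 1/2 < ecfT^[l] (ecfR^[j] x) := by
    have : sigmaH x (j+1) = ecfTau (ecfR^[j] x) := by rw [sigmaH]; norm_num
    exact tau_lt (R_iter_dom hx j) (by omega)
  obtain ⟨hk, hxi⟩ := digit_of_half_lt hdom hhalf
  constructor
  · rw [ecfDigK, hpt]; exact hk
  · rw [ecfDigXi, if_neg (by omega), hpt]; exact hxi

lemma dig_end (hx : x ∈ dom) (j : ℕ) :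
    1 ≤ sigmaM x (j+1) ∧ (sigmaE x (j+1) = -1 → 2 ≤ sigmaM x (j+1)) := by
  have hnu := nu_pos (x := x) j
  have hend : ecfNu x (j+1) - 1 = ecfNu x j + sigmaH x (j+1) := by
    rw [nu_succ]; omega
  have hpt : ecfT^[ecfNu x (j+1) - 1 - 1] x = ecfT^[sigmaH x (j+1)] (ecfR^[j] x) := by
    rw [R_iter_eq, ← Function.iterate_add_apply]
    congr 1
    omega
  set y := ecfT^[sigmaH x (j+1)] (ecfR^[j] x) with hy
  have hdom : y ∈ dom := iter_dom (R_iter_dom hx j) _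
  have hmem : y ∈ Set.Ioc (0:ℝ) (1/2) := by
    have : sigmaH x (j+1) = ecfTau (ecfR^[j] x) := by rw [sigmaH]; norm_num
    rw [hy, this]
    exact tau_mem (R_iter_dom hx j)
  have hlt : y < 1/2 := lt_of_le_of_ne hmem.2 (by
    intro h
    exact hdom.2 ⟨(1:ℚ)/2, by push_cast; rw [h]⟩)
  have hM : sigmaM x (j+1) = ecfK y := by rw [sigmaM, ecfDigK, hpt]
  have hE : sigmaE x (j+1) = ecfXi y := by
    rw [sigmaE, ecfDigXi, if_neg (by omega), hpt]
  constructor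
  · rw [hM]; exact ecfK_pos hdom
  · rw [hM, hE]; exact digit_of_lt_half hdom hlt




variable {x : ℝ}

lemma Q_zero : ecfQ x 0 = 1 := rfl
lemma Q_one : ecfQ x 1 = 2*(ecfDigK x 1 : ℤ) := rfl
lemma Q_rec (i : ℕ) : ecfQ x (i+2) =
    2*(ecfDigK x (i+2):ℤ) * ecfQ x (i+1) + ecfDigXi x (i+1) * ecfQ x i := rfl
lemma P_zero : ecfP x 0 = 0 := rfl
lemma P_one : ecfP x 1 = ecfDigXi x 0 := rfl
lemma P_rec (i : ℕ) : ecfP x (i+2) =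
    2*(ecfDigK x (i+2):ℤ) * ecfP x (i+1) + ecfDigXi x (i+1) * ecfP x i := rfl

lemma digK_pos (hx : x ∈ dom) (i : ℕ) : 1 ≤ ecfDigK x i :=
  (step (iter_dom hx (i-1))).1

lemma Q_mono (hx : x ∈ dom) : ∀ i, 1 ≤ ecfQ x i ∧ ecfQ x i ≤ ecfQ x (i+1) := by
  intro i
  induction i with
  | zero =>
    refine ⟨le_refl 1, ?_⟩
    show ecfQ x 0 ≤ ecfQ x 1
    rw [Q_zero, Q_one]
    have := digK_pos hx 1
    omega
  | succ i ih =>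
    obtain ⟨h1, h2⟩ := ih
    refine ⟨by omega, ?_⟩
    rw [Q_rec i]
    have hk := digK_pos hx (i+2)
    have hprod : (1:ℤ) * ecfQ x (i+1) ≤ (ecfDigK x (i+2):ℤ) * ecfQ x (i+1) :=
      mul_le_mul_of_nonneg_right (by exact_mod_cast hk) (by omega)
    rcases digxi_pm x (i+1) with h | h <;> rw [h] <;> nlinarith

lemma Q_pos (hx : x ∈ dom) (i : ℕ) : 1 ≤ ecfQ x i := (Q_mono hx i).1

lemma Q_le_succ (hx : x ∈ dom) {i j : ℕ} (hij : i ≤ j) : ecfQ x i ≤ ecfQ x j := by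
  induction j with
  | zero => simp_all
  | succ j ih =>
    rcases Nat.lt_or_ge i (j+1) with h | h
    · exact le_trans (ih (by omega)) (Q_mono hx j).2
    · have : i = j+1 := by omega
      simp [this]

lemma Q_lower (hx : x ∈ dom) (i : ℕ) :
    (2*(ecfDigK x (i+1):ℤ) - 1) * ecfQ x i ≤ ecfQ x (i+1) := by
  cases i with
  | zero =>
    show (2*(ecfDigK x 1:ℤ) - 1) * ecfQ x 0 ≤ ecfQ x 1
    rw [Q_zero, Q_one]; omega
  | succ i =>
    rw [Q_rec i]
    have h1 := Q_pos hx i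
    have h2 := (Q_mono hx i).2
    rcases digxi_pm x (i+1) with h | h <;> rw [h] <;> nlinarith

lemma Q_upper (hx : x ∈ dom) (i : ℕ) :
    ecfQ x (i+1) ≤ (2*(ecfDigK x (i+1):ℤ) + 1) * ecfQ x i := by
  cases i with
  | zero =>
    show ecfQ x 1 ≤ (2*(ecfDigK x 1:ℤ) + 1) * ecfQ x 0
    rw [Q_zero, Q_one]; omega
  | succ i =>
    rw [Q_rec i]
    have h1 := Q_pos hx i
    have h2 := (Q_mono hx i).2
    rcases digxi_pm x (i+1) with h | h <;> rw [h] <;> nlinarith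

lemma run_prog (hx : x ∈ dom) (j : ℕ) : ∀ i, i ≤ sigmaH x (j+1) →
    ecfQ x (ecfNu x j - 1 + i) =
      ecfQ x (ecfNu x j - 1) + i * (ecfQ x (ecfNu x j) - ecfQ x (ecfNu x j - 1)) := by
  have hnu := nu_pos (x := x) j
  intro i
  induction i using Nat.strong_induction_on with
  | _ i ih =>
    match i with
    | 0 => intro _; simp
    | 1 =>
      intro _
      have : ecfNu x j - 1 + 1 = ecfNu x j := by omega
      rw [this]; ring
    | (i+2) =>
      intro hle
      have e1 : ecfNu x j - 1 + (i+2) = (ecfNu x j - 1 + i) + 2 := by omega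
      rw [e1, Q_rec]
      have hd1 := dig_run hx j (i+1) (by omega)
      have hd2 := dig_run hx j i (by omega)
      have e2 : ecfNu x j - 1 + i + 2 = ecfNu x j + (i + 1) := by omega
      have e3 : ecfNu x j - 1 + i + 1 = ecfNu x j + i := by omega
      rw [e2, e3, hd1.1, hd2.2]
      have e4 : ecfNu x j + i = ecfNu x j - 1 + (i+1) := by omega
      rw [e4, ih (i+1) (by omega) (by omega), ih i (by omega) (by omega)]
      push_cast
      ring

lemma enter (hx : x ∈ dom) (j : ℕ) :
    2 * ecfQ x (ecfNu x j - 1) ≤ 5*(ecfQ x (ecfNu x j) - ecfQ x (ecfNu x j - 1)) := by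
  cases j with
  | zero =>
    show 2 * ecfQ x 0 ≤ 5 * (ecfQ x 1 - ecfQ x 0)
    rw [Q_zero, Q_one]
    have := digK_pos hx 1
    omega
  | succ j =>
    have hnu := nu_pos (x := x) j
    have hnus := nu_succ (x := x) j
    have h2 : 2 ≤ ecfNu x (j+1) := by omega
    have e1 : ecfNu x (j+1) = (ecfNu x (j+1) - 2) + 2 := by omega
    have e2 : ecfNu x (j+1) - 1 = (ecfNu x (j+1) - 2) + 1 := by omega
    have hrec : ecfQ x (ecfNu x (j+1)) =
        2*(ecfDigK x (ecfNu x (j+1)):ℤ) * ecfQ x (ecfNu x (j+1) - 1)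
          + sigmaE x (j+1) * ecfQ x (ecfNu x (j+1) - 2) := by
      conv_lhs => rw [e1]
      rw [Q_rec]
      rw [sigmaE, ← e1, ← e2]
    have hkpos := digK_pos hx (ecfNu x (j+1))
    have hq2 := Q_pos hx (ecfNu x (j+1) - 2)
    have hq1 := Q_pos hx (ecfNu x (j+1) - 1)
    have hkQ : (1:ℤ) * ecfQ x (ecfNu x (j+1) - 1)
        ≤ (ecfDigK x (ecfNu x (j+1)):ℤ) * ecfQ x (ecfNu x (j+1) - 1) :=
      mul_le_mul_of_nonneg_right (by exact_mod_cast hkpos) (by omega)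
    rcases digxi_pm x (ecfNu x (j+1) - 1) with h | h
    · have he : sigmaE x (j+1) = 1 := by rw [sigmaE]; exact h
      rw [he] at hrec
      nlinarith
    · have he : sigmaE x (j+1) = -1 := by rw [sigmaE]; exact h
      have hm := (dig_end hx j).2 he
      have hQl : (2*(sigmaM x (j+1):ℤ) - 1) * ecfQ x (ecfNu x (j+1) - 2)
          ≤ ecfQ x (ecfNu x (j+1) - 1) := by
        have hthis := Q_lower hx (ecfNu x (j+1) - 2)
        have hsm : ecfDigK x (ecfNu x (j+1) - 2 + 1) = sigmaM x (j+1) := by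
          rw [sigmaM]; congr 1; omega
        rw [hsm, ← e2] at hthis
        exact hthis
      have h3 : (3:ℤ) * ecfQ x (ecfNu x (j+1) - 2) ≤ ecfQ x (ecfNu x (j+1) - 1) := by
        have : (3:ℤ) ≤ 2*(sigmaM x (j+1):ℤ) - 1 := by
          have : (2:ℤ) ≤ (sigmaM x (j+1):ℤ) := by exact_mod_cast hm
          omega
        nlinarith
      rw [he] at hrec
      nlinarith


lemma blockgrow (hx : x ∈ dom) (j : ℕ) :
    2 * ((sigmaH x (j+1) : ℤ) + 1) * (sigmaM x (j+1) : ℤ) * ecfQ x (ecfNu x j - 1)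
      ≤ 5 * ecfQ x (ecfNu x (j+1) - 1) := by
  have hnu := nu_pos (x := x) j
  have hnus := nu_succ (x := x) j
  set h := sigmaH x (j+1) with hh
  set m := sigmaM x (j+1) with hm
  set r := ecfQ x (ecfNu x j) - ecfQ x (ecfNu x j - 1) with hr
  have hrun := run_prog hx j h (le_refl _)
  have henter := enter hx j
  have e1 : ecfNu x (j+1) - 2 = ecfNu x j - 1 + h := by omega
  have e2 : ecfNu x (j+1) - 1 = (ecfNu x j - 1 + h) + 1 := by omega
  have hQl : (2*(m:ℤ) - 1) * ecfQ x (ecfNu x j - 1 + h)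
      ≤ ecfQ x (ecfNu x (j+1) - 1) := by
    have hthis := Q_lower hx (ecfNu x j - 1 + h)
    have hsm : ecfDigK x (ecfNu x j - 1 + h + 1) = m := by
      rw [hm, sigmaM]; congr 1; omega
    rw [hsm] at hthis
    rw [e2]
    exact hthis
  rw [hrun] at hQl
  have hq := Q_pos hx (ecfNu x j - 1)
  have hm1 : 1 ≤ (m:ℤ) := by exact_mod_cast (dig_end hx j).1
  have hh0 : 0 ≤ (h:ℤ) := Int.natCast_nonneg h
  have hm0 : (0:ℤ) ≤ (m:ℤ) := by linarith
  have hr0 : (0:ℤ) ≤ r := by linarith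
  have hs : (0:ℤ) ≤ ecfQ x (ecfNu x j - 1) + (h:ℤ)*r := by
    have := mul_nonneg hh0 hr0
    linarith
  have t1 : (m:ℤ)*(ecfQ x (ecfNu x j - 1) + (h:ℤ)*r)
      ≤ (2*(m:ℤ)-1)*(ecfQ x (ecfNu x j - 1) + (h:ℤ)*r) :=
    mul_le_mul_of_nonneg_right (by linarith) hs
  have t2 : (m:ℤ)*(ecfQ x (ecfNu x j - 1) + (h:ℤ)*r) ≤ ecfQ x (ecfNu x (j+1) - 1) :=
    le_trans t1 hQl
  have key : (0:ℤ) ≤ (m:ℤ)*((h:ℤ)*(5*r - 2*ecfQ x (ecfNu x j - 1))) :=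
    mul_nonneg hm0 (mul_nonneg hh0 (by linarith))
  have key2 : (0:ℤ) ≤ (m:ℤ) * ecfQ x (ecfNu x j - 1) := mul_nonneg hm0 (by linarith)
  nlinarith [t2, key, key2]

lemma G1 (hx : x ∈ dom) (n : ℕ) :
    2^n * ∏ j ∈ Finset.range n, (((sigmaH x (j+1) : ℤ) + 1) * (sigmaM x (j+1) : ℤ))
      ≤ 5^n * ecfQ x (ecfNu x n - 1) := by
  induction n with
  | zero =>
    simpa using Q_pos hx (ecfNu x 0 - 1)
  | succ n ih =>
    rw [Finset.prod_range_succ]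
    have hbg := blockgrow hx n
    have hq := Q_pos hx (ecfNu x n - 1)
    have hq' := Q_pos hx (ecfNu x (n+1) - 1)
    have h5 : (0:ℤ) < 5^n := by positivity
    have hm1 : 1 ≤ (sigmaM x (n+1):ℤ) := by exact_mod_cast (dig_end hx n).1
    have hh0 : (0:ℤ) ≤ (sigmaH x (n+1):ℤ) := Int.natCast_nonneg _
    have hw : (0:ℤ) ≤ ((sigmaH x (n+1):ℤ) + 1) * (sigmaM x (n+1):ℤ) := by positivity
    have c1 := mul_le_mul_of_nonneg_left ih
      (by positivity : (0:ℤ) ≤ 2 * (((sigmaH x (n+1):ℤ)+1) * (sigmaM x (n+1):ℤ)))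
    have c2 := mul_le_mul_of_nonneg_left hbg (by positivity : (0:ℤ) ≤ 5^n)
    rw [pow_succ (2:ℤ), pow_succ (5:ℤ)]
    nlinarith [c1, c2]

lemma upper3k (hx : x ∈ dom) (n : ℕ) :
    ecfQ x (ecfNu x n) ≤ 3 * (ecfDigK x (ecfNu x n) : ℤ) * ecfQ x (ecfNu x n - 1) := by
  have hnu := nu_pos (x := x) n
  have e1 : ecfNu x n = (ecfNu x n - 1) + 1 := by omega
  have hup := Q_upper hx (ecfNu x n - 1)
  rw [← e1] at hup
  have hk : 1 ≤ (ecfDigK x (ecfNu x n) : ℤ) := by exact_mod_cast digK_pos hx (ecfNu x n)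
  have hq := Q_pos hx (ecfNu x n - 1)
  nlinarith

lemma denom_lb (hx : x ∈ dom) (n : ℕ) (hn : 1 ≤ n) {t : ℝ} (ht0 : 0 ≤ t) (ht1 : t ≤ 1) :
    (ecfQ x (ecfNu x n - 1) : ℝ) ≤
      3 * ((ecfQ x (ecfNu x n - 1) : ℝ)
        + (sigmaE x n : ℝ) * t * (ecfQ x (ecfNu x n - 1 - 1) : ℝ)) := by
  obtain ⟨n, rfl⟩ : ∃ m, n = m + 1 := ⟨n - 1, by omega⟩
  have hnu := nu_pos (x := x) n
  have hnus := nu_succ (x := x) n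
  have hq1 : (1:ℝ) ≤ (ecfQ x (ecfNu x (n+1) - 1) : ℝ) := by
    exact_mod_cast Q_pos hx _
  have hq2 : (1:ℝ) ≤ (ecfQ x (ecfNu x (n+1) - 1 - 1) : ℝ) := by
    exact_mod_cast Q_pos hx _
  have hmono : (ecfQ x (ecfNu x (n+1) - 1 - 1) : ℝ) ≤ (ecfQ x (ecfNu x (n+1) - 1) : ℝ) := by
    exact_mod_cast Q_le_succ hx (by omega)
  rcases digxi_pm x (ecfNu x (n+1) - 1) with h | h
  · have he : sigmaE x (n+1) = 1 := by rw [sigmaE]; exact h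
    rw [he]
    push_cast
    nlinarith
  · have he : sigmaE x (n+1) = -1 := by rw [sigmaE]; exact h
    have hm := (dig_end hx n).2 he
    have hQl : (2*(sigmaM x (n+1):ℤ) - 1) * ecfQ x (ecfNu x (n+1) - 1 - 1)
        ≤ ecfQ x (ecfNu x (n+1) - 1) := by
      have hthis := Q_lower hx (ecfNu x (n+1) - 1 - 1)
      have hsm : ecfDigK x (ecfNu x (n+1) - 1 - 1 + 1) = sigmaM x (n+1) := by
        rw [sigmaM]; congr 1; omega
      have e2 : ecfNu x (n+1) - 1 - 1 + 1 = ecfNu x (n+1) - 1 := by omega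
      rw [hsm, e2] at hthis
      exact hthis
    have h3 : (3:ℝ) * (ecfQ x (ecfNu x (n+1) - 1 - 1):ℝ) ≤ (ecfQ x (ecfNu x (n+1) - 1):ℝ) := by
      have hm' : (2:ℤ) ≤ (sigmaM x (n+1):ℤ) := by exact_mod_cast hm
      have : (3:ℤ) * ecfQ x (ecfNu x (n+1) - 1 - 1) ≤ ecfQ x (ecfNu x (n+1) - 1) := by
        nlinarith [Q_pos hx (ecfNu x (n+1) - 1 - 1)]
      exact_mod_cast this
    rw [he]
    push_cast
    nlinarith

lemma det_pm (hx : x ∈ dom) (i : ℕ) :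
    ecfP x (i+1) * ecfQ x i - ecfQ x (i+1) * ecfP x i = 1 ∨
    ecfP x (i+1) * ecfQ x i - ecfQ x (i+1) * ecfP x i = -1 := by
  induction i with
  | zero =>
    left
    rw [P_one, P_zero, Q_zero]
    have : ecfDigXi x 0 = 1 := by rw [ecfDigXi]; simp
    rw [this]
    ring
  | succ i ih =>
    have e : i + 1 + 1 = i + 2 := rfl
    have hstep : ecfP x (i+1+1) * ecfQ x (i+1) - ecfQ x (i+1+1) * ecfP x (i+1)
        = -(ecfDigXi x (i+1)) * (ecfP x (i+1) * ecfQ x i - ecfQ x (i+1) * ecfP x i) := by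
      rw [e, P_rec, Q_rec]; ring
    rcases digxi_pm x (i+1) with h | h <;> rcases ih with h2 | h2 <;>
      rw [h, h2] at hstep <;> norm_num at hstep <;> omega

lemma moebius (hx : x ∈ dom) : ∀ N, 1 ≤ N →
    x * ((ecfQ x N : ℝ) + (ecfDigXi x N : ℝ) * (ecfT^[N] x) * (ecfQ x (N-1) : ℝ))
      = (ecfP x N : ℝ) + (ecfDigXi x N : ℝ) * (ecfT^[N] x) * (ecfP x (N-1) : ℝ) := by
  intro N
  induction N with
  | zero => omega
  | succ N ih =>
    intro _
    rcases Nat.eq_zero_or_pos N with rfl | hN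
    · -- base case N+1 = 1
      have hxi1 : ecfDigXi x 1 = ecfXi x := rfl
      have hx0 : ecfDigXi x 0 = 1 := rfl
      have hdig : ecfDigK x 1 = ecfK x := rfl
      have ht1 : ecfT^[0+1] x = ecfT x := by
        rw [Function.iterate_one ecfT]
      have hxne : x ≠ 0 := ne_of_gt hx.1.1
      have hinv : x * (2*(ecfK x:ℝ) + (ecfXi x:ℝ) * ecfT x) = 1 := by
        rw [(step hx).2.2.2]; field_simp
      show x * ((ecfQ x 1:ℝ) + (ecfDigXi x 1:ℝ) * (ecfT^[0+1] x) * (ecfQ x (0+1-1):ℝ))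
        = (ecfP x 1:ℝ) + (ecfDigXi x 1:ℝ) * (ecfT^[0+1] x) * (ecfP x (0+1-1):ℝ)
      rw [ht1, hxi1]
      show x * ((ecfQ x 1:ℝ) + (ecfXi x:ℝ) * ecfT x * (ecfQ x 0:ℝ))
        = (ecfP x 1:ℝ) + (ecfXi x:ℝ) * ecfT x * (ecfP x 0:ℝ)
      rw [Q_one, Q_zero, P_one, P_zero, hdig, hx0]
      push_cast
      linear_combination hinv
    · -- inductive step
      have hIH := ih hN
      set t := ecfT^[N] x with htdef
      have htd : t ∈ dom := iter_dom hx N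
      have htne : t ≠ 0 := ne_of_gt htd.1.1
      have ht' : ecfT^[N+1] x = ecfT t := Function.iterate_succ_apply' ecfT N x
      have hk' : ecfDigK x (N+1) = ecfK t := rfl
      have hxi' : ecfDigXi x (N+1) = ecfXi t := rfl
      have hinv : t * (2*(ecfDigK x (N+1):ℝ) + (ecfDigXi x (N+1):ℝ) * ecfT t) = 1 := by
        rw [hk', hxi', (step htd).2.2.2]; field_simp
      obtain ⟨M, rfl⟩ : ∃ m, N = m + 1 := ⟨N - 1, by omega⟩
      have e : M + 1 + 1 = M + 2 := rfl
      have e2 : M + 1 - 1 = M := rfl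
      have e1 : M + 1 + 1 - 1 = M + 1 := rfl
      have hrecQ : (ecfQ x (M+1+1) : ℝ)
          = 2*(ecfDigK x (M+1+1):ℝ) * (ecfQ x (M+1):ℝ)
            + (ecfDigXi x (M+1):ℝ) * (ecfQ x M:ℝ) := by
        rw [e, Q_rec]; push_cast; ring
      have hrecP : (ecfP x (M+1+1) : ℝ)
          = 2*(ecfDigK x (M+1+1):ℝ) * (ecfP x (M+1):ℝ)
            + (ecfDigXi x (M+1):ℝ) * (ecfP x M:ℝ) := by
        rw [e, P_rec]; push_cast; ring
      rw [e2] at hIH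
      rw [e1, ht', hrecQ, hrecP]
      linear_combination (2*(ecfDigK x (M+1+1):ℝ) + (ecfDigXi x (M+1+1):ℝ) * ecfT t) * hIH
        + ((ecfDigXi x (M+1):ℝ) * ((ecfP x M:ℝ) - x * (ecfQ x M:ℝ))) * hinv




lemma nu_ge2 {x : ℝ} {n : ℕ} (hn : 1 ≤ n) : 2 ≤ ecfNu x n := by
  obtain ⟨m, rfl⟩ : ∃ m, n = m + 1 := ⟨n - 1, by omega⟩
  have := nu_succ (x := x) m
  have := nu_pos (x := x) m
  omega

lemma cfQ_congr {k k' : ℕ → ℕ} {ξ ξ' : ℕ → ℤ} : ∀ M,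
    (∀ i, 1 ≤ i → i ≤ M → k i = k' i) → (∀ i, i < M → ξ i = ξ' i) →
    cfQ k ξ M = cfQ k' ξ' M := by
  intro M
  induction M using Nat.strong_induction_on with
  | _ M ih =>
    match M with
    | 0 => intro _ _; rfl
    | 1 =>
      intro hk _
      show (2 * (k 1 : ℤ)) = (2 * (k' 1 : ℤ))
      rw [hk 1 le_rfl le_rfl]
    | (M+2) =>
      intro hk hxi
      show 2 * (k (M+2) : ℤ) * cfQ k ξ (M+1) + ξ (M+1) * cfQ k ξ M
        = 2 * (k' (M+2) : ℤ) * cfQ k' ξ' (M+1) + ξ' (M+1) * cfQ k' ξ' M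
      rw [hk (M+2) (by omega) le_rfl, hxi (M+1) (by omega),
        ih (M+1) (by omega) (fun i h1 h2 => hk i h1 (by omega)) (fun i h => hxi i (by omega)),
        ih M (by omega) (fun i h1 h2 => hk i h1 (by omega)) (fun i h => hxi i (by omega))]

lemma cfP_congr {k k' : ℕ → ℕ} {ξ ξ' : ℕ → ℤ} : ∀ M,
    (∀ i, 1 ≤ i → i ≤ M → k i = k' i) → (∀ i, i < M → ξ i = ξ' i) →
    cfP k ξ M = cfP k' ξ' M := by
  intro M
  induction M using Nat.strong_induction_on with
  | _ M ih =>
    match M with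
    | 0 => intro _ _; rfl
    | 1 =>
      intro _ hxi
      show ξ 0 = ξ' 0
      exact hxi 0 (by omega)
    | (M+2) =>
      intro hk hxi
      show 2 * (k (M+2) : ℤ) * cfP k ξ (M+1) + ξ (M+1) * cfP k ξ M
        = 2 * (k' (M+2) : ℤ) * cfP k' ξ' (M+1) + ξ' (M+1) * cfP k' ξ' M
      rw [hk (M+2) (by omega) le_rfl, hxi (M+1) (by omega),
        ih (M+1) (by omega) (fun i h1 h2 => hk i h1 (by omega)) (fun i h => hxi i (by omega)),
        ih M (by omega) (fun i h1 h2 => hk i h1 (by omega)) (fun i h => hxi i (by omega))]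

lemma pos_class (x : ℝ) : ∀ n i, 1 ≤ i → i < ecfNu x n →
    (∃ j, j < n ∧ ∃ l, l < sigmaH x (j+1) ∧ i = ecfNu x j + l) ∨
    (∃ j, j < n ∧ i = ecfNu x (j+1) - 1) := by
  intro n
  induction n with
  | zero =>
    intro i h1 h2
    have : ecfNu x 0 = 1 := rfl
    omega
  | succ n ih =>
    intro i h1 h2
    rcases Nat.lt_or_ge i (ecfNu x n) with h | h
    · rcases ih i h1 h with ⟨j, hj, hl⟩ | ⟨j, hj, hl⟩
      · exact Or.inl ⟨j, by omega, hl⟩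
      · exact Or.inr ⟨j, by omega, hl⟩
    · have hns := nu_succ (x := x) n
      rcases Nat.lt_or_ge i (ecfNu x (n+1) - 1) with h3 | h3
      · exact Or.inl ⟨n, by omega, i - ecfNu x n, by omega, by omega⟩
      · exact Or.inr ⟨n, by omega, by omega⟩

section SameCode

variable {x y : ℝ} {n : ℕ}

structure SameCode (x y : ℝ) (n : ℕ) : Prop where
  hH : ∀ j, j < n → sigmaH x (j+1) = sigmaH y (j+1)
  hM : ∀ j, j < n → sigmaM x (j+1) = sigmaM y (j+1)
  hE : ∀ j, j < n → sigmaE x (j+1) = sigmaE y (j+1)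
  hK : ecfDigK x (ecfNu x n) = ecfDigK y (ecfNu y n)

lemma nu_eq (hc : SameCode x y n) : ∀ j, j ≤ n → ecfNu x j = ecfNu y j := by
  intro j
  induction j with
  | zero => intro _; rfl
  | succ j ih =>
    intro hj
    rw [nu_succ, nu_succ, ih (by omega), hc.hH j (by omega)]

lemma digK_eq (hx : x ∈ dom) (hy : y ∈ dom) (hc : SameCode x y n) :
    ∀ i, 1 ≤ i → i ≤ ecfNu x n → ecfDigK x i = ecfDigK y i := by
  intro i h1 h2
  rcases Nat.lt_or_ge i (ecfNu x n) with h | h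
  · rcases pos_class x n i h1 h with ⟨j, hj, l, hl, rfl⟩ | ⟨j, hj, he⟩
    · rw [(dig_run hx j l hl).1, (dig_run hy j l (by rw [← hc.hH j hj]; exact hl)).1.symm,
        nu_eq hc j (by omega)]
    · have h1' : ecfDigK x i = sigmaM x (j+1) := by rw [sigmaM, ← he]
      have h2' : ecfDigK y i = sigmaM y (j+1) := by
        rw [sigmaM, ← nu_eq hc (j+1) (by omega), ← he]
      rw [h1', h2', hc.hM j hj]
  · have : i = ecfNu x n := by omega
    rw [this, hc.hK, nu_eq hc n le_rfl]

lemma digXi_eq (hx : x ∈ dom) (hy : y ∈ dom) (hc : SameCode x y n) :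
    ∀ i, i < ecfNu x n → ecfDigXi x i = ecfDigXi y i := by
  intro i h2
  rcases Nat.eq_zero_or_pos i with rfl | h1
  · rfl
  rcases pos_class x n i h1 h2 with ⟨j, hj, l, hl, rfl⟩ | ⟨j, hj, he⟩
  · rw [(dig_run hx j l hl).2, (dig_run hy j l (by rw [← hc.hH j hj]; exact hl)).2.symm,
      nu_eq hc j (by omega)]
  · have h1' : ecfDigXi x i = sigmaE x (j+1) := by rw [sigmaE, ← he]
    have h2' : ecfDigXi y i = sigmaE y (j+1) := by
      rw [sigmaE, ← nu_eq hc (j+1) (by omega), ← he]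
    rw [h1', h2', hc.hE j hj]

lemma Q_eq (hx : x ∈ dom) (hy : y ∈ dom) (hc : SameCode x y n) :
    ∀ M, M ≤ ecfNu x n → ecfQ x M = ecfQ y M := by
  intro M hM
  exact cfQ_congr M (fun i hi1 hi2 => digK_eq hx hy hc i hi1 (by omega))
    (fun i hi => digXi_eq hx hy hc i (by omega))

lemma P_eq (hx : x ∈ dom) (hy : y ∈ dom) (hc : SameCode x y n) :
    ∀ M, M ≤ ecfNu x n → ecfP x M = ecfP y M := by
  intro M hM
  exact cfP_congr M (fun i hi1 hi2 => digK_eq hx hy hc i hi1 (by omega))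
    (fun i hi => digXi_eq hx hy hc i (by omega))


set_option maxHeartbeats 2000000 in
lemma proximity (hx : x ∈ dom) (hy : y ∈ dom) (hn : 1 ≤ n) (hc : SameCode x y n) :
    |x - y| ≤ 9 / ((ecfDigK y (ecfNu y n) : ℝ)^2 * (ecfQ y (ecfNu y n - 1) : ℝ)^2) := by
  have hν : ecfNu x n = ecfNu y n := nu_eq hc n le_rfl
  set N := ecfNu x n - 1 with hNdef
  have hNy : ecfNu y n - 1 = N := by rw [← hν]
  have hN1 : 1 ≤ N := by
    have := nu_ge2 (x := x) hn
    omega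
  have hNlt : N < ecfNu x n := by
    have := nu_pos (x := x) n
    omega
  -- shared quantities, all based at y
  set kk := ecfDigK y (ecfNu y n) with hkk
  set QN := (ecfQ y N : ℝ) with hQN
  set QN1 := (ecfQ y (N-1) : ℝ) with hQN1
  set PN := (ecfP y N : ℝ) with hPN
  set PN1 := (ecfP y (N-1) : ℝ) with hPN1
  set ξ := (ecfDigXi y N : ℝ) with hξ
  set t := ecfT^[N] x with ht
  set s := ecfT^[N] y with hs
  rw [hNy]
  -- digit/convergent equalities
  have hQeqN : ecfQ x N = ecfQ y N := Q_eq hx hy hc N (by omega)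
  have hQeqN1 : ecfQ x (N-1) = ecfQ y (N-1) := Q_eq hx hy hc (N-1) (by omega)
  have hPeqN : ecfP x N = ecfP y N := P_eq hx hy hc N (by omega)
  have hPeqN1 : ecfP x (N-1) = ecfP y (N-1) := P_eq hx hy hc (N-1) (by omega)
  have hXeq : ecfDigXi x N = ecfDigXi y N := digXi_eq hx hy hc N hNlt
  -- moebius identities
  have hmx : x * (QN + ξ * t * QN1) = PN + ξ * t * PN1 := by
    have hm := moebius hx N hN1
    rw [hQeqN, hQeqN1, hPeqN, hPeqN1, hXeq] at hm
    exact hm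
  have hmy : y * (QN + ξ * s * QN1) = PN + ξ * s * PN1 := moebius hy N hN1
  -- domains of t and s
  have htd : t ∈ dom := iter_dom hx N
  have hsd : s ∈ dom := iter_dom hy N
  -- k-digit identification
  have hkt : ecfK t = kk := by
    have h1 : ecfK t = ecfDigK x (ecfNu x n) := by
      rw [ecfDigK, ht, hNdef]
    rw [h1, hc.hK, hkk]
  have hks : ecfK s = kk := by
    have h1 : ecfK s = ecfDigK y (ecfNu y n) := by
      rw [ecfDigK, hs, hNdef, hν]
    rw [h1, hkk]
  have hkk1 : (1:ℝ) ≤ (kk:ℝ) := by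
    have : 1 ≤ ecfDigK y (ecfNu y n) := digK_pos hy _
    exact_mod_cast this
  -- interval bounds for t and s
  have hbt := ecfK_bounds htd
  have hbs := ecfK_bounds hsd
  rw [hkt] at hbt
  rw [hks] at hbs
  have ht0 : 0 < t := htd.1.1
  have hs0 : 0 < s := hsd.1.1
  have ht1 : t < 1 := htd.1.2
  have hs1 : s < 1 := hsd.1.2
  -- |t - s| ≤ 1/kk²
  have habs : (kk:ℝ)^2 * |t - s| ≤ 1 := by
    have h1 : (2*(kk:ℝ)+1) * ((2*(kk:ℝ)-1) * t) ≤ (2*(kk:ℝ)+1) * 1 :=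
      mul_le_mul_of_nonneg_left hbt.1.le (by linarith)
    have h2 : (2*(kk:ℝ)-1) * 1 ≤ (2*(kk:ℝ)-1) * ((2*(kk:ℝ)+1) * s) :=
      mul_le_mul_of_nonneg_left hbs.2.le (by linarith)
    have h3 : (2*(kk:ℝ)+1) * ((2*(kk:ℝ)-1) * s) ≤ (2*(kk:ℝ)+1) * 1 :=
      mul_le_mul_of_nonneg_left hbs.1.le (by linarith)
    have h4 : (2*(kk:ℝ)-1) * 1 ≤ (2*(kk:ℝ)-1) * ((2*(kk:ℝ)+1) * t) :=
      mul_le_mul_of_nonneg_left hbt.2.le (by linarith)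
    rcases abs_cases (t - s) with ⟨he, _⟩ | ⟨he, _⟩ <;> rw [he] <;> nlinarith
  -- denominators
  set Dx := QN + ξ * t * QN1 with hDx
  set Dy := QN + ξ * s * QN1 with hDy
  have hQNpos : (1:ℝ) ≤ QN := by
    have := Q_pos hy N
    rw [hQN]; exact_mod_cast this
  have hDxlb : QN ≤ 3 * Dx := by
    have hd := denom_lb hx n hn (t := t) ht0.le ht1.le
    have hsE : (sigmaE x n : ℝ) = ξ := by
      rw [sigmaE, hξ, hXeq]
    have e1 : ecfNu x n - 1 - 1 = N - 1 := rfl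
    rw [hsE, e1] at hd
    rw [hQeqN, hQeqN1] at hd
    rw [hDx, hQN, hQN1]
    linarith [hd]
  have hDylb : QN ≤ 3 * Dy := by
    have hd := denom_lb hy n hn (t := s) hs0.le hs1.le
    have hsE : (sigmaE y n : ℝ) = ξ := by rw [sigmaE, hξ, hNy]
    rw [hNy] at hd
    rw [hsE] at hd
    rw [hDy, hQN, hQN1]
    linarith [hd]
  have hDxpos : 0 < Dx := by linarith
  have hDypos : 0 < Dy := by linarith
  -- determinant
  have e : N - 1 + 1 = N := by omega
  set dd := ecfP y N * ecfQ y (N-1) - ecfQ y N * ecfP y (N-1) with hdd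
  have hddpm : dd = 1 ∨ dd = -1 := by
    have := det_pm hy (N-1)
    rw [e] at this
    exact this
  -- the key identity
  have hkey : (x - y) * (Dx * Dy) = ξ * (s - t) * (dd:ℝ) := by
    rw [hDx, hDy, hdd]
    push_cast
    linear_combination (QN + ξ * s * QN1) * hmx - (QN + ξ * t * QN1) * hmy
  have hDD : (0:ℝ) < Dx * Dy := mul_pos hDxpos hDypos
  have hxy : |x - y| = |s - t| / (Dx * Dy) := by
    have h1 : x - y = ξ * (s - t) * (dd:ℝ) / (Dx * Dy) := by
      rw [eq_div_iff (ne_of_gt hDD)]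
      exact hkey
    rw [h1, abs_div, abs_mul, abs_mul, abs_of_pos hDD]
    have hξ1 : |ξ| = 1 := by
      rw [hξ]
      rcases digxi_pm y N with h | h <;> rw [h] <;> norm_num
    have hdd1 : |(dd:ℝ)| = 1 := by
      rcases hddpm with h | h <;> rw [h] <;> norm_num
    rw [hξ1, hdd1]
    ring
  rw [hxy]
  have hnum : |s - t| ≤ 1 / (kk:ℝ)^2 := by
    rw [abs_sub_comm] at habs
    rw [le_div_iff₀ (by positivity)]
    linarith [habs]
  have hden : QN^2/9 ≤ Dx * Dy := by
    nlinarith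
  calc |s - t| / (Dx * Dy) ≤ (1/(kk:ℝ)^2) / (QN^2/9) := by
        apply div_le_div₀ (by positivity) hnum (by positivity) hden
    _ = 9 / ((kk:ℝ)^2 * QN^2) := by
        field_simp
  -- done

end SameCode




/-- key real inequality for the telescoping comparison -/
lemma sqrt_tele {x : ℝ} (hx : 1 ≤ x) :
    1/(x*Real.sqrt x) ≤ 20*(1/Real.sqrt (x+1) - 1/Real.sqrt (x+2)) := by
  have hx0 : (0:ℝ) < x := by linarith
  set s0 := Real.sqrt x with hs0
  set s1 := Real.sqrt (x+1) with hs1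
  set s2 := Real.sqrt (x+2) with hs2
  have hs0pos : 0 < s0 := Real.sqrt_pos.2 hx0
  have hs1pos : 0 < s1 := Real.sqrt_pos.2 (by linarith)
  have hs2pos : 0 < s2 := Real.sqrt_pos.2 (by linarith)
  have hq0 : s0^2 = x := Real.sq_sqrt hx0.le
  have hq1 : s1^2 = x+1 := Real.sq_sqrt (by linarith)
  have hq2 : s2^2 = x+2 := Real.sq_sqrt (by linarith)
  have h12 : s1 ≤ s2 := Real.sqrt_le_sqrt (by linarith)
  have h1b : s1 ≤ 2*s0 := by nlinarith
  have h2b : s2 ≤ 2*s0 := by nlinarith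
  have hdiff : 1/s1 - 1/s2 = 1/(s1*s2*(s1+s2)) := by
    rw [eq_div_iff (by positivity)]
    field_simp
    linear_combination hq2 - hq1
  rw [hdiff, div_le_iff₀ (by positivity), mul_comm (20:ℝ), mul_assoc,
    div_mul_eq_mul_div, le_div_iff₀ (by positivity)]
  nlinarith [mul_pos hs0pos hs0pos, mul_pos hs1pos hs2pos, sq_nonneg (s1 - s2),
    mul_pos (mul_pos hs1pos hs2pos) (by positivity : (0:ℝ) < s1 + s2)]

noncomputable def gk (a : ℕ) : ENNReal := ENNReal.ofReal (1/((a:ℝ)*Real.sqrt a))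

lemma gk_le_tele (a : ℕ) :
    gk a ≤ ENNReal.ofReal 20 *
      ENNReal.ofReal (1/Real.sqrt ((a:ℝ)+1) - 1/Real.sqrt ((a:ℝ)+2)) := by
  rcases Nat.eq_zero_or_pos a with rfl | ha
  · have : gk 0 = 0 := by
      rw [gk]
      norm_num
    rw [this]
    exact zero_le
  · rw [← ENNReal.ofReal_mul (by norm_num)]
    apply ENNReal.ofReal_le_ofReal
    exact sqrt_tele (by exact_mod_cast ha)

lemma tele_sum : ∑' a : ℕ, ENNReal.ofReal (1/Real.sqrt ((a:ℝ)+1) - 1/Real.sqrt ((a:ℝ)+2))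
    ≤ 1 := by
  rw [ENNReal.tsum_eq_iSup_sum]
  apply iSup_le
  intro F
  obtain ⟨N, hN⟩ := F.exists_nat_subset_range
  have hterm : ∀ a : ℕ, 0 ≤ 1/Real.sqrt ((a:ℝ)+1) - 1/Real.sqrt ((a:ℝ)+2) := by
    intro a
    have h1 : Real.sqrt ((a:ℝ)+1) ≤ Real.sqrt ((a:ℝ)+2) := Real.sqrt_le_sqrt (by linarith)
    have h2 : 0 < Real.sqrt ((a:ℝ)+1) := Real.sqrt_pos.2 (by positivity)
    have := one_div_le_one_div_of_le h2 h1
    linarith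
  calc ∑ a ∈ F, ENNReal.ofReal (1/Real.sqrt ((a:ℝ)+1) - 1/Real.sqrt ((a:ℝ)+2))
      ≤ ∑ a ∈ Finset.range N, ENNReal.ofReal (1/Real.sqrt ((a:ℝ)+1) - 1/Real.sqrt ((a:ℝ)+2)) :=
        Finset.sum_le_sum_of_subset hN
    _ = ENNReal.ofReal (∑ a ∈ Finset.range N, (1/Real.sqrt ((a:ℝ)+1) - 1/Real.sqrt ((a:ℝ)+2))) :=
        (ENNReal.ofReal_sum_of_nonneg (fun a _ => hterm a)).symm
    _ ≤ 1 := by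
        set f : ℕ → ℝ := fun b => 1/Real.sqrt ((b:ℝ)+1) with hf
        have hstep : ∀ a : ℕ, (1/Real.sqrt ((a:ℝ)+1) - 1/Real.sqrt ((a:ℝ)+2))
            = f a - f (a+1) := by
          intro a
          rw [hf]
          simp only []
          have : ((a+1:ℕ):ℝ) + 1 = (a:ℝ)+2 := by push_cast; ring
          rw [this]
        have htel : ∑ a ∈ Finset.range N, (1/Real.sqrt ((a:ℝ)+1) - 1/Real.sqrt ((a:ℝ)+2))
            = f 0 - f N := by
          rw [Finset.sum_congr rfl (fun a _ => hstep a), Finset.sum_range_sub' f N]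
        rw [htel]
        have h2 : (0:ℝ) ≤ f N := by rw [hf]; positivity
        have h3 : f 0 - f N ≤ 1 := by
          have : f 0 = 1 := by rw [hf]; norm_num
          linarith
        exact le_trans (ENNReal.ofReal_le_ofReal h3) (le_of_eq ENNReal.ofReal_one)

lemma gk_sum : ∑' a : ℕ, gk a ≤ 20 := by
  calc ∑' a : ℕ, gk a
      ≤ ∑' a : ℕ, ENNReal.ofReal 20 *
          ENNReal.ofReal (1/Real.sqrt ((a:ℝ)+1) - 1/Real.sqrt ((a:ℝ)+2)) :=
        ENNReal.tsum_le_tsum gk_le_tele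
    _ = ENNReal.ofReal 20 * ∑' a : ℕ, ENNReal.ofReal (1/Real.sqrt ((a:ℝ)+1) - 1/Real.sqrt ((a:ℝ)+2)) :=
        ENNReal.tsum_mul_left
    _ ≤ ENNReal.ofReal 20 * 1 := mul_le_mul_right tele_sum _
    _ = 20 := by
        rw [mul_one]
        norm_num

lemma gk_shift_sum : ∑' a : ℕ, gk (a+1) ≤ 20 :=
  le_trans (ENNReal.tsum_comp_le_tsum_of_injective Nat.succ_injective gk) gk_sum

/-- tsum of products over tuples -/
lemma tsum_pi_prod {σ : Type*} [Countable σ] (f : σ → ENNReal) :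
    ∀ n, ∑' g : Fin n → σ, ∏ j, f (g j) = (∑' a, f a)^n := by
  intro n
  induction n with
  | zero =>
    rw [pow_zero]
    rw [tsum_eq_single (fun i => i.elim0) (by
      intro b hb
      exact absurd (funext fun i => i.elim0) hb)]
    simp
  | succ n ih =>
    rw [← (Fin.consEquiv (fun _ : Fin (n+1) => σ)).tsum_eq, ENNReal.tsum_prod']
    have h1 : ∀ a : σ, (∑' g : Fin n → σ,
        ∏ j, f ((Fin.consEquiv (fun _ : Fin (n+1) => σ)) (a, g) j))
        = f a * (∑' b, f b)^n := by
      intro a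
      rw [← ih, ← ENNReal.tsum_mul_left]
      apply tsum_congr
      intro g
      simp [Fin.consEquiv, Fin.prod_univ_succ]
    rw [tsum_congr h1, ENNReal.tsum_mul_right, pow_succ, mul_comm]




lemma log3_ge_one : (1:ℝ) ≤ Real.log 3 := by
  rw [Real.le_log_iff_exp_le (by norm_num)]
  calc Real.exp 1 ≤ 2.7182818286 := (Real.exp_one_lt_d9).le
    _ ≤ 3 := by norm_num

lemma density_le (a : ℝ) (ha : a ∈ Set.Ioc (0:ℝ) 1) :
    ENNReal.ofReal ((1/Real.log 3) * (1/(3-a) + 1/(1+a))) ≤ 2 := by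
  have h1 : (0:ℝ) < a := ha.1
  have h2 : a ≤ 1 := ha.2
  have h3 : 1/(3-a) ≤ 1/2 := by
    apply one_div_le_one_div_of_le <;> linarith
  have h4 : 1/(1+a) ≤ 1 := by
    rw [div_le_one (by linarith)]; linarith
  have h5 : 1/Real.log 3 ≤ 1 := by
    rw [div_le_one (by linarith [log3_ge_one])]
    exact log3_ge_one
  have h6 : (1/Real.log 3) * (1/(3-a) + 1/(1+a)) ≤ 2 := by
    have hp1 : (0:ℝ) ≤ 1/(3-a) := le_of_lt (div_pos one_pos (by linarith))
    have hp2 : (0:ℝ) ≤ 1/(1+a) := le_of_lt (div_pos one_pos (by linarith))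
    have hpos : (0:ℝ) ≤ 1/(3-a) + 1/(1+a) := by linarith
    calc (1/Real.log 3) * (1/(3-a) + 1/(1+a)) ≤ 1 * (1/(3-a) + 1/(1+a)) :=
        mul_le_mul_of_nonneg_right h5 hpos
      _ ≤ 2 := by linarith
  calc ENNReal.ofReal _ ≤ ENNReal.ofReal 2 := ENNReal.ofReal_le_ofReal h6
    _ = 2 := by norm_num

lemma mu_closedBall (z r : ℝ) (hr : 0 ≤ r) :
    ecfMu (Metric.closedBall z r) ≤ ENNReal.ofReal (4*r) := by
  rw [ecfMu, withDensity_apply _ measurableSet_closedBall]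
  have hae : ∀ᵐ a ∂((volume.restrict (Set.Ioc (0:ℝ) 1)).restrict (Metric.closedBall z r)),
      ENNReal.ofReal ((1/Real.log 3) * (1/(3-a) + 1/(1+a))) ≤ 2 := by
    have h1 : ∀ᵐ a ∂(volume.restrict (Set.Ioc (0:ℝ) 1)), a ∈ Set.Ioc (0:ℝ) 1 :=
      ae_restrict_mem measurableSet_Ioc
    have h2 := ae_restrict_of_ae (s := Metric.closedBall z r) h1
    filter_upwards [h2] with a ha
    exact density_le a ha
  calc ∫⁻ a in Metric.closedBall z r,
        ENNReal.ofReal ((1/Real.log 3) * (1/(3-a) + 1/(1+a))) ∂(volume.restrict (Set.Ioc 0 1))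
      ≤ ∫⁻ _ in Metric.closedBall z r, 2 ∂(volume.restrict (Set.Ioc 0 1)) :=
        lintegral_mono_ae hae
    _ = 2 * (volume.restrict (Set.Ioc 0 1)) (Metric.closedBall z r) := by
        rw [setLIntegral_const]
    _ ≤ 2 * volume (Metric.closedBall z r) := by
        apply mul_le_mul_right
        exact Measure.restrict_le_self _
    _ = 2 * ENNReal.ofReal (2*r) := by rw [Real.volume_closedBall]
    _ = ENNReal.ofReal (4*r) := by
        rw [← ENNReal.ofReal_ofNat, ← ENNReal.ofReal_mul (by norm_num)]
        norm_num
        ring_nf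

/-- pow of 3/2 as t·√t is monotone -/
lemma pow32_mono {a b : ℝ} (ha : 0 ≤ a) (hab : a ≤ b) :
    a * Real.sqrt a ≤ b * Real.sqrt b :=
  mul_le_mul hab (Real.sqrt_le_sqrt hab) (Real.sqrt_nonneg a) (by linarith)

lemma prod_pow32 (n : ℕ) (w : ℕ → ℝ) (hw : ∀ j, 0 ≤ w j) :
    ∏ j ∈ Finset.range n, (w j * Real.sqrt (w j))
      = (∏ j ∈ Finset.range n, w j) * Real.sqrt (∏ j ∈ Finset.range n, w j) := by
  induction n with
  | zero => simp
  | succ n ih =>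
    rw [Finset.prod_range_succ, Finset.prod_range_succ, ih,
      Real.sqrt_mul (Finset.prod_nonneg (fun j _ => hw j))]
    ring

/-- the main real computation -/
lemma chain (n : ℕ) (k Q Pi : ℝ) (hk : 1 ≤ k) (hQ : 1 ≤ Q) (hPi : 1 ≤ Pi)
    (hbad : Real.exp (40*n) ≤ 3*k*Q) (hlow : (2/5)^n * Pi ≤ Q) :
    4 * (9 / (k^2 * Q^2)) ≤
      72 * Real.exp (-(20*(n:ℝ))) * (25/4)^n * (1/(k*Real.sqrt k)) * (1/(Pi*Real.sqrt Pi)) := by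
  have hk0 : 0 < k := by linarith
  have hQ0 : 0 < Q := by linarith
  have hPi0 : 0 < Pi := by linarith
  have hsqk : 1 ≤ Real.sqrt k := by
    rw [show (1:ℝ) = Real.sqrt 1 by rw [Real.sqrt_one]]
    exact Real.sqrt_le_sqrt hk
  have hsqQ : 1 ≤ Real.sqrt Q := by
    rw [show (1:ℝ) = Real.sqrt 1 by rw [Real.sqrt_one]]
    exact Real.sqrt_le_sqrt hQ
  have hsqPi : 1 ≤ Real.sqrt Pi := by
    rw [show (1:ℝ) = Real.sqrt 1 by rw [Real.sqrt_one]]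
    exact Real.sqrt_le_sqrt hPi
  have hE : Real.exp (40*(n:ℝ)) = (Real.exp (20*(n:ℝ)))^2 := by
    rw [pow_two, ← Real.exp_add]
    ring_nf
  have hsqkQ : Real.exp (20*(n:ℝ)) ≤ 2 * (Real.sqrt k * Real.sqrt Q) := by
    have h1 : (Real.exp (20*(n:ℝ)))^2 ≤ 4*k*Q := by
      rw [← hE]
      calc Real.exp (40*(n:ℝ)) ≤ 3*k*Q := hbad
        _ ≤ 4*k*Q := by nlinarith
    have h2 : Real.sqrt ((Real.exp (20*(n:ℝ)))^2) ≤ Real.sqrt (4*k*Q) :=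
      Real.sqrt_le_sqrt h1
    rw [Real.sqrt_sq (Real.exp_nonneg _)] at h2
    have h3 : Real.sqrt (4*k*Q) = 2*(Real.sqrt k * Real.sqrt Q) := by
      rw [show 4*k*Q = (2:ℝ)^2*(k*Q) by ring,
        Real.sqrt_mul (by positivity : (0:ℝ) ≤ (2:ℝ)^2),
        Real.sqrt_sq (by norm_num : (0:ℝ) ≤ (2:ℝ)),
        Real.sqrt_mul hk0.le]
    rw [h3] at h2
    exact h2
  have hQQ : (4/25)^n * (Pi * Real.sqrt Pi) ≤ Q * Real.sqrt Q := by
    have h1 : ((2/5)^n * Pi) * Real.sqrt ((2/5)^n * Pi) ≤ Q * Real.sqrt Q :=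
      pow32_mono (by positivity) hlow
    have h2 : Real.sqrt ((2/5)^n * Pi) = Real.sqrt ((2/5:ℝ)^n) * Real.sqrt Pi :=
      Real.sqrt_mul (by positivity) _
    have ha1 : (2/5:ℝ)^n ≤ 1 := pow_le_one₀ (by norm_num) (by norm_num)
    have h3 : (2/5:ℝ)^n ≤ Real.sqrt ((2/5:ℝ)^n) := by
      calc (2/5:ℝ)^n = Real.sqrt (((2/5:ℝ)^n)^2) := (Real.sqrt_sq (by positivity)).symm
        _ ≤ Real.sqrt ((2/5:ℝ)^n) := Real.sqrt_le_sqrt (by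
            have hnn : (0:ℝ) ≤ (2/5:ℝ)^n := by positivity
            nlinarith [mul_nonneg hnn (sub_nonneg.2 ha1)])
    have h4 : (4/25:ℝ)^n * (Pi * Real.sqrt Pi) ≤ ((2/5)^n * Pi) * Real.sqrt ((2/5)^n * Pi) := by
      rw [h2]
      have e : (4/25:ℝ)^n = (2/5:ℝ)^n * (2/5:ℝ)^n := by rw [← mul_pow]; norm_num
      rw [e]
      have hPiS : (0:ℝ) ≤ Pi * Real.sqrt Pi := by positivity
      calc (2/5:ℝ)^n * (2/5:ℝ)^n * (Pi * Real.sqrt Pi)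
          ≤ (2/5:ℝ)^n * Real.sqrt ((2/5:ℝ)^n) * (Pi * Real.sqrt Pi) :=
            mul_le_mul_of_nonneg_right
              (mul_le_mul_of_nonneg_left h3 (by positivity)) hPiS
        _ = (2/5:ℝ)^n * Pi * (Real.sqrt ((2/5:ℝ)^n) * Real.sqrt Pi) := by ring
    exact le_trans h4 h1
  -- identity k²Q² = (k√k)(Q√Q)(√k√Q)
  have hk' : Real.sqrt k * Real.sqrt k = k := Real.mul_self_sqrt hk0.le
  have hQ' : Real.sqrt Q * Real.sqrt Q = Q := Real.mul_self_sqrt hQ0.le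
  have hid : k^2*Q^2 = (k*Real.sqrt k)*(Q*Real.sqrt Q)*(Real.sqrt k*Real.sqrt Q) := by
    linear_combination (-(k*Q*(Real.sqrt Q*Real.sqrt Q))) * hk' + (-(k*k*Q)) * hQ'
  have hY : Real.exp (20*(n:ℝ))/2 ≤ Real.sqrt k*Real.sqrt Q := by linarith
  have hlb : (k*Real.sqrt k)*((4/25)^n*(Pi*Real.sqrt Pi))*(Real.exp (20*(n:ℝ))/2)
      ≤ k^2*Q^2 := by
    rw [hid]
    have t1 : (0:ℝ) ≤ k*Real.sqrt k := by positivity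
    calc (k*Real.sqrt k)*((4/25)^n*(Pi*Real.sqrt Pi))*(Real.exp (20*(n:ℝ))/2)
        ≤ (k*Real.sqrt k)*(Q*Real.sqrt Q)*(Real.exp (20*(n:ℝ))/2) :=
          mul_le_mul_of_nonneg_right (mul_le_mul_of_nonneg_left hQQ t1) (by positivity)
      _ ≤ (k*Real.sqrt k)*(Q*Real.sqrt Q)*(Real.sqrt k*Real.sqrt Q) :=
          mul_le_mul_of_nonneg_left hY (by positivity)
  have hlbpos : (0:ℝ) < (k*Real.sqrt k)*((4/25)^n*(Pi*Real.sqrt Pi))*(Real.exp (20*(n:ℝ))/2) := by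
    positivity
  have hstep : 4*(9/(k^2*Q^2)) = 36/(k^2*Q^2) := by ring
  rw [hstep]
  calc (36:ℝ)/(k^2*Q^2)
      ≤ 36/((k*Real.sqrt k)*((4/25)^n*(Pi*Real.sqrt Pi))*(Real.exp (20*(n:ℝ))/2)) :=
        div_le_div_of_nonneg_left (by norm_num) hlbpos hlb
    _ = 72 * Real.exp (-(20*(n:ℝ))) * (25/4)^n * (1/(k*Real.sqrt k)) * (1/(Pi*Real.sqrt Pi)) := by
        rw [Real.exp_neg]
        have e1 : (25/4:ℝ)^n = ((4/25:ℝ)^n)⁻¹ := by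
          rw [← inv_pow]
          norm_num
        rw [e1]
        have p1 : (0:ℝ) < k*Real.sqrt k := by positivity
        have p2 : (0:ℝ) < Pi*Real.sqrt Pi := by positivity
        have p3 : (0:ℝ) < Real.exp (20*(n:ℝ)) := Real.exp_pos _
        have p4 : (0:ℝ) < (4/25:ℝ)^n := by positivity
        field_simp
        ring




-- axioms standing for previously proven lemmas
-- ## assembly

def B (n : ℕ) : Set ℝ := {x | x ∈ ECFdom ∧ Real.exp (40*(n:ℝ)) < (ecfQhat x n : ℝ)}

lemma Bdom {x : ℝ} {n : ℕ} (h : x ∈ B n) : x ∈ dom := by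
  obtain ⟨⟨⟨h0, h1⟩, hirr⟩, _⟩ := h
  refine ⟨⟨h0, lt_of_le_of_ne h1 ?_⟩, hirr⟩
  intro he
  exact hirr ⟨1, by rw [he]; norm_num⟩

abbrev CodeT (n : ℕ) := (Fin n → ℕ × ℕ × Bool) × ℕ

noncomputable def codeOf (x : ℝ) (n : ℕ) : CodeT n :=
  (fun j => (sigmaH x (j.1+1), sigmaM x (j.1+1), decide (sigmaE x (j.1+1) = 1)),
    ecfDigK x (ecfNu x n))

lemma sameCode_of_codeOf {x y : ℝ} {n : ℕ}
    (h : codeOf x n = codeOf y n) : SameCode x y n := by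
  have h1 := congrArg Prod.fst h
  have h2 := congrArg Prod.snd h
  simp only [codeOf] at h1 h2
  have hcomp : ∀ j (hj : j < n),
      sigmaH x (j+1) = sigmaH y (j+1) ∧ sigmaM x (j+1) = sigmaM y (j+1) ∧
      decide (sigmaE x (j+1) = 1) = decide (sigmaE y (j+1) = 1) := by
    intro j hj
    have hc := congrFun h1 ⟨j, hj⟩
    refine ⟨congrArg Prod.fst hc, ?_, ?_⟩
    · exact congrArg (fun p => p.2.1) hc
    · exact congrArg (fun p => p.2.2) hc
  constructor
  · exact fun j hj => (hcomp j hj).1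
  · exact fun j hj => (hcomp j hj).2.1
  · intro j hj
    have hb := (hcomp j hj).2.2
    have hiff : (sigmaE x (j+1) = 1) ↔ (sigmaE y (j+1) = 1) := decide_eq_decide.mp hb
    have hbx : sigmaE x (j+1) = ecfDigXi x (ecfNu x (j+1) - 1) := rfl
    have hby : sigmaE y (j+1) = ecfDigXi y (ecfNu y (j+1) - 1) := rfl
    rw [hbx, hby]
    rcases digxi_pm x (ecfNu x (j+1) - 1) with hx1 | hx1 <;>
      rcases digxi_pm y (ecfNu y (j+1) - 1) with hy1 | hy1
    · rw [hx1, hy1]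
    · exfalso
      have h5 : sigmaE y (j+1) = 1 := hiff.mp (by rw [hbx]; exact hx1)
      rw [hby, hy1] at h5
      norm_num at h5
    · exfalso
      have h5 : sigmaE x (j+1) = 1 := hiff.mpr (by rw [hby]; exact hy1)
      rw [hbx, hx1] at h5
      norm_num at h5
    · rw [hx1, hy1]
  · exact h2

noncomputable def rad (z : ℝ) (n : ℕ) : ℝ :=
  9 / ((ecfDigK z (ecfNu z n) : ℝ)^2 * (ecfQ z (ecfNu z n - 1) : ℝ)^2)

open Classical in
noncomputable def Jset (n : ℕ) (c : CodeT n) : Set ℝ :=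
  if h : ∃ z, z ∈ B n ∧ codeOf z n = c then
    Metric.closedBall h.choose (rad h.choose n) else ∅

lemma cover {n : ℕ} (hn : 1 ≤ n) : B n ⊆ ⋃ c : CodeT n, Jset n c := by
  intro x hx
  refine Set.mem_iUnion.2 ⟨codeOf x n, ?_⟩
  rw [Jset]
  have hex : ∃ z, z ∈ B n ∧ codeOf z n = codeOf x n := ⟨x, hx, rfl⟩
  rw [dif_pos hex]

  obtain ⟨hzB, hzc⟩ := hex.choose_spec
  have hcs : SameCode x hex.choose n := sameCode_of_codeOf hzc.symm
  rw [Metric.mem_closedBall, Real.dist_eq, rad]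
  exact proximity (Bdom hx) (Bdom hzB) hn hcs

noncomputable def gsym (s : ℕ × ℕ × Bool) : ENNReal :=
  ENNReal.ofReal (25/4) * gk (s.1+1) * gk s.2.1

noncomputable def Fc (n : ℕ) (c : CodeT n) : ENNReal :=
  ENNReal.ofReal 72 * ENNReal.ofReal (Real.exp (-(20*(n:ℝ)))) * gk c.2 *
    ∏ j, gsym (c.1 j)

lemma ofReal_pack (a b : ℝ) (ha : 0 ≤ a) (hb : 0 ≤ b) :
    (25/4) * (1/(a*Real.sqrt a)) * (1/(b*Real.sqrt b))
      = (25/4) * (1/((a*b)*Real.sqrt (a*b))) := by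
  rw [Real.sqrt_mul ha, show a*b*(Real.sqrt a*Real.sqrt b) = (a*Real.sqrt a)*(b*Real.sqrt b) by ring,
    ← one_div_mul_one_div]
  ring

lemma rad_nonneg (z : ℝ) (n : ℕ) : 0 ≤ rad z n := by
  rw [rad]
  positivity

lemma mu_J_le {n : ℕ} (hn : 1 ≤ n) (c : CodeT n) : ecfMu (Jset n c) ≤ Fc n c := by
  rw [Jset]
  split_ifs with hex
  case neg => simp
  obtain ⟨hzB, hzc⟩ := hex.choose_spec
  set z := hex.choose with hz
  have hzd : z ∈ dom := Bdom hzB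
  -- real data
  set kz : ℕ := ecfDigK z (ecfNu z n) with hkz
  set Qz : ℝ := (ecfQ z (ecfNu z n - 1) : ℝ) with hQz
  set Piz : ℝ := ((∏ j ∈ Finset.range n,
      (((sigmaH z (j+1) : ℤ) + 1) * (sigmaM z (j+1) : ℤ)) : ℤ) : ℝ) with hPiz
  have hk1 : (1:ℝ) ≤ (kz:ℝ) := by exact_mod_cast digK_pos hzd _
  have hQ1 : (1:ℝ) ≤ Qz := by rw [hQz]; exact_mod_cast Q_pos hzd _
  have hPi1 : (1:ℝ) ≤ Piz := by
    rw [hPiz]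
    have : (1:ℤ) ≤ ∏ j ∈ Finset.range n, (((sigmaH z (j+1) : ℤ) + 1) * (sigmaM z (j+1) : ℤ)) := by
      calc (1:ℤ) = ∏ _j ∈ Finset.range n, 1 := Finset.prod_const_one.symm
        _ ≤ ∏ j ∈ Finset.range n, (((sigmaH z (j+1) : ℤ) + 1) * (sigmaM z (j+1) : ℤ)) := by
            apply Finset.prod_le_prod (fun i _ => zero_le_one)
            intro j _
            have h1 : (1:ℤ) ≤ (sigmaM z (j+1) : ℤ) := by exact_mod_cast (dig_end hzd j).1
            have h2 : (0:ℤ) ≤ (sigmaH z (j+1) : ℤ) := Int.natCast_nonneg _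
            nlinarith
    exact_mod_cast this
  have hbad : Real.exp (40*(n:ℝ)) ≤ 3*(kz:ℝ)*Qz := by
    have hlt : Real.exp (40*(n:ℝ)) < (ecfQhat z n : ℝ) := hzB.2
    have hq : ecfQhat z n = ecfQ z (ecfNu z n) := by
      rw [ecfQhat, if_neg (by omega)]
    have h3 : (ecfQ z (ecfNu z n) : ℝ) ≤ 3*(kz:ℝ)*Qz := by
      have := upper3k hzd n
      rw [hkz, hQz]
      push_cast
      exact_mod_cast this
    rw [hq] at hlt
    linarith
  have hlow : (2/5:ℝ)^n * Piz ≤ Qz := by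
    have := G1 hzd n
    have hcast : (2:ℝ)^n * Piz ≤ 5^n * Qz := by
      rw [hPiz, hQz]
      exact_mod_cast this
    rw [div_pow, div_mul_eq_mul_div, div_le_iff₀ (by positivity)]
    calc (2:ℝ)^n * Piz ≤ 5^n * Qz := hcast
      _ = Qz * 5^n := by ring
  have hchain := chain n (kz:ℝ) Qz Piz hk1 hQ1 hPi1 hbad hlow
  -- bound the measure
  calc ecfMu (Metric.closedBall z (rad z n))
      ≤ ENNReal.ofReal (4 * rad z n) := mu_closedBall z _ (rad_nonneg z n)
    _ ≤ Fc n c := by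
        have hrad : 4 * rad z n ≤
            72 * Real.exp (-(20*(n:ℝ))) * (25/4)^n * (1/((kz:ℝ)*Real.sqrt (kz:ℝ))) *
              (1/(Piz*Real.sqrt Piz)) := by
          rw [rad]
          exact hchain
        -- identify Fc with the ofReal of the RHS
        have hc1 : c.1 = fun j : Fin n => (sigmaH z (j.1+1), sigmaM z (j.1+1),
            decide (sigmaE z (j.1+1) = 1)) := by rw [← hzc]; rfl
        have hc2 : c.2 = kz := by rw [← hzc]; rfl
        set wr : ℕ → ℝ := fun j => ((sigmaH z (j+1) + 1 : ℕ) : ℝ) * ((sigmaM z (j+1) : ℕ) : ℝ)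
          with hwr
        have hwrpos : ∀ j, 0 < wr j := by
          intro j
          have h1 : (1:ℝ) ≤ ((sigmaM z (j+1) : ℕ):ℝ) := by exact_mod_cast (dig_end hzd j).1
          have h2 : (0:ℝ) < ((sigmaH z (j+1) + 1 : ℕ):ℝ) := by positivity
          have h3 : (0:ℝ) < ((sigmaH z (j+1) + 1 : ℕ):ℝ) * ((sigmaM z (j+1) : ℕ):ℝ) := by
            nlinarith
          simpa [hwr] using h3
        have hgsym : ∀ j : Fin n, gsym (c.1 j) =
            ENNReal.ofReal ((25/4) * (1/(wr j.1 * Real.sqrt (wr j.1)))) := by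
          intro j
          rw [hc1]
          show ENNReal.ofReal (25/4) * gk (sigmaH z (j.1+1) + 1) * gk (sigmaM z (j.1+1)) = _
          rw [gk, gk, ← ENNReal.ofReal_mul (by norm_num), ← ENNReal.ofReal_mul (by positivity)]
          congr 1
          rw [hwr]
          exact ofReal_pack _ _ (by positivity) (by positivity)
        have hPiprod : ∏ j ∈ Finset.range n, wr j = Piz := by
          rw [hPiz, hwr]
          push_cast
          rfl
        have hprod : (∏ j : Fin n, gsym (c.1 j)) =
            ENNReal.ofReal ((25/4)^n * (1/(Piz * Real.sqrt Piz))) := by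
          rw [Finset.prod_congr rfl (fun j _ => hgsym j),
            Fin.prod_univ_eq_prod_range
              (fun j => ENNReal.ofReal ((25/4) * (1/(wr j * Real.sqrt (wr j))))),
            ← ENNReal.ofReal_prod_of_nonneg (fun j _ => by positivity)]
          congr 1
          rw [Finset.prod_mul_distrib, Finset.prod_const, Finset.card_range]
          congr 1
          simp only [one_div]
          rw [Finset.prod_inv_distrib]
          congr 1
          rw [prod_pow32 n wr (fun j => (hwrpos j).le), hPiprod]
        have hFc : ENNReal.ofReal (72 * Real.exp (-(20*(n:ℝ))) * (25/4)^n *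
            (1/((kz:ℝ)*Real.sqrt (kz:ℝ))) * (1/(Piz*Real.sqrt Piz))) ≤ Fc n c := by
          rw [Fc, hc2, hprod, gk,
            ← ENNReal.ofReal_mul (by norm_num),
            ← ENNReal.ofReal_mul (by positivity),
            ← ENNReal.ofReal_mul (by positivity)]
          apply le_of_eq
          congr 1
          ring
        exact le_trans (ENNReal.ofReal_le_ofReal hrad) hFc

lemma gsym_sum : ∑' s : ℕ × ℕ × Bool, gsym s ≤ 5600 := by
  have hC : ENNReal.ofReal (25/4 : ℝ) ≤ 7 := by
    calc ENNReal.ofReal (25/4 : ℝ) ≤ ENNReal.ofReal 7 := ENNReal.ofReal_le_ofReal (by norm_num)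
      _ = 7 := by norm_num
  have hbool : ∀ m : ℕ, ∑' p : ℕ × Bool, gk p.1 = 2 * ∑' m : ℕ, gk m := by
    intro m
    rw [ENNReal.tsum_prod']
    have : ∀ a : ℕ, ∑' _b : Bool, gk a = 2 * gk a := by
      intro a
      rw [tsum_fintype]
      simp [two_mul]
    rw [tsum_congr this, ENNReal.tsum_mul_left]
  calc ∑' s : ℕ × ℕ × Bool, gsym s
      = ∑' a : ℕ, ∑' p : ℕ × Bool, (ENNReal.ofReal (25/4) * gk (a+1) * gk p.1) :=
        ENNReal.tsum_prod'
    _ = ∑' a : ℕ, (ENNReal.ofReal (25/4) * gk (a+1) * ∑' p : ℕ × Bool, gk p.1) := by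
        apply tsum_congr
        intro a
        exact ENNReal.tsum_mul_left
    _ = (∑' a : ℕ, gk (a+1)) * (ENNReal.ofReal (25/4) * ∑' p : ℕ × Bool, gk p.1) := by
        rw [← ENNReal.tsum_mul_right]
        apply tsum_congr
        intro a
        ring
    _ ≤ 20 * (7 * (2 * 20)) := by
        apply mul_le_mul' gk_shift_sum
        apply mul_le_mul' hC
        rw [hbool 0]
        exact mul_le_mul' le_rfl gk_sum
    _ = 5600 := by norm_num

lemma Fc_sum (n : ℕ) : ∑' c : CodeT n, Fc n c ≤
    ENNReal.ofReal 72 * ENNReal.ofReal (Real.exp (-(20*(n:ℝ)))) * 20 * 5600^n := by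
  set A := ENNReal.ofReal 72 * ENNReal.ofReal (Real.exp (-(20*(n:ℝ)))) with hA
  calc ∑' c : CodeT n, Fc n c
      = ∑' g : Fin n → ℕ × ℕ × Bool, ∑' k : ℕ, (A * gk k * ∏ j, gsym (g j)) :=
        ENNReal.tsum_prod'
    _ = ∑' g : Fin n → ℕ × ℕ × Bool, ((A * ∏ j, gsym (g j)) * ∑' k : ℕ, gk k) := by
        apply tsum_congr
        intro g
        rw [← ENNReal.tsum_mul_left]
        apply tsum_congr
        intro k
        ring
    _ = (∑' g : Fin n → ℕ × ℕ × Bool, ∏ j, gsym (g j)) * (A * ∑' k : ℕ, gk k) := by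
        rw [← ENNReal.tsum_mul_right]
        apply tsum_congr
        intro g
        ring
    _ = (∑' s : ℕ × ℕ × Bool, gsym s)^n * (A * ∑' k : ℕ, gk k) := by
        rw [tsum_pi_prod]
    _ ≤ 5600^n * (A * 20) := by
        apply mul_le_mul' (pow_le_pow_left' gsym_sum n)
        exact mul_le_mul' le_rfl gk_sum
    _ = A * 20 * 5600^n := by ring

lemma exp20_big : (11200:ℝ) ≤ Real.exp 20 := by
  have h2 : (2:ℝ) ≤ Real.exp 1 := by linarith [Real.add_one_le_exp 1]
  have h20 : Real.exp 20 = (Real.exp 1)^(20:ℕ) := by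
    rw [← Real.exp_nat_mul]
    norm_num
  rw [h20]
  calc (11200:ℝ) ≤ 2^(20:ℕ) := by norm_num
    _ ≤ (Real.exp 1)^(20:ℕ) := pow_le_pow_left₀ (by norm_num) h2 20

lemma mu_B_le (n : ℕ) : ecfMu (B n) ≤ ENNReal.ofReal (2880 * (1/2:ℝ)^n) := by
  rcases Nat.eq_zero_or_pos n with rfl | hn
  · have hB0 : B 0 = ∅ := by
      ext x
      simp only [B, Set.mem_setOf_eq, Set.mem_empty_iff_false, iff_false]
      rintro ⟨_, hlt⟩
      have : ecfQhat x 0 = 1 := rfl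
      rw [this] at hlt
      norm_num at hlt
    rw [hB0]
    simp
  · calc ecfMu (B n) ≤ ecfMu (⋃ c : CodeT n, Jset n c) := measure_mono (cover hn)
      _ ≤ ∑' c : CodeT n, ecfMu (Jset n c) := measure_iUnion_le _
      _ ≤ ∑' c : CodeT n, Fc n c := ENNReal.tsum_le_tsum (mu_J_le hn)
      _ ≤ ENNReal.ofReal 72 * ENNReal.ofReal (Real.exp (-(20*(n:ℝ)))) * 20 * 5600^n :=
          Fc_sum n
      _ = ENNReal.ofReal (72 * Real.exp (-(20*(n:ℝ))) * 20 * 5600^n) := by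
          rw [ENNReal.ofReal_mul (by positivity), ENNReal.ofReal_mul (by positivity),
            ENNReal.ofReal_mul (by norm_num), ENNReal.ofReal_pow (by norm_num)]
          norm_num
      _ ≤ ENNReal.ofReal (2880 * (1/2:ℝ)^n) := by
          apply ENNReal.ofReal_le_ofReal
          have he : Real.exp (-(20*(n:ℝ))) * 5600^n ≤ (1/2:ℝ)^n := by
            have h1 : Real.exp (-(20*(n:ℝ))) = (Real.exp (-20))^n := by
              rw [← Real.exp_nat_mul]
              ring_nf
            rw [h1, ← mul_pow]
            apply pow_le_pow_left₀ (by positivity)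
            have hp : Real.exp (-20:ℝ) ≤ (11200:ℝ)⁻¹ := by
              rw [Real.exp_neg]
              exact inv_anti₀ (by norm_num) exp20_big
            nlinarith [Real.exp_pos (-20:ℝ)]
          nlinarith [Real.exp_pos (-(20*(n:ℝ))), pow_nonneg (by norm_num : (0:ℝ) ≤ 1/2) n,
            pow_nonneg (by norm_num : (0:ℝ) ≤ 5600) n]

lemma tsum_mu_B : ∑' n, ecfMu (B n) ≠ ⊤ := by
  have hle : ∑' n, ecfMu (B n) ≤ ENNReal.ofReal 5760 := by
    calc ∑' n, ecfMu (B n) ≤ ∑' n, ENNReal.ofReal (2880 * (1/2:ℝ)^n) :=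
        ENNReal.tsum_le_tsum mu_B_le
      _ ≤ ENNReal.ofReal 5760 := by
        rw [ENNReal.tsum_eq_iSup_sum]
        apply iSup_le
        intro F
        obtain ⟨N, hN⟩ := F.exists_nat_subset_range
        calc ∑ n ∈ F, ENNReal.ofReal (2880*(1/2:ℝ)^n)
            ≤ ∑ n ∈ Finset.range N, ENNReal.ofReal (2880*(1/2:ℝ)^n) :=
              Finset.sum_le_sum_of_subset hN
          _ = ENNReal.ofReal (∑ n ∈ Finset.range N, 2880*(1/2:ℝ)^n) :=
              (ENNReal.ofReal_sum_of_nonneg (fun n _ => by positivity)).symm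
          _ ≤ ENNReal.ofReal 5760 := ENNReal.ofReal_le_ofReal (by
              rw [← Finset.mul_sum]
              nlinarith [sum_geometric_two_le N])
  exact ne_top_of_le_ne_top ENNReal.ofReal_ne_top hle

theorem main :
    ∃ C₁ : ℝ, 0 < C₁ ∧
      ∀ᵐ x ∂ecfMu, x ∈ ECFdom →
        ∃ N : ℕ, ∀ n : ℕ, N ≤ n → (ecfQhat x n : ℝ) ≤ Real.exp (C₁ * n) := by
  refine ⟨40, by norm_num, ?_⟩
  have hbc := MeasureTheory.ae_eventually_notMem (μ := ecfMu) (s := B) tsum_mu_B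
  filter_upwards [hbc] with x hx hdom
  rw [Filter.eventually_atTop] at hx
  obtain ⟨N, hN⟩ := hx
  refine ⟨N, fun n hn => ?_⟩
  by_contra hlt
  push_neg at hlt
  exact hN n hn ⟨hdom, hlt⟩


end ECFaux

/-- Upper bound for the growth of the `R`-denominators: there is `C₁ > 0` such that
for `μ`-a.e. irrational `x ∈ (0,1]`, eventually `q̂_n(x) ≤ e^{C₁ n}`. -/
theorem ecfQhat_upper_bound :
    ∃ C₁ : ℝ, 0 < C₁ ∧
      ∀ᵐ x ∂ecfMu, x ∈ ECFdom →
        ∃ N : ℕ, ∀ n : ℕ, N ≤ n → (ecfQhat x n : ℝ) ≤ Real.exp (C₁ * n) := ECFaux.main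
end

section
/- For every irrational x ∈ (0,1] and every n ≥ 1, with Σ-coding σ_j(x) = (h_j,(m_j,ε_j)): (1/2)·m_n·(h_n+1)·q_{ν_{n−1}(x)−1}(x) ≤ q_{ν_n(x)−1}(x) ≤ 6·m_n·(h_n+1)·q_{ν_{n−1}(x)−1}(x), and consequently (1/2ⁿ)·∏_{j=1}^{n} m_j·(h_j+1) ≤ q_{ν_n(x)−1}(x) ≤ 6ⁿ·∏_{j=1}^{n} m_j·(h_j+1) (here q_{ν_0(x)−1} = q_0 = 1). -/
open MeasureTheory Filter

section Aux

lemma ecf_lt_one {x : ℝ} (hx : x ∈ ECFdom) : x < 1 :=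
  lt_of_le_of_ne hx.1.2 hx.2.ne_one

lemma ecf_key {x : ℝ} (hx : x ∈ ECFdom) :
    1 ≤ ecfK x ∧ (ecfXi x = 1 ∨ ecfXi x = -1) ∧
    ecfT x ∈ ECFdom ∧ ecfT x < 1 ∧
    (1/2 < x → ecfK x = 1 ∧ ecfXi x = -1) ∧
    (ecfXi x = -1 → x ≤ 1/2 → 2 ≤ ecfK x) ∧
    (1/2 < x → ecfT x = 2 - 1/x) := by
  obtain ⟨⟨hx0, hx1⟩, hirr⟩ := hx
  have hx1' : x < 1 := lt_of_le_of_ne hx1 hirr.ne_one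
  have hinv : Irrational (1/x) := by
    rw [one_div]; exact hirr.inv
  have h1lt : (1:ℝ) < 1/x := by
    rw [lt_div_iff₀ hx0]; linarith
  set n := ⌊1/x⌋ with hn
  have hn1 : 1 ≤ n := by
    have := Int.le_floor.mpr (le_of_lt (by exact_mod_cast h1lt : ((1:ℤ):ℝ) < 1/x))
    exact this
  have hfl : (n:ℝ) < 1/x ∧ 1/x < n + 1 := by
    constructor
    · rcases lt_or_eq_of_le (Int.floor_le (1/x)) with h | h
      · exact h
      · exact absurd h.symm (hinv.ne_int n)
    · exact Int.lt_floor_add_one (1/x)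
  clear_value n
  rcases Int.even_or_odd n with ⟨t, ht⟩ | ⟨t, ht⟩
  · -- n = 2t, ξ = 1
    have ht1 : 1 ≤ t := by omega
    have hxi : ecfXi x = 1 := by
      simp only [ecfXi, ← hn]; rw [if_pos (by omega)]
    have hk : (ecfK x : ℤ) = t := by
      simp only [ecfK, ← hn]
      omega
    have hkR : (ecfK x : ℝ) = (t : ℝ) := by exact_mod_cast congrArg (Int.cast : ℤ → ℝ) hk
    have hT : ecfT x = 1/x - 2*t := by
      simp only [ecfT, hxi, hkR]; push_cast; ring
    have hnR : (n:ℝ) = 2*t := by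
      have := congrArg (Int.cast : ℤ → ℝ) ht; push_cast at this; linarith
    have hTIrr : Irrational (ecfT x) := by
      rw [hT]
      have := hinv.sub_intCast (2*t)
      convert this using 2; push_cast; ring
    have hT0 : 0 < ecfT x := by rw [hT]; rw [hnR] at hfl; linarith [hfl.1]
    have hT1 : ecfT x < 1 := by rw [hT]; rw [hnR] at hfl; linarith [hfl.2]
    have hnot : ¬ (1/2 < x) := by
      intro hh
      have : 1/x < 2 := by rw [div_lt_iff₀ hx0]; linarith
      have : (n:ℝ) < 2 := lt_trans hfl.1 this
      have : n < 2 := by exact_mod_cast this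
      omega
    refine ⟨by omega, Or.inl hxi, ⟨⟨hT0, le_of_lt hT1⟩, hTIrr⟩, hT1,
      fun h => absurd h hnot, fun h _ => by rw [hxi] at h; omega, fun h => absurd h hnot⟩
  · -- n = 2t+1, ξ = -1
    have ht0 : 0 ≤ t := by omega
    have hxi : ecfXi x = -1 := by
      simp only [ecfXi, ← hn]; rw [if_neg (by omega)]
    have hk : (ecfK x : ℤ) = t + 1 := by
      simp only [ecfK, ← hn]
      omega
    have hkR : (ecfK x : ℝ) = (t : ℝ) + 1 := by
      have := congrArg (Int.cast : ℤ → ℝ) hk; push_cast at this; exact_mod_cast this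
    have hT : ecfT x = 2*t + 2 - 1/x := by
      simp only [ecfT, hxi, hkR]; push_cast; ring
    have hnR : (n:ℝ) = 2*t + 1 := by
      have := congrArg (Int.cast : ℤ → ℝ) ht; push_cast at this; linarith
    have hTIrr : Irrational (ecfT x) := by
      rw [hT]
      have := hinv.intCast_sub (2*t+2)
      convert this using 2
      push_cast; ring
    have hT0 : 0 < ecfT x := by rw [hT]; rw [hnR] at hfl; linarith [hfl.2]
    have hT1 : ecfT x < 1 := by rw [hT]; rw [hnR] at hfl; linarith [hfl.1]
    have hhalf : 1/2 < x → t = 0 := by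
      intro hh
      have : 1/x < 2 := by rw [div_lt_iff₀ hx0]; linarith
      have : (n:ℝ) < 2 := lt_trans hfl.1 this
      have : n < 2 := by exact_mod_cast this
      omega
    refine ⟨by omega, Or.inr hxi, ⟨⟨hT0, le_of_lt hT1⟩, hTIrr⟩, hT1, ?_, ?_, ?_⟩
    · intro hh
      have := hhalf hh
      constructor
      · omega
      · exact hxi
    · intro _ hle
      have h2 : (2:ℝ) ≤ 1/x := by rw [le_div_iff₀ hx0]; linarith
      have : (2:ℝ) < n + 1 := lt_of_le_of_lt h2 hfl.2
      have h2n : (2:ℤ) < n + 1 := by exact_mod_cast this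
      omega
    · intro hh
      have := hhalf hh
      rw [hT, this]; ring

end Aux
section Aux2

lemma ecf_iter_dom {x : ℝ} (hx : x ∈ ECFdom) (j : ℕ) : ecfT^[j] x ∈ ECFdom := by
  induction j with
  | zero => exact hx
  | succ j ih => rw [Function.iterate_succ_apply']; exact (ecf_key ih).2.2.1

lemma ecf_tau_nonempty {x : ℝ} (hx : x ∈ ECFdom) :
    {j : ℕ | ecfT^[j] x ∈ Set.Ioc (0:ℝ) (1/2)}.Nonempty := by
  by_contra h
  rw [Set.not_nonempty_iff_eq_empty] at h
  have hbig : ∀ j, 1/2 < ecfT^[j] x ∧ ecfT^[j] x < 1 := by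
    intro j
    have hd := ecf_iter_dom hx j
    have hlt1 : ecfT^[j] x < 1 := ecf_lt_one hd
    have : ecfT^[j] x ∉ Set.Ioc (0:ℝ) (1/2) := Set.eq_empty_iff_forall_notMem.mp h j
    have h2 : ¬ (ecfT^[j] x ≤ 1/2) := fun hle => this ⟨hd.1.1, hle⟩
    exact ⟨lt_of_not_ge h2, hlt1⟩
  set u : ℝ := 1 - x with hu
  have hx12 : 1/2 < x := (hbig 0).1
  have hu0 : 0 < u := by have := ecf_lt_one hx; simp [hu]; linarith
  have hu12 : u < 1/2 := by simp [hu]; linarith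
  have grow : ∀ j, u + j * u^2 ≤ 1 - ecfT^[j] x := by
    intro j
    induction j with
    | zero => simp [hu]
    | succ j ih =>
      set y := ecfT^[j] x with hy
      have hyd := ecf_iter_dom hx j
      have hy12 : 1/2 < y := (hbig j).1
      have hy1 : y < 1 := (hbig j).2
      have hy0 : 0 < y := hyd.1.1
      have hT : ecfT^[j+1] x = 2 - 1/y := by
        rw [Function.iterate_succ_apply', ← hy]
        exact (ecf_key hyd).2.2.2.2.2.2 hy12
      rw [hT]
      have hv : 1 - (2 - 1/y) = (1-y)/y := by field_simp; ring
      rw [hv, le_div_iff₀ hy0]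
      have huv : u + j * u^2 ≤ 1 - y := ih
      have hj0 : (0:ℝ) ≤ j := Nat.cast_nonneg j
      have hu_le : u ≤ 1 - y := by nlinarith [mul_nonneg hj0 (sq_nonneg u)]
      push_cast
      nlinarith [mul_le_mul_of_nonneg_right huv hy0.le,
        mul_nonneg (sub_nonneg.mpr hu_le) (by linarith : (0:ℝ) ≤ 1 - y + u),
        mul_nonneg (sq_nonneg u) (by linarith : (0:ℝ) ≤ 1 - y)]
  obtain ⟨N, hN⟩ := exists_nat_gt (1 / u^2)
  have h1 : 1 < N * u^2 := by
    rw [div_lt_iff₀ (by positivity)] at hN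
    linarith
  have := grow N
  have := (hbig N).1
  linarith

lemma ecf_tau_mem {x : ℝ} (hx : x ∈ ECFdom) :
    ecfT^[ecfTau x] x ∈ Set.Ioc (0:ℝ) (1/2) :=
  Nat.sInf_mem (ecf_tau_nonempty hx)

lemma ecf_lt_tau {x : ℝ} (hx : x ∈ ECFdom) {j : ℕ} (hj : j < ecfTau x) :
    ecfT^[j] x ∈ Set.Ioo (1/2 : ℝ) 1 := by
  have hnot : ecfT^[j] x ∉ Set.Ioc (0:ℝ) (1/2) := Nat.notMem_of_lt_sInf hj
  have hd := ecf_iter_dom hx j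
  have h1 : ecfT^[j] x < 1 := ecf_lt_one hd
  have h2 : ¬ (ecfT^[j] x ≤ 1/2) := fun hle => hnot ⟨hd.1.1, hle⟩
  exact ⟨lt_of_not_ge h2, h1⟩

lemma ecf_nu_pos (x : ℝ) (n : ℕ) : 1 ≤ ecfNu x n := by
  cases n with
  | zero => simp [ecfNu]
  | succ n => simp [ecfNu]

lemma ecf_R_iter_dom {x : ℝ} (hx : x ∈ ECFdom) (n : ℕ) : ecfR^[n] x ∈ ECFdom := by
  induction n with
  | zero => exact hx
  | succ n ih =>
    rw [Function.iterate_succ_apply']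
    exact ecf_iter_dom ih _

lemma ecf_R_iter_eq {x : ℝ} (hx : x ∈ ECFdom) (n : ℕ) :
    ecfR^[n] x = ecfT^[ecfNu x n - 1] x := by
  induction n with
  | zero => simp [ecfNu]
  | succ n ih =>
    rw [Function.iterate_succ_apply', ih]
    show ecfT^[ecfTau (ecfT^[ecfNu x n - 1] x) + 1] (ecfT^[ecfNu x n - 1] x) = _
    rw [← Function.iterate_add_apply]
    congr 1
    have h1 := ecf_nu_pos x n
    rw [← ih]
    show _ = ecfNu x n + ecfTau (ecfR^[n] x) + 1 - 1
    rw [ih]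
    omega

end Aux2
section Aux3

lemma ecf_digK_pos {x : ℝ} (hx : x ∈ ECFdom) {j : ℕ} (hj : 1 ≤ j) :
    1 ≤ ecfDigK x j := by
  unfold ecfDigK
  exact (ecf_key (ecf_iter_dom hx (j-1))).1

lemma ecf_digXi_pm {x : ℝ} (hx : x ∈ ECFdom) (j : ℕ) :
    ecfDigXi x j = 1 ∨ ecfDigXi x j = -1 := by
  unfold ecfDigXi
  by_cases h : j = 0
  · simp [h]
  · simp only [h, if_false]
    exact (ecf_key (ecf_iter_dom hx (j-1))).2.1

lemma cfQ_rec (k : ℕ → ℕ) (ξ : ℕ → ℤ) {j : ℕ} (hj : 2 ≤ j) :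
    cfQ k ξ j = 2 * (k j : ℤ) * cfQ k ξ (j-1) + ξ (j-1) * cfQ k ξ (j-2) := by
  obtain ⟨i, rfl⟩ : ∃ i, j = i + 2 := ⟨j - 2, by omega⟩
  simp [cfQ]

lemma ecf_q_mono {x : ℝ} (hx : x ∈ ECFdom) : ∀ j : ℕ,
    1 ≤ ecfQ x j ∧ ecfQ x j + 1 ≤ ecfQ x (j+1) := by
  intro j
  induction j with
  | zero =>
    constructor
    · simp [ecfQ, cfQ]
    · show (1:ℤ) + 1 ≤ 2 * (ecfDigK x 1 : ℤ)
      have := ecf_digK_pos hx (le_refl 1)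
      omega
  | succ j ih =>
    refine ⟨by omega, ?_⟩
    rw [show ecfQ x (j+1+1) = cfQ (ecfDigK x) (ecfDigXi x) ((j+2)) from rfl,
      cfQ_rec _ _ (by omega : 2 ≤ j+2)]
    simp only [show j+2-1 = j+1 from rfl, show j+2-2 = j from rfl]
    have hk : 1 ≤ (ecfDigK x (j+2) : ℤ) := by exact_mod_cast ecf_digK_pos hx (by omega)
    have hxi := ecf_digXi_pm hx (j+1)
    have h1 : 1 ≤ ecfQ x j := ih.1
    have h2 : ecfQ x j + 1 ≤ ecfQ x (j+1) := ih.2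
    simp only [ecfQ] at h1 h2
    show cfQ (ecfDigK x) (ecfDigXi x) (j+1) + 1 ≤ _
    rcases hxi with h | h <;> rw [h] <;>
      nlinarith [h1, h2, hk, mul_le_mul_of_nonneg_right hk
        (by linarith : (0:ℤ) ≤ cfQ (ecfDigK x) (ecfDigXi x) (j+1))]

lemma ecf_q_pos {x : ℝ} (hx : x ∈ ECFdom) (j : ℕ) : 1 ≤ ecfQ x j := (ecf_q_mono hx j).1

lemma ecf_q_le {x : ℝ} (hx : x ∈ ECFdom) (j : ℕ) : ecfQ x j ≤ ecfQ x (j+1) := by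
  have := (ecf_q_mono hx j).2; omega

/-- Digit facts for the `(n+1)`-st block. -/
lemma ecf_block_digits {x : ℝ} (hx : x ∈ ECFdom) (n : ℕ) :
    (∀ i, 1 ≤ i → i ≤ ecfTau (ecfR^[n] x) →
      ecfDigK x (ecfNu x n - 1 + i) = 1 ∧ ecfDigXi x (ecfNu x n - 1 + i) = -1) ∧
    (ecfDigXi x (ecfNu x n - 1) = -1 → 2 ≤ ecfDigK x (ecfNu x n - 1)) := by
  have hRd := ecf_R_iter_dom hx n
  constructor
  · intro i hi1 hih
    have hidx : ecfNu x n - 1 + i - 1 = (i - 1) + (ecfNu x n - 1) := by omega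
    have hpt : ecfT^[ecfNu x n - 1 + i - 1] x = ecfT^[i-1] (ecfR^[n] x) := by
      rw [hidx, Function.iterate_add_apply, ← ecf_R_iter_eq hx]
    have hmem : ecfT^[i-1] (ecfR^[n] x) ∈ Set.Ioo (1/2 : ℝ) 1 :=
      ecf_lt_tau hRd (by omega)
    have hdom : ecfT^[i-1] (ecfR^[n] x) ∈ ECFdom := ecf_iter_dom hRd (i-1)
    have hkey := (ecf_key hdom).2.2.2.2.1 hmem.1
    constructor
    · show ecfK (ecfT^[ecfNu x n - 1 + i - 1] x) = 1
      rw [hpt]; exact hkey.1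
    · unfold ecfDigXi
      rw [if_neg (by omega), hpt]
      exact hkey.2
  · cases n with
    | zero =>
      intro hcon
      simp [ecfNu, ecfDigXi] at hcon
    | succ n =>
      intro hxi
      have ha1 : 1 ≤ ecfNu x (n+1) - 1 := by
        have := ecf_nu_pos x n
        show 1 ≤ ecfNu x n + ecfTau (ecfR^[n] x) + 1 - 1
        omega
      have hidx : ecfNu x (n+1) - 1 - 1 = ecfTau (ecfR^[n] x) + (ecfNu x n - 1) := by
        have := ecf_nu_pos x n
        show ecfNu x n + ecfTau (ecfR^[n] x) + 1 - 1 - 1 = _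
        omega
      have hpt : ecfT^[ecfNu x (n+1) - 1 - 1] x = ecfT^[ecfTau (ecfR^[n] x)] (ecfR^[n] x) := by
        rw [hidx, Function.iterate_add_apply, ← ecf_R_iter_eq hx]
      have hRd' := ecf_R_iter_dom hx n
      have hmem := ecf_tau_mem hRd'
      have hdom : ecfT^[ecfTau (ecfR^[n] x)] (ecfR^[n] x) ∈ ECFdom :=
        ecf_iter_dom hRd' _
      unfold ecfDigXi at hxi
      rw [if_neg (by omega), hpt] at hxi
      have := (ecf_key hdom).2.2.2.2.2.1 hxi hmem.2
      show 2 ≤ ecfK (ecfT^[ecfNu x (n+1) - 1 - 1] x)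
      rw [hpt]
      exact this

end Aux3
section Aux4

/-- The main block estimate, in `ℤ`. -/
lemma ecf_block_est {x : ℝ} (hx : x ∈ ECFdom) (n : ℕ) :
    2 * (ecfDigK x (ecfNu x (n+1) - 1) : ℤ) * ((ecfTau (ecfR^[n] x) : ℤ) + 1)
        * ecfQ x (ecfNu x n - 1) ≤ 3 * ecfQ x (ecfNu x (n+1) - 1) ∧
      ecfQ x (ecfNu x (n+1) - 1) ≤
        6 * (ecfDigK x (ecfNu x (n+1) - 1) : ℤ) * ((ecfTau (ecfR^[n] x) : ℤ) + 1)
        * ecfQ x (ecfNu x n - 1) := by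
  obtain ⟨H1, Hprev⟩ := ecf_block_digits hx n
  have hnu := ecf_nu_pos x n
  have hb : ecfNu x (n+1) - 1 = (ecfNu x n - 1) + ecfTau (ecfR^[n] x) + 1 := by
    show ecfNu x n + ecfTau (ecfR^[n] x) + 1 - 1 = _
    omega
  rw [hb]
  obtain ⟨a, ha⟩ : ∃ a, a = ecfNu x n - 1 := ⟨_, rfl⟩
  obtain ⟨h, hh⟩ : ∃ h, h = ecfTau (ecfR^[n] x) := ⟨_, rfl⟩
  rw [← ha] at H1 Hprev ⊢
  rw [← hh] at H1 ⊢
  obtain ⟨m, hm⟩ : ∃ m, m = ecfDigK x (a + h + 1) := ⟨_, rfl⟩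
  rw [← hm]
  clear ha hh hb hnu
  have hm1 : (1:ℤ) ≤ m := by
    rw [hm]; exact_mod_cast ecf_digK_pos hx (by omega : 1 ≤ a + h + 1)
  have hq := ecf_q_mono hx
  have hqa1 : (1:ℤ) ≤ ecfQ x a := ecf_q_pos hx a
  rcases Nat.eq_zero_or_pos h with h0 | hpos
  · -- h = 0 : single digit block
    subst h0
    rw [show a+0+1 = a+1 from by omega] at hm ⊢
    have hxi := ecf_digXi_pm hx a
    push_cast
    rcases Nat.eq_zero_or_pos a with a0 | apos
    · subst a0
      have hq1 : ecfQ x (0+1) = 2 * (m:ℤ) := by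
        show cfQ (ecfDigK x) (ecfDigXi x) 1 = _
        rw [show ((1:ℕ)) = 0+1 from rfl] at hm
        simp [cfQ, hm]
      have hq0 : ecfQ x 0 = 1 := by simp [ecfQ, cfQ]
      rw [hq1, hq0]
      constructor <;> nlinarith
    · obtain ⟨a', rfl⟩ : ∃ a', a = a' + 1 := ⟨a - 1, by omega⟩
      have hrec : ecfQ x (a'+1+1) = 2 * (m:ℤ) * ecfQ x (a'+1)
          + ecfDigXi x (a'+1) * ecfQ x a' := by
        show cfQ (ecfDigK x) (ecfDigXi x) (a'+1+1) = _
        rw [cfQ_rec _ _ (by omega : 2 ≤ a'+1+1),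
          show a'+1+1-1 = a'+1 from by omega, show a'+1+1-2 = a' from by omega, ← hm]
        rfl
      have hqa'1 : (1:ℤ) ≤ ecfQ x a' := ecf_q_pos hx a'
      have hle : ecfQ x a' ≤ ecfQ x (a'+1) := ecf_q_le hx a'
      rw [hrec]
      rcases hxi with hx1 | hx1 <;> rw [hx1] <;> constructor <;>
        nlinarith [mul_le_mul_of_nonneg_left hqa1 (by linarith : (0:ℤ) ≤ m - 1),
          mul_le_mul_of_nonneg_left hle (by linarith : (0:ℤ) ≤ m)]
  · -- h ≥ 1
    obtain ⟨h', rfl⟩ : ∃ h', h = h' + 1 := ⟨h - 1, by omega⟩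
    have hd : ∃ d : ℤ, d = ecfQ x (a+1) - ecfQ x a := ⟨_, rfl⟩
    obtain ⟨d, hd⟩ := hd
    have hdig1 := H1 1 (le_refl 1) (by omega)
    -- Step A: 2 q_a ≤ 3 d and d ≤ 2 q_a
    have hA : 2 * ecfQ x a ≤ 3 * d ∧ d ≤ 2 * ecfQ x a := by
      rcases Nat.eq_zero_or_pos a with a0 | apos
      · subst a0
        have hk1 : ecfDigK x 1 = 1 := by simpa using hdig1.1
        have hq1 : ecfQ x (0+1) = 2 := by
          show cfQ (ecfDigK x) (ecfDigXi x) 1 = _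
          simp [cfQ, hk1]
        have hq0 : ecfQ x 0 = 1 := by simp [ecfQ, cfQ]
        rw [hd, hq1, hq0]
        constructor <;> norm_num
      · obtain ⟨a', rfl⟩ : ∃ a', a = a' + 1 := ⟨a - 1, by omega⟩
        have hk1 : ecfDigK x (a'+1+1) = 1 := by simpa using hdig1.1
        have hrec : ecfQ x (a'+1+1) = 2 * ecfQ x (a'+1) + ecfDigXi x (a'+1) * ecfQ x a' := by
          show cfQ (ecfDigK x) (ecfDigXi x) (a'+1+1) = _
          rw [cfQ_rec _ _ (by omega : 2 ≤ a'+1+1),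
            show a'+1+1-1 = a'+1 from by omega, show a'+1+1-2 = a' from by omega, hk1]
          simp only [ecfQ, Nat.cast_one]
          ring
        have hqa'1 : (1:ℤ) ≤ ecfQ x a' := ecf_q_pos hx a'
        have hle : ecfQ x a' + 1 ≤ ecfQ x (a'+1) := (hq a').2
        rcases ecf_digXi_pm hx (a'+1) with hx1 | hx1
        · rw [hx1] at hrec
          rw [hd, hrec]
          constructor <;> linarith
        · -- ξ_a = -1, so k_a ≥ 2, so q_a ≥ 3 q_{a-1}
          have hka : 2 ≤ ecfDigK x (a'+1) := Hprev hx1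
          have h3 : 3 * ecfQ x a' ≤ ecfQ x (a'+1) := by
            rcases Nat.eq_zero_or_pos a' with a'0 | a'pos
            · subst a'0
              have e1 : ecfQ x (0+1) = 2 * (ecfDigK x 1 : ℤ) := by
                show cfQ (ecfDigK x) (ecfDigXi x) 1 = _; simp [cfQ]
              have hq0 : ecfQ x 0 = 1 := by simp [ecfQ, cfQ]
              rw [e1, hq0]
              have : (2:ℤ) ≤ (ecfDigK x 1 : ℤ) := by exact_mod_cast hka
              linarith
            · obtain ⟨a'', rfl⟩ : ∃ a'', a' = a'' + 1 := ⟨a' - 1, by omega⟩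
              have hrec2 : ecfQ x (a''+1+1) = 2 * (ecfDigK x (a''+1+1) : ℤ) * ecfQ x (a''+1)
                  + ecfDigXi x (a''+1) * ecfQ x a'' := by
                show cfQ (ecfDigK x) (ecfDigXi x) (a''+1+1) = _
                rw [cfQ_rec _ _ (by omega : 2 ≤ a''+1+1),
                  show a''+1+1-1 = a''+1 from by omega, show a''+1+1-2 = a'' from by omega]
                rfl
              have hq'' : (1:ℤ) ≤ ecfQ x a'' := ecf_q_pos hx a''
              have hle'' : ecfQ x a'' + 1 ≤ ecfQ x (a''+1) := (hq a'').2
              have hka2 : (2:ℤ) ≤ (ecfDigK x (a''+1+1) : ℤ) := by exact_mod_cast hka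
              rcases ecf_digXi_pm hx (a''+1) with hx2 | hx2 <;> rw [hx2] at hrec2 <;>
                rw [hrec2] <;>
                nlinarith [mul_le_mul_of_nonneg_left (by linarith : (1:ℤ) ≤ ecfQ x (a''+1))
                  (by linarith : (0:ℤ) ≤ (ecfDigK x (a''+1+1) : ℤ) - 2)]
          rw [hx1] at hrec
          rw [hd, hrec]
          constructor <;> linarith
    -- Step B: arithmetic progression inside the block
    have AP : ∀ j, j ≤ h' + 1 → ecfQ x (a+j) = ecfQ x a + (j:ℤ) * d := by
      intro j
      induction j using Nat.twoStepInduction with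
      | zero => intro _; simp
      | one => intro _; rw [hd]; push_cast; ring
      | more j ihj ihj1 =>
        intro hj2
        have e0 := ihj (by omega)
        have e1 := ihj1 (by omega)
        have hk1 : ecfDigK x (a+(j+2)) = 1 := (H1 (j+2) (by omega) (by omega)).1
        have hxi1 : ecfDigXi x (a+(j+1)) = -1 := (H1 (j+1) (by omega) (by omega)).2
        have hrec : ecfQ x (a+(j+2)) = 2 * (ecfDigK x (a+(j+2)) : ℤ) * ecfQ x (a+(j+1))
            + ecfDigXi x (a+(j+1)) * ecfQ x (a+j) := by
          show cfQ (ecfDigK x) (ecfDigXi x) (a+(j+2)) = _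
          rw [cfQ_rec _ _ (by omega : 2 ≤ a+(j+2)),
            show a+(j+2)-1 = a+(j+1) from by omega, show a+(j+2)-2 = a+j from by omega]
          rfl
        rw [hrec, hk1, hxi1, e0, e1]
        push_cast
        ring
    have eh : ecfQ x (a+(h'+1)) = ecfQ x a + ((h':ℤ)+1) * d := by
      have := AP (h'+1) (le_refl _)
      push_cast at this
      exact this
    have eh' : ecfQ x (a+h') = ecfQ x a + (h':ℤ) * d := AP h' (by omega)
    -- Step D: the last digit of the block
    have hxiend : ecfDigXi x (a+(h'+1)) = -1 := (H1 (h'+1) (by omega) (le_refl _)).2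
    have hrecb : ecfQ x (a+(h'+1)+1) = 2 * (m:ℤ) * ecfQ x (a+(h'+1))
        + ecfDigXi x (a+(h'+1)) * ecfQ x (a+h') := by
      show cfQ (ecfDigK x) (ecfDigXi x) (a+(h'+1)+1) = _
      rw [cfQ_rec _ _ (by omega : 2 ≤ a+(h'+1)+1),
        show a+(h'+1)+1-1 = a+(h'+1) from by omega,
        show a+(h'+1)+1-2 = a+h' from by omega, ← hm]
      rfl
    have hgoal : ecfQ x (a+(h'+1)+1)
        = 2*(m:ℤ)*(ecfQ x a + ((h':ℤ)+1)*d) - (ecfQ x a + (h':ℤ)*d) := by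
      rw [hrecb, hxiend, eh, eh']; ring
    have hH0 : (0:ℤ) ≤ (h':ℤ) := Int.natCast_nonneg h'
    have hd1 : (1:ℤ) ≤ d := by linarith [hA.1]
    rw [hgoal]
    push_cast
    have hm0 : (0:ℤ) ≤ (m:ℤ) := by linarith
    have hm1' : (0:ℤ) ≤ (m:ℤ) - 1 := by linarith
    have hqa0 : (0:ℤ) ≤ ecfQ x a := by linarith
    have hd0 : (0:ℤ) ≤ d := by linarith
    have f1 : (0:ℤ) ≤ (h':ℤ) * ((m:ℤ) * (3*d - 2*ecfQ x a)) :=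
      mul_nonneg hH0 (mul_nonneg hm0 (by linarith [hA.1]))
    have f2 : (0:ℤ) ≤ (h':ℤ) * (((m:ℤ)-1) * d) := mul_nonneg hH0 (mul_nonneg hm1' hd0)
    have f3 : (0:ℤ) ≤ ((m:ℤ)-1) * ecfQ x a := mul_nonneg hm1' hqa0
    have f4 : (0:ℤ) ≤ ((m:ℤ)-1) * d := mul_nonneg hm1' hd0
    have u1 : (0:ℤ) ≤ (h':ℤ) * ((m:ℤ) * (2*ecfQ x a - d)) :=
      mul_nonneg hH0 (mul_nonneg hm0 (by linarith [hA.2]))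
    have u2 : (0:ℤ) ≤ (m:ℤ) * (2*ecfQ x a - d) := mul_nonneg hm0 (by linarith [hA.2])
    have f5 : (0:ℤ) ≤ (h':ℤ) * ((m:ℤ) * ecfQ x a) := mul_nonneg hH0 (mul_nonneg hm0 hqa0)
    have f6 : (0:ℤ) ≤ (m:ℤ) * ecfQ x a := mul_nonneg hm0 hqa0
    have f7 : (0:ℤ) ≤ (h':ℤ) * d := mul_nonneg hH0 hd0
    constructor
    · linarith [f1, f2, f3, f4, hA.1, hqa1]
    · linarith [u1, u2, f5, f6, f7, hqa1]

end Aux4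
section Aux5

lemma ecf_part1 {x : ℝ} (hx : x ∈ ECFdom) (k : ℕ) :
    (1/2 : ℝ) * (sigmaM x (k+1)) * ((sigmaH x (k+1) : ℝ) + 1) * (ecfQ x (ecfNu x k - 1) : ℝ)
        ≤ (ecfQ x (ecfNu x (k+1) - 1) : ℝ) ∧
      (ecfQ x (ecfNu x (k+1) - 1) : ℝ)
        ≤ 6 * (sigmaM x (k+1)) * ((sigmaH x (k+1) : ℝ) + 1) * (ecfQ x (ecfNu x k - 1) : ℝ) := by
  have hblk := ecf_block_est hx k
  have h1R : 2 * ((ecfDigK x (ecfNu x (k+1) - 1) : ℝ)) * ((ecfTau (ecfR^[k] x) : ℝ) + 1)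
      * (ecfQ x (ecfNu x k - 1) : ℝ) ≤ 3 * (ecfQ x (ecfNu x (k+1) - 1) : ℝ) := by
    exact_mod_cast hblk.1
  have h2R : (ecfQ x (ecfNu x (k+1) - 1) : ℝ) ≤
      6 * ((ecfDigK x (ecfNu x (k+1) - 1) : ℝ)) * ((ecfTau (ecfR^[k] x) : ℝ) + 1)
      * (ecfQ x (ecfNu x k - 1) : ℝ) := by
    exact_mod_cast hblk.2
  have hQa : (1:ℝ) ≤ (ecfQ x (ecfNu x k - 1) : ℝ) := by exact_mod_cast ecf_q_pos hx _
  have hM0 : (0:ℝ) ≤ (ecfDigK x (ecfNu x (k+1) - 1) : ℝ) := Nat.cast_nonneg _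
  have hH0 : (0:ℝ) ≤ (ecfTau (ecfR^[k] x) : ℝ) := Nat.cast_nonneg _
  have hMon : (0:ℝ) ≤ (ecfDigK x (ecfNu x (k+1) - 1) : ℝ) * ((ecfTau (ecfR^[k] x) : ℝ) + 1)
      * (ecfQ x (ecfNu x k - 1) : ℝ) :=
    mul_nonneg (mul_nonneg hM0 (by linarith)) (by linarith)
  simp only [sigmaM, sigmaH, Nat.add_sub_cancel]
  constructor
  · nlinarith [h1R, hMon]
  · exact h2R

lemma ecf_part2 {x : ℝ} (hx : x ∈ ECFdom) (k : ℕ) :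
    (1 / 2 ^ k : ℝ) * ∏ j ∈ Finset.Icc 1 k, ((sigmaM x j : ℝ) * ((sigmaH x j : ℝ) + 1))
        ≤ (ecfQ x (ecfNu x k - 1) : ℝ) ∧
      (ecfQ x (ecfNu x k - 1) : ℝ)
        ≤ (6 ^ k : ℝ) * ∏ j ∈ Finset.Icc 1 k, ((sigmaM x j : ℝ) * ((sigmaH x j : ℝ) + 1)) := by
  induction k with
  | zero =>
    have h0 : ecfQ x (ecfNu x 0 - 1) = 1 := by simp [ecfNu, ecfQ, cfQ]
    rw [h0]
    norm_num
  | succ k ih =>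
    have p1 := ecf_part1 hx k
    rw [Finset.prod_Icc_succ_top (by omega : 1 ≤ k+1)]
    set P : ℝ := ∏ j ∈ Finset.Icc 1 k, ((sigmaM x j : ℝ) * ((sigmaH x j : ℝ) + 1)) with hP
    have hP0 : (0:ℝ) ≤ P := by
      rw [hP]
      apply Finset.prod_nonneg
      intro i _
      positivity
    have c0 : (0:ℝ) ≤ (1/2 : ℝ) * (sigmaM x (k+1)) * ((sigmaH x (k+1) : ℝ) + 1) := by positivity
    have c6 : (0:ℝ) ≤ (6 : ℝ) * (sigmaM x (k+1)) * ((sigmaH x (k+1) : ℝ) + 1) := by positivity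
    constructor
    · calc (1 / 2 ^ (k+1) : ℝ) * (P * ((sigmaM x (k+1) : ℝ) * ((sigmaH x (k+1) : ℝ) + 1)))
          = ((1/2 : ℝ) * (sigmaM x (k+1)) * ((sigmaH x (k+1) : ℝ) + 1)) * ((1 / 2 ^ k : ℝ) * P) := by
            rw [pow_succ]; ring
        _ ≤ ((1/2 : ℝ) * (sigmaM x (k+1)) * ((sigmaH x (k+1) : ℝ) + 1))
            * (ecfQ x (ecfNu x k - 1) : ℝ) := mul_le_mul_of_nonneg_left ih.1 c0
        _ = (1/2 : ℝ) * (sigmaM x (k+1)) * ((sigmaH x (k+1) : ℝ) + 1)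
            * (ecfQ x (ecfNu x k - 1) : ℝ) := by ring
        _ ≤ (ecfQ x (ecfNu x (k+1) - 1) : ℝ) := p1.1
    · calc (ecfQ x (ecfNu x (k+1) - 1) : ℝ)
          ≤ 6 * (sigmaM x (k+1)) * ((sigmaH x (k+1) : ℝ) + 1)
            * (ecfQ x (ecfNu x k - 1) : ℝ) := p1.2
        _ = ((6:ℝ) * (sigmaM x (k+1)) * ((sigmaH x (k+1) : ℝ) + 1))
            * (ecfQ x (ecfNu x k - 1) : ℝ) := by ring
        _ ≤ ((6:ℝ) * (sigmaM x (k+1)) * ((sigmaH x (k+1) : ℝ) + 1)) * ((6 ^ k : ℝ) * P) :=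
            mul_le_mul_of_nonneg_left ih.2 c6
        _ = (6 ^ (k+1) : ℝ) * (P * ((sigmaM x (k+1) : ℝ) * ((sigmaH x (k+1) : ℝ) + 1))) := by
            rw [pow_succ]; ring

end Aux5

/-- Two-sided estimate on the denominators `q_{ν_n - 1}` in terms of the Σ-coding
`σ_j(x) = (h_j, (m_j, ε_j))`. -/
theorem ecf_q_nu_sub_one_estimates :
    ∀ x ∈ ECFdom, ∀ n : ℕ, 1 ≤ n →
      ((1/2 : ℝ) * (sigmaM x n) * ((sigmaH x n : ℝ) + 1) * (ecfQ x (ecfNu x (n-1) - 1) : ℝ)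
          ≤ (ecfQ x (ecfNu x n - 1) : ℝ) ∧
        (ecfQ x (ecfNu x n - 1) : ℝ)
          ≤ 6 * (sigmaM x n) * ((sigmaH x n : ℝ) + 1) * (ecfQ x (ecfNu x (n-1) - 1) : ℝ)) ∧
      ((1 / 2 ^ n : ℝ) * ∏ j ∈ Finset.Icc 1 n, ((sigmaM x j : ℝ) * ((sigmaH x j : ℝ) + 1))
          ≤ (ecfQ x (ecfNu x n - 1) : ℝ) ∧
        (ecfQ x (ecfNu x n - 1) : ℝ)
          ≤ (6 ^ n : ℝ) * ∏ j ∈ Finset.Icc 1 n, ((sigmaM x j : ℝ) * ((sigmaH x j : ℝ) + 1))) := by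
  intro x hx n hn
  obtain ⟨n', rfl⟩ : ∃ n', n = n' + 1 := ⟨n - 1, by omega⟩
  refine ⟨?_, ecf_part2 hx (n'+1)⟩
  simpa only [Nat.add_sub_cancel] using ecf_part1 hx n'
end

section
/- For every (h,(m,ε)) ∈ Σ, the cylinder C[h·m^ε] = {x ∈ (0,1]∖ℚ : σ₁(x) = (h,(m,ε))} satisfies μ(C[h·m^ε]) ≤ 3 / ( (log 3)·(4h² + 8h + 3)·m² ). -/
open MeasureTheory Filter

noncomputable section ECFAux

namespace ECFAux

lemma inv_facts {x : ℝ} (hx0 : 0 < x) (hx1 : x ≤ 1) (hirr : Irrational x) :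
    1 < 1/x ∧ Irrational (1/x) ∧ 1 ≤ ⌊1/x⌋ := by
  have hne : x ≠ 1 := hirr.ne_one
  have hlt : x < 1 := lt_of_le_of_ne hx1 hne
  have h1 : 1 < 1/x := by rw [lt_div_iff₀ hx0]; linarith
  refine ⟨h1, ?_, ?_⟩
  · simpa [one_div] using hirr.inv
  · exact Int.le_floor.2 (by exact_mod_cast h1.le)

lemma ecfT_mem {x : ℝ} (hx0 : 0 < x) (hx1 : x ≤ 1) (hirr : Irrational x) :
    0 < ecfT x ∧ ecfT x < 1 ∧ Irrational (ecfT x) := by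
  obtain ⟨h1, hyirr, hn1⟩ := inv_facts hx0 hx1 hirr
  set y := 1/x with hy
  set n := ⌊y⌋ with hn
  have hfr0 : 0 ≤ y - n := by have := Int.floor_le y; linarith
  have hfrne : y - n ≠ 0 := sub_ne_zero.2 (hyirr.ne_int n)
  have hfr : 0 < y - n := lt_of_le_of_ne hfr0 (Ne.symm hfrne)
  have hfr1 : y - n < 1 := by have := Int.lt_floor_add_one y; push_cast at this ⊢; linarith
  have hKN : ecfK x = (n + 1).toNat / 2 := by rw [ecfK, ← hy, ← hn]
  rcases Int.even_or_odd n with ⟨k, hk⟩ | ⟨k, hk⟩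
  · have hmod : n % 2 = 0 := by omega
    have hXi : ecfXi x = 1 := by rw [ecfXi, ← hy, ← hn, if_pos hmod]
    have hK : (ecfK x : ℤ) = k := by omega
    have hT : ecfT x = y - n := by
      rw [ecfT, hXi, ← hy]
      have : (ecfK x : ℝ) = (k : ℝ) := by exact_mod_cast hK
      rw [this]; push_cast; rw [hk]; push_cast; ring
    rw [hT]
    exact ⟨hfr, hfr1, by simpa using hyirr.sub_intCast n⟩
  · have hmod : ¬ (n % 2 = 0) := by omega
    have hXi : ecfXi x = -1 := by rw [ecfXi, ← hy, ← hn, if_neg hmod]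
    have hK : (ecfK x : ℤ) = k + 1 := by omega
    have hT : ecfT x = 1 - (y - n) := by
      rw [ecfT, hXi, ← hy]
      have : (ecfK x : ℝ) = (k : ℝ) + 1 := by exact_mod_cast hK
      rw [this]; push_cast; rw [hk]; push_cast; ring
    rw [hT]
    refine ⟨by linarith, by linarith, ?_⟩
    have : Irrational (-(y - n)) := (hyirr.sub_intCast n).neg
    simpa [sub_eq_add_neg] using this.intCast_add 1

lemma iter_mem {x : ℝ} (hx0 : 0 < x) (hx1 : x ≤ 1) (hirr : Irrational x) (j : ℕ) :
    0 < ecfT^[j] x ∧ ecfT^[j] x ≤ 1 ∧ Irrational (ecfT^[j] x) := by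
  induction j with
  | zero => exact ⟨hx0, hx1, hirr⟩
  | succ n ih =>
    rw [Function.iterate_succ_apply']
    obtain ⟨a, b, cc⟩ := ecfT_mem ih.1 ih.2.1 ih.2.2
    exact ⟨a, b.le, cc⟩

lemma ecfT_half {x : ℝ} (hx0 : 1/2 < x) (hx1 : x ≤ 1) : ecfT x = 2 - 1/x := by
  have hx : 0 < x := by linarith
  have h1 : 1 ≤ 1/x := by rw [le_div_iff₀ hx]; linarith
  have h2 : 1/x < 2 := by rw [div_lt_iff₀ hx]; linarith
  have hfl : ⌊1/x⌋ = 1 := by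
    rw [Int.floor_eq_iff]; push_cast; exact ⟨h1, by linarith⟩
  have hK : ecfK x = 1 := by rw [ecfK, hfl]; rfl
  have hXi : ecfXi x = -1 := by rw [ecfXi, hfl]; rfl
  rw [ecfT, hK, hXi]; push_cast; ring

def psiIter : ℕ → ℝ → ℝ
  | 0, t => t
  | (n+1), t => 1 / (2 - psiIter n t)

lemma psiIter_mem (h : ℕ) {t : ℝ} (h0 : 0 ≤ t) (h1 : t ≤ 1) :
    0 ≤ psiIter h t ∧ psiIter h t ≤ 1 := by
  induction h with
  | zero => exact ⟨h0, h1⟩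
  | succ n ih =>
    obtain ⟨i0, i1⟩ := ih
    constructor
    · apply le_of_lt; apply div_pos one_pos; linarith
    · rw [psiIter, div_le_one (by linarith)]; linarith

lemma psiIter_formula (h : ℕ) {t : ℝ} (h0 : 0 ≤ t) (h1 : t ≤ 1) :
    psiIter h t = ((h : ℝ) + t - h * t) / ((h : ℝ) + 1 - h * t) := by
  induction h with
  | zero => simp [psiIter]
  | succ n ih =>
    have hd : (0:ℝ) < (n : ℝ) + 1 - n * t := by nlinarith [Nat.cast_nonneg (α := ℝ) n]
    have hd2 : (0:ℝ) < (n : ℝ) + 2 - ((n : ℝ) + 1) * t := by nlinarith [Nat.cast_nonneg (α := ℝ) n]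
    have key : 2 - ((n : ℝ) + t - n * t) / ((n : ℝ) + 1 - n * t)
        = ((n : ℝ) + 2 - ((n : ℝ) + 1) * t) / ((n : ℝ) + 1 - n * t) := by
      field_simp; ring
    rw [psiIter, ih, key, one_div_div]
    push_cast
    rw [div_eq_div_iff hd2.ne' (by nlinarith : ((n:ℝ)+1) + 1 - ((n:ℝ)+1) * t ≠ 0)]
    ring

lemma psiIter_lb (h : ℕ) {t : ℝ} (h0 : 0 ≤ t) (h1 : t ≤ 1) :
    (h : ℝ) / ((h : ℝ) + 1) ≤ psiIter h t := by
  have hH0 : (0:ℝ) ≤ (h:ℝ) := Nat.cast_nonneg h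
  rw [psiIter_formula h h0 h1]
  have hd : (0:ℝ) < (h : ℝ) + 1 - h * t := by nlinarith
  rw [div_le_div_iff₀ (by linarith) hd]
  nlinarith

lemma key_lemma (h : ℕ) : ∀ x : ℝ, 0 < x → x ≤ 1 → Irrational x →
    (∀ j < h, 1/2 < ecfT^[j] x) → ∀ a b : ℝ, 0 ≤ a → b ≤ 1 →
    a < ecfT^[h] x → ecfT^[h] x < b →
    psiIter h a < x ∧ x < psiIter h b := by
  induction h with
  | zero => intro x _ _ _ _ a b _ _ hax hxb; simpa [psiIter] using ⟨hax, hxb⟩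
  | succ n ih =>
    intro x hx0 hx1 hirr hhalf a b ha0 hb1 hax hxb
    have hxh : 1/2 < x := by simpa using hhalf 0 (Nat.succ_pos n)
    obtain ⟨hy0, hy1, hyirr⟩ := ecfT_mem hx0 hx1 hirr
    set y := ecfT x with hy
    have hiter : ∀ j, ecfT^[j] y = ecfT^[j+1] x := by
      intro j; rw [Function.iterate_succ_apply]
    have hhalf' : ∀ j < n, 1/2 < ecfT^[j] y := by
      intro j hj; rw [hiter]; exact hhalf (j+1) (by omega)
    have hay : a < ecfT^[n] y := by rw [hiter]; exact hax
    have hyb : ecfT^[n] y < b := by rw [hiter]; exact hxb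
    have hab : a ≤ 1 := by linarith [hax.trans hxb]
    obtain ⟨hpa, hpb⟩ := ih y hy0 hy1.le hyirr hhalf' a b ha0 hb1 hay hyb
    obtain ⟨hpa0, hpa1⟩ := psiIter_mem n ha0 hab
    have hb0 : 0 ≤ b := le_trans ha0 (by linarith)
    obtain ⟨hpb0, hpb1⟩ := psiIter_mem n hb0 hb1
    have hTx : y = 2 - 1/x := ecfT_half hxh hx1
    have hxeq : x = 1 / (2 - y) := by
      rw [hTx]
      have h2 : (2:ℝ) - (2 - 1/x) = 1/x := by ring
      rw [h2, one_div_one_div]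
    constructor
    · show 1 / (2 - psiIter n a) < x
      rw [hxeq]
      exact one_div_lt_one_div_of_lt (by linarith) (by linarith)
    · show x < 1 / (2 - psiIter n b)
      rw [hxeq]
      exact one_div_lt_one_div_of_lt (by linarith) (by linarith)

lemma floor_of_digits {y : ℝ} {m : ℕ} {ε : ℤ}
    (h1 : 1 ≤ ⌊1/y⌋) (hK : ecfK y = m) (hXi : ecfXi y = ε) :
    (ε = 1 → ⌊1/y⌋ = 2*m) ∧ (ε = -1 → ⌊1/y⌋ = 2*m - 1) := by
  rw [ecfK] at hK
  rw [ecfXi] at hXi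
  split_ifs at hXi with hmod
  · exact ⟨fun _ => by omega, fun he => by omega⟩
  · exact ⟨fun he => by omega, fun _ => by omega⟩

lemma digit_interval {y : ℝ} (hy0 : 0 < y) (hirr : Irrational y) (h1 : 1 ≤ ⌊1/y⌋) :
    1/((⌊1/y⌋:ℝ)+1) < y ∧ y < 1/(⌊1/y⌋:ℝ) := by
  set n := ⌊1/y⌋ with hn
  have hny : (n:ℝ) ≤ 1/y := Int.floor_le _
  have hstrict : (n:ℝ) < 1/y := by
    refine lt_of_le_of_ne hny fun hcon => ?_
    exact ((one_div y) ▸ hirr.inv).ne_int n hcon.symm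
  have hub : 1/y < (n:ℝ) + 1 := Int.lt_floor_add_one _
  have hyinv : 0 < 1/y := by positivity
  have hn0 : (0:ℝ) < (n:ℝ) := by exact_mod_cast lt_of_lt_of_le one_pos (by exact_mod_cast h1)
  constructor
  · have := one_div_lt_one_div_of_lt hyinv hub
    rwa [one_div_one_div] at this
  · have := one_div_lt_one_div_of_lt hn0 hstrict
    rwa [one_div_one_div] at this

set_option maxHeartbeats 1000000 in
lemma arith_main (h c m : ℕ) (hc2 : 2 ≤ c) (hm : 1 ≤ m)
    (hcase : (c:ℝ) = 2*m ∨ ((c:ℝ) = 2*m - 1 ∧ 2 ≤ m)) :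
    (1/2 + ((h:ℝ)+1)/(2*h+1)) * (psiIter h (1/(c:ℝ)) - psiIter h (1/((c:ℝ)+1)))
      ≤ 3 / ((4*(h:ℝ)^2+8*h+3) * (m:ℝ)^2) := by
  have hC2 : (2:ℝ) ≤ (c:ℝ) := by exact_mod_cast hc2
  have hM1 : (1:ℝ) ≤ (m:ℝ) := by exact_mod_cast hm
  set H := (h:ℝ) with hH
  set C := (c:ℝ) with hC
  set M := (m:ℝ) with hM
  have hH0 : 0 ≤ H := Nat.cast_nonneg h
  have hC0 : (0:ℝ) < C := by linarith
  have ha0 : (0:ℝ) ≤ 1/(C+1) := by positivity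
  have ha1 : 1/(C+1) ≤ 1 := by rw [div_le_one (by linarith)]; linarith
  have hb0 : (0:ℝ) ≤ 1/C := by positivity
  have hb1 : 1/C ≤ 1 := by rw [div_le_one hC0]; linarith
  rw [psiIter_formula h hb0 hb1, psiIter_formula h ha0 ha1]
  set d1 : ℝ := C*(H+1)+1 with hd1def
  set d2 : ℝ := C*(H+1)-H with hd2def
  have hd1 : 0 < d1 := by nlinarith
  have hd2 : 0 < d2 := by nlinarith
  clear_value d1 d2
  have hden1 : H + 1 - H * (1/C) ≠ 0 := by
    have : H + 1 - H * (1/C) = d2 / C := by field_simp [hd2def]; rw [hd2def]; ring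
    rw [this]; positivity
  have hden2 : H + 1 - H * (1/(C+1)) ≠ 0 := by
    have : H + 1 - H * (1/(C+1)) = d1 / (C+1) := by field_simp [hd1def]; rw [hd1def]; ring
    rw [this]; positivity
  have hBA : (H + 1/C - H * (1/C)) / (H + 1 - H * (1/C))
      - (H + 1/(C+1) - H * (1/(C+1))) / (H + 1 - H * (1/(C+1))) = 1/(d1*d2) := by
    rw [div_sub_div _ _ hden1 hden2,
      div_eq_div_iff (mul_ne_zero hden1 hden2) (by positivity)]
    field_simp [hd1def, hd2def]
    rw [hd1def, hd2def]
    ring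
  rw [hBA]
  have hLHS : (1/2 + (H+1)/(2*H+1)) * (1/(d1*d2)) = (4*H+3) / (2*(2*H+1)*(d1*d2)) := by
    field_simp
    ring
  rw [hLHS, div_le_div_iff₀ (by positivity) (by positivity)]
  rcases hcase with h1 | ⟨h1, h2⟩
  · have f1 : 2*M*(H+1) ≤ d1 := by rw [hd1def, h1]; nlinarith
    have f2 : M*(H+2) ≤ d2 := by rw [hd2def, h1]; nlinarith
    have key : 3 * (2*(2*H+1)*((2*M*(H+1))*(M*(H+2)))) - (4*H+3) * ((4*H^2+8*H+3) * M^2)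
        = M^2*(2*H+1)*(4*H^2+18*H+15) := by ring
    have hnn : 0 ≤ M^2*(2*H+1)*(4*H^2+18*H+15) := by positivity
    have step2 : 3 * (2*(2*H+1)*((2*M*(H+1))*(M*(H+2)))) ≤ 3 * (2*(2*H+1)*(d1*d2)) := by
      gcongr
    linarith
  · have hM2 : (2:ℝ) ≤ M := by rw [hM]; exact_mod_cast h2
    have f1 : (3/2)*M*(H+1) ≤ d1 := by rw [hd1def, h1]; nlinarith
    have f2 : (1/2)*M*(2*H+3) ≤ d2 := by rw [hd2def, h1]; nlinarith
    have key : 3 * (2*(2*H+1)*(((3/2)*M*(H+1))*((1/2)*M*(2*H+3)))) - (4*H+3) * ((4*H^2+8*H+3) * M^2)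
        = M^2*(2*H+1)*(2*H+3)*(H/2 + 3/2) := by ring
    have hnn : 0 ≤ M^2*(2*H+1)*(2*H+3)*(H/2 + 3/2) := by positivity
    have step2 : 3 * (2*(2*H+1)*(((3/2)*M*(H+1))*((1/2)*M*(2*H+3)))) ≤ 3 * (2*(2*H+1)*(d1*d2)) := by
      gcongr
    linarith

end ECFAux

end ECFAux

/-- Measure of length-one Σ-cylinders:
`μ(C[h·m^ε]) ≤ 3 / (log 3 · (4h² + 8h + 3) · m²)`. -/
theorem ecf_cylinder_measure_bound :
    ∀ (h m : ℕ) (ε : ℤ), 1 ≤ m → (ε = 1 ∨ ε = -1) → ¬(m = 1 ∧ ε = -1) →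
      ecfMu {x : ℝ | x ∈ ECFdom ∧ sigmaCode x 1 = (h, (m, ε))} ≤
        ENNReal.ofReal (3 / (Real.log 3 * (4 * (h : ℝ)^2 + 8 * h + 3) * (m : ℝ)^2)) := by
  intro h m ε hm hε hne
  classical
  set c : ℕ := if ε = 1 then 2*m else 2*m - 1 with hcdef
  have hm2 : ε = -1 → 2 ≤ m := by
    intro he
    rcases Nat.eq_or_lt_of_le hm with h1 | h1
    · exact absurd ⟨h1.symm, he⟩ hne
    · exact h1
  have hc2 : 2 ≤ c := by
    rcases hε with he | he
    · simp only [hcdef, if_pos he]; omega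
    · have : ¬ (ε = 1) := by rw [he]; decide
      simp only [hcdef, if_neg this]
      have := hm2 he; omega
  have hccase : (c:ℝ) = 2*m ∨ ((c:ℝ) = 2*m - 1 ∧ 2 ≤ m) := by
    rcases hε with he | he
    · left
      simp only [hcdef, if_pos he]; push_cast; ring
    · right
      have hne1 : ¬ (ε = 1) := by rw [he]; decide
      have h2m := hm2 he
      refine ⟨?_, h2m⟩
      simp only [hcdef, if_neg hne1]
      rw [Nat.cast_sub (by omega : 1 ≤ 2*m)]
      push_cast; ring
  have hC1 : (1:ℝ) ≤ (c:ℝ) := by exact_mod_cast le_trans (by norm_num) hc2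
  set a : ℝ := 1/((c:ℝ)+1) with hadef
  set b : ℝ := 1/(c:ℝ) with hbdef
  have ha0 : 0 ≤ a := by positivity
  have hb1 : b ≤ 1 := by rw [hbdef, div_le_one (by linarith)]; linarith
  have hab : a ≤ 1 := by rw [hadef, div_le_one (by linarith)]; linarith
  have hb0 : 0 ≤ b := by positivity
  set A : ℝ := ECFAux.psiIter h a with hAdef
  set B : ℝ := ECFAux.psiIter h b with hBdef
  obtain ⟨hA0, hA1⟩ := ECFAux.psiIter_mem h ha0 hab
  obtain ⟨hB0, hB1⟩ := ECFAux.psiIter_mem h hb0 hb1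
  have hAlb : (h:ℝ)/((h:ℝ)+1) ≤ A := ECFAux.psiIter_lb h ha0 hab
  -- the cylinder is contained in (A, B)
  have hsub : {x : ℝ | x ∈ ECFdom ∧ sigmaCode x 1 = (h, (m, ε))} ⊆ Set.Ioo A B := by
    rintro x ⟨⟨⟨hx0, hx1⟩, hirr⟩, hcode⟩
    obtain ⟨hh, hm', he'⟩ : sigmaH x 1 = h ∧ sigmaM x 1 = m ∧ sigmaE x 1 = ε := by
      simpa [sigmaCode, Prod.ext_iff] using hcode
    have htau : ecfTau x = h := by simpa [sigmaH] using hh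
    have hnu : ecfNu x 1 = h + 2 := by
      show ecfNu x (0+1) = h + 2
      rw [ecfNu]
      simp [ecfNu, htau]
      omega
    have hKx : ecfK (ecfT^[h] x) = m := by
      have : sigmaM x 1 = ecfK (ecfT^[h] x) := by
        rw [sigmaM, hnu, ecfDigK]
        norm_num
      rwa [this] at hm'
    have hXx : ecfXi (ecfT^[h] x) = ε := by
      have : sigmaE x 1 = ecfXi (ecfT^[h] x) := by
        rw [sigmaE, hnu, ecfDigXi]
        norm_num
      rwa [this] at he'
    set y := ecfT^[h] x with hydef
    obtain ⟨hy0, hy1, hyirr⟩ := ECFAux.iter_mem hx0 hx1 hirr h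
    rw [← hydef] at hy0 hy1 hyirr
    have hfl1 : 1 ≤ ⌊1/y⌋ := (ECFAux.inv_facts hy0 hy1 hyirr).2.2
    have hflc : (⌊1/y⌋ : ℝ) = (c:ℝ) := by
      obtain ⟨f1, f2⟩ := ECFAux.floor_of_digits hfl1 hKx hXx
      rcases hε with he | he
      · have := f1 he
        rw [this]
        simp only [hcdef, if_pos he]
        push_cast; ring
      · have := f2 he
        rw [this]
        have hne1 : ¬ (ε = 1) := by rw [he]; decide
        simp only [hcdef, if_neg hne1]
        rw [Nat.cast_sub (by omega : 1 ≤ 2*m)]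
        push_cast; ring
    obtain ⟨hdi1, hdi2⟩ := ECFAux.digit_interval hy0 hyirr hfl1
    rw [hflc] at hdi1 hdi2
    have hhalf : ∀ j < h, 1/2 < ecfT^[j] x := by
      intro j hj
      have hnotin : j ∉ {j : ℕ | ecfT^[j] x ∈ Set.Ioc (0:ℝ) (1/2)} := by
        apply Nat.notMem_of_lt_sInf
        rw [← ecfTau] at *
        omega
      have hpos := (ECFAux.iter_mem hx0 hx1 hirr j).1
      simp only [Set.mem_setOf_eq, Set.mem_Ioc, not_and, not_le] at hnotin
      exact hnotin hpos
    have := ECFAux.key_lemma h x hx0 hx1 hirr hhalf a b ha0 hb1 (by rw [hadef]; exact hdi1) (by rw [hbdef]; exact hdi2)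
    exact ⟨this.1, this.2⟩
  -- measure estimate
  have hL : 0 < Real.log 3 := Real.log_pos (by norm_num)
  set Mb : ℝ := (1/Real.log 3) * (1/2 + ((h:ℝ)+1)/(2*(h:ℝ)+1)) with hMbdef
  have hMb0 : 0 ≤ Mb := by positivity
  have hptwise : ∀ x ∈ Set.Ioo A B,
      ENNReal.ofReal ((1/Real.log 3) * (1/(3-x) + 1/(1+x))) ≤ ENNReal.ofReal Mb := by
    intro x hx
    apply ENNReal.ofReal_le_ofReal
    have hx1' : x ≤ 1 := le_trans hx.2.le hB1
    have hxlb : (h:ℝ)/((h:ℝ)+1) < x := lt_of_le_of_lt hAlb hx.1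
    have hx0' : 0 < x := lt_of_le_of_lt (by positivity) hxlb
    have hH0 : (0:ℝ) ≤ (h:ℝ) := Nat.cast_nonneg h
    have hxm : (h:ℝ) < x * ((h:ℝ)+1) := by
      rw [div_lt_iff₀ (by positivity)] at hxlb; linarith
    have t1 : 1/(3-x) ≤ 1/2 := by
      apply one_div_le_one_div_of_le <;> linarith
    have t2 : 1/(1+x) ≤ ((h:ℝ)+1)/(2*(h:ℝ)+1) := by
      rw [div_le_div_iff₀ (by linarith) (by positivity)]
      nlinarith
    rw [hMbdef]
    apply mul_le_mul_of_nonneg_left _ (by positivity)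
    linarith
  have harith : Mb * (B - A) ≤ 3 / (Real.log 3 * (4*(h:ℝ)^2 + 8*(h:ℝ) + 3) * (m:ℝ)^2) := by
    have hmain := ECFAux.arith_main h c m hc2 hm hccase
    rw [← hbdef, ← hadef, ← hAdef, ← hBdef] at hmain
    have heq : Mb * (B - A) = (1/Real.log 3) * ((1/2 + ((h:ℝ)+1)/(2*(h:ℝ)+1)) * (B - A)) := by
      rw [hMbdef]; ring
    have heq2 : 3 / (Real.log 3 * (4*(h:ℝ)^2 + 8*(h:ℝ) + 3) * (m:ℝ)^2)
        = (1/Real.log 3) * (3 / ((4*(h:ℝ)^2 + 8*(h:ℝ) + 3) * (m:ℝ)^2)) := by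
      have hm1 : (1:ℝ) ≤ (m:ℝ) := by exact_mod_cast hm
      have hq : (0:ℝ) < 4*(h:ℝ)^2 + 8*(h:ℝ) + 3 := by positivity
      field_simp
    rw [heq, heq2]
    apply mul_le_mul_of_nonneg_left _ (by positivity)
    exact hmain
  calc ecfMu {x : ℝ | x ∈ ECFdom ∧ sigmaCode x 1 = (h, (m, ε))}
      ≤ ecfMu (Set.Ioo A B) := measure_mono hsub
    _ = ∫⁻ x in Set.Ioo A B, ENNReal.ofReal ((1/Real.log 3) * (1/(3-x) + 1/(1+x)))
          ∂(volume.restrict (Set.Ioc 0 1)) := withDensity_apply _ measurableSet_Ioo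
    _ ≤ ∫⁻ _x in Set.Ioo A B, ENNReal.ofReal Mb ∂(volume.restrict (Set.Ioc 0 1)) :=
        setLIntegral_mono measurable_const hptwise
    _ = ENNReal.ofReal Mb * (volume.restrict (Set.Ioc 0 1)) (Set.Ioo A B) :=
        setLIntegral_const _ _
    _ ≤ ENNReal.ofReal Mb * volume (Set.Ioo A B) := by
        gcongr
        exact Measure.restrict_le_self
    _ = ENNReal.ofReal Mb * ENNReal.ofReal (B - A) := by rw [Real.volume_Ioo]
    _ = ENNReal.ofReal (Mb * (B - A)) := (ENNReal.ofReal_mul hMb0).symm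
    _ ≤ ENNReal.ofReal (3 / (Real.log 3 * (4 * (h : ℝ)^2 + 8 * h + 3) * (m : ℝ)^2)) :=
        ENNReal.ofReal_le_ofReal (by convert harith using 3 <;> ring)
end

section
/- There exist a function g : D → ℝ and a constant C > 0 such that for every ω̂ ∈ D and every n ≥ 4, |log q̂_n(ω̂⁺) − S_n(ψ)(ω̂) − g(ω̂)| ≤ C·3^{−n/3}. In particular, the functions g_n(ω̂) = log q̂_n(ω̂⁺) − S_n(ψ)(ω̂) converge to g uniformly on D and exponentially fast in n. -/
open MeasureTheory Filter

noncomputable section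

/-- The space `D = Σ^ℤ` of bi-infinite sequences of symbols. -/
def DSpace : Type := {ω : ℤ → ℕ × (ℕ × ℤ) // ∀ n, ω n ∈ SigmaSymb}

/-- `h`-component of the `n`-th symbol. -/
def hF (ω : DSpace) (n : ℤ) : ℕ := (ω.1 n).1

/-- `m`-component of the `n`-th symbol. -/
def mF (ω : DSpace) (n : ℤ) : ℕ := (ω.1 n).2.1

/-- sign component of the `n`-th symbol. -/
def eF (ω : DSpace) (n : ℤ) : ℤ := (ω.1 n).2.2

/-- `ν_0 = 1`, `ν_n = ν_{n-1} + h_n + 1`, extended to all of `ℤ`. -/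
def nuF (ω : DSpace) (n : ℤ) : ℤ :=
  if 0 ≤ n then 1 + ∑ j ∈ Finset.Icc 1 n.toNat, ((hF ω j : ℤ) + 1)
  else 1 - ∑ j ∈ Finset.range (-n).toNat, ((hF ω (-(j : ℤ)) : ℤ) + 1)

open Classical in
/-- Decoded digit `k_i(ω̂)`: symbol `σ_n` occupies digit indices `ν_{n-1}, …, ν_n - 1`,
as `h_n` copies of `(1,-1)` followed by `(m_n, ε_n)`. -/
def kF (ω : DSpace) (i : ℤ) : ℕ :=
  if h : ∃ n : ℤ, nuF ω n - 1 = i then mF ω h.choose else 1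

open Classical in
/-- Decoded digit `ξ_i(ω̂)`. -/
def xiF (ω : DSpace) (i : ℤ) : ℤ :=
  if h : ∃ n : ℤ, nuF ω n - 1 = i then eF ω h.choose else -1

/-- The finite backward continued fractions
`2k_i + ξ_{i-1}/(2k_{i-1} + ⋯ + ξ_{i-r}/(2k_{i-r}))`. -/
def backCF (k : ℤ → ℕ) (ξ : ℤ → ℤ) : ℕ → ℤ → ℝ
  | 0, i => 2 * (k i : ℝ)
  | (r+1), i => 2 * (k i : ℝ) + (ξ (i-1) : ℝ) / backCF k ξ r (i-1)

/-- `y_i(ω̂)`, the limit of the finite backward continued fractions. -/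
def yF (ω : DSpace) (i : ℤ) : ℝ :=
  limUnder atTop (fun r => backCF (kF ω) (xiF ω) r i)

/-- The roof function `ψ(ω̂) = ∑_{i=2}^{ν₁(ω̂)} log y_i(ω̂)`. -/
def psiF (ω : DSpace) : ℝ := ∑ i ∈ Finset.Icc (2:ℤ) (nuF ω 1), Real.log (yF ω i)

/-- The invertible left shift `R̂` on `D`. -/
def shiftD (ω : DSpace) : DSpace := ⟨fun n => ω.1 (n+1), fun n => ω.2 (n+1)⟩

/-- Birkhoff sums `S_n(ψ)(ω̂) = ∑_{j=0}^{n-1} ψ(R̂^j ω̂)`. -/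
def birkhoffPsi (ω : DSpace) (n : ℕ) : ℝ := ∑ j ∈ Finset.range n, psiF (shiftD^[j] ω)

/-- Forward digit sequence of `ω̂⁺`: digits with indices `≥ 1` (with convention `ξ_0 = 1`). -/
def kPlus (ω : DSpace) (n : ℕ) : ℕ := kF ω (n : ℤ)

def xiPlus (ω : DSpace) (n : ℕ) : ℤ := if n = 0 then 1 else xiF ω (n : ℤ)

/-- The ECF convergent numerators `p_i(ω̂⁺)` of the forward point. -/
def pPlus (ω : DSpace) : ℕ → ℤ := cfP (kPlus ω) (xiPlus ω)

/-- The ECF convergent denominators `q_i(ω̂⁺)` of the forward point. -/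
def qPlus (ω : DSpace) : ℕ → ℤ := cfQ (kPlus ω) (xiPlus ω)

/-- The `R`-denominators `q̂_n(ω̂⁺) = q_{ν_n}(ω̂⁺)` of the forward point. -/
def qhatF (ω : DSpace) (n : ℕ) : ℤ :=
  if n = 0 then 1 else qPlus ω (nuF ω n).toNat

end

noncomputable section AuxProof
open Topology
namespace ECFAux
variable (ω : DSpace)

lemma one_le_mF (n : ℤ) : 1 ≤ mF ω n := (ω.2 n).1
lemma eF_cases (n : ℤ) : eF ω n = 1 ∨ eF ω n = -1 := (ω.2 n).2.1
lemma not_m1_en (n : ℤ) : ¬(mF ω n = 1 ∧ eF ω n = -1) := (ω.2 n).2.2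

lemma nuF_zero : nuF ω 0 = 1 := by simp [nuF]

lemma nuF_succ (n : ℤ) : nuF ω (n+1) = nuF ω n + ((hF ω (n+1) : ℤ) + 1) := by
  rcases lt_trichotomy n (-1) with h | h | h
  · have h1 : ¬ (0 ≤ n + 1) := by omega
    have h2 : ¬ (0 ≤ n) := by omega
    rw [nuF, nuF, if_neg h1, if_neg h2]
    have e1 : (-n).toNat = (-(n+1)).toNat + 1 := by omega
    rw [e1, Finset.sum_range_succ]
    have e2 : (-(((-(n+1)).toNat : ℕ) : ℤ)) = n + 1 := by omega
    rw [e2]; ring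
  · subst h
    have h1 : (0:ℤ) ≤ -1 + 1 := by norm_num
    have h2 : ¬ ((0:ℤ) ≤ -1) := by norm_num
    rw [nuF, nuF, if_pos h1, if_neg h2]
    norm_num
  · have h2 : (0:ℤ) ≤ n := by omega
    have h1 : (0:ℤ) ≤ n + 1 := by omega
    rw [nuF, nuF, if_pos h1, if_pos h2]
    have e1 : (n+1).toNat = n.toNat + 1 := by omega
    rw [e1, Finset.sum_Icc_succ_top (by omega : 1 ≤ n.toNat + 1)]
    have e2 : ((n.toNat + 1 : ℕ) : ℤ) = n + 1 := by omega
    rw [e2]; ring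

lemma nuF_strictMono : StrictMono (nuF ω) := by
  apply strictMono_int_of_lt_succ
  intro n
  have := nuF_succ ω n
  have : (0:ℤ) ≤ hF ω (n+1) := Int.ofNat_nonneg _
  omega

lemma nuF_inj : Function.Injective (nuF ω) := (nuF_strictMono ω).injective

lemma kF_eval {n i : ℤ} (h : nuF ω n - 1 = i) : kF ω i = mF ω n := by
  have hex : ∃ n' : ℤ, nuF ω n' - 1 = i := ⟨n, h⟩
  rw [kF, dif_pos hex]
  have hs := hex.choose_spec
  have : hex.choose = n := nuF_inj ω (by omega)
  rw [this]

lemma xiF_eval {n i : ℤ} (h : nuF ω n - 1 = i) : xiF ω i = eF ω n := by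
  have hex : ∃ n' : ℤ, nuF ω n' - 1 = i := ⟨n, h⟩
  rw [xiF, dif_pos hex]
  have hs := hex.choose_spec
  have : hex.choose = n := nuF_inj ω (by omega)
  rw [this]

lemma one_le_kF (i : ℤ) : 1 ≤ kF ω i := by
  rw [kF]
  split
  · exact one_le_mF ω _
  · exact le_refl 1

lemma xiF_cases (i : ℤ) : xiF ω i = 1 ∨ xiF ω i = -1 := by
  rw [xiF]
  split
  · exact eF_cases ω _
  · exact Or.inr rfl


local notation "V" => backCF (kF ω) (xiF ω)

lemma v_ge_one : ∀ (r : ℕ) (i : ℤ), (1:ℝ) ≤ V r i := by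
  intro r
  induction r with
  | zero =>
    intro i
    have hk : (1:ℝ) ≤ (kF ω i : ℝ) := by exact_mod_cast one_le_kF ω i
    show (1:ℝ) ≤ 2 * (kF ω i : ℝ)
    linarith
  | succ r ih =>
    intro i
    have hv := ih (i-1)
    have hk : (1:ℝ) ≤ (kF ω i : ℝ) := by exact_mod_cast one_le_kF ω i
    have hvpos : (0:ℝ) < V r (i-1) := by linarith
    show (1:ℝ) ≤ 2 * (kF ω i : ℝ) + (xiF ω (i-1) : ℝ) / V r (i-1)
    rcases xiF_cases ω (i-1) with h | h <;> rw [h]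
    · have : (0:ℝ) ≤ 1 / V r (i-1) := by positivity
      push_cast
      linarith
    · have : 1 / V r (i-1) ≤ 1 := by
        rw [div_le_one hvpos]; linarith
      push_cast
      rw [neg_div]
      linarith

lemma v_pos (r : ℕ) (i : ℤ) : (0:ℝ) < V r i := lt_of_lt_of_le one_pos (v_ge_one ω r i)

lemma v_succ (r : ℕ) (i : ℤ) :
    V (r+1) i = 2 * (kF ω i : ℝ) + (xiF ω (i-1) : ℝ) / V r (i-1) := rfl

lemma v_zero (i : ℤ) : V 0 i = 2 * (kF ω i : ℝ) := rfl

/-- parabolic digit predicate -/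
def isP (i : ℤ) : Prop := kF ω i = 1 ∧ xiF ω (i-1) = -1

lemma LB0 {i : ℤ} (h : ¬ isP ω i) : ∀ r, (2:ℝ) ≤ V r i := by
  intro r
  have hk : (1:ℝ) ≤ (kF ω i : ℝ) := by exact_mod_cast one_le_kF ω i
  cases r with
  | zero =>
    show (2:ℝ) ≤ 2 * (kF ω i : ℝ); linarith
  | succ r =>
    have hv := v_ge_one ω r (i-1)
    have hvpos : (0:ℝ) < V r (i-1) := by linarith
    show (2:ℝ) ≤ 2 * (kF ω i : ℝ) + (xiF ω (i-1) : ℝ) / V r (i-1)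
    by_cases hk1 : kF ω i = 1
    · have hxi : xiF ω (i-1) = 1 := by
        rcases xiF_cases ω (i-1) with h1 | h1
        · exact h1
        · exact absurd ⟨hk1, h1⟩ h
      rw [hxi, hk1]
      have : (0:ℝ) ≤ 1 / V r (i-1) := by positivity
      push_cast
      linarith
    · have hk2 : (2:ℝ) ≤ (kF ω i : ℝ) := by
        have := one_le_kF ω i
        have : 2 ≤ kF ω i := by omega
        exact_mod_cast this
      have h1 : 1 / V r (i-1) ≤ 1 := by rw [div_le_one hvpos]; linarith
      rcases xiF_cases ω (i-1) with hx | hx <;> rw [hx]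
      · have : (0:ℝ) ≤ 1 / V r (i-1) := by positivity
        push_cast; linarith
      · push_cast
        rw [neg_div]
        linarith

lemma LB : ∀ (s : ℕ) (i : ℤ) (r : ℕ), ¬ isP ω (i - s) → 1 + 1/((s:ℝ)+1) ≤ V r i := by
  intro s
  induction s with
  | zero =>
    intro i r h
    simp only [Nat.cast_zero, sub_zero] at h ⊢
    have := LB0 ω (by simpa using h) r
    norm_num
    linarith
  | succ s ih =>
    intro i r h
    have hcast : ((s+1:ℕ):ℝ) + 1 = (s:ℝ) + 2 := by push_cast; ring
    rw [hcast]
    have hs1 : (0:ℝ) < (s:ℝ) + 1 := by positivity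
    have hs2 : (0:ℝ) < (s:ℝ) + 2 := by positivity
    have hfrac : (0:ℝ) < 1 + 1/((s:ℝ)+1) := by positivity
    have keyeq : 2 - 1/(1 + 1/((s:ℝ)+1)) = 1 + 1/((s:ℝ)+2) := by
      have h1 : 1 + 1/((s:ℝ)+1) ≠ 0 := by positivity
      field_simp
      ring
    by_cases hip : isP ω i
    · obtain ⟨hk1, hx⟩ := hip
      cases r with
      | zero =>
        rw [v_zero, hk1]
        have : 1/((s:ℝ)+2) ≤ 1 := by
          rw [div_le_one hs2]; linarith
        simp only [Nat.cast_one, mul_one]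
        linarith
      | succ r =>
        have hv : 1 + 1/((s:ℝ)+1) ≤ V r (i-1) := by
          apply ih (i-1) r
          have e : i - 1 - (s:ℤ) = i - ((s+1:ℕ):ℤ) := by push_cast; ring
          rw [e]; exact h
        have hvpos : (0:ℝ) < V r (i-1) := v_pos ω r (i-1)
        have h2 : 1 / V r (i-1) ≤ 1 / (1 + 1/((s:ℝ)+1)) :=
          one_div_le_one_div_of_le hfrac hv
        rw [v_succ, hk1, hx]
        push_cast
        rw [neg_div]
        linarith
    · have h0 := LB0 ω hip r
      have : 1/((s:ℝ)+2) ≤ 1 := by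
        rw [div_le_one hs2]; linarith
      linarith


lemma anchor_disj (n : ℤ) : ¬ isP ω (nuF ω n) ∨ ¬ isP ω (nuF ω n - 1) := by
  have hk : kF ω (nuF ω n - 1) = mF ω n := kF_eval ω rfl
  have hx : xiF ω (nuF ω n - 1) = eF ω n := xiF_eval ω rfl
  by_cases hm : mF ω n = 1
  · left
    intro hP
    have he : eF ω n = 1 := by
      rcases eF_cases ω n with h | h
      · exact h
      · exact absurd ⟨hm, h⟩ (not_m1_en ω n)
    have := hP.2
    rw [hx, he] at this
    norm_num at this
  · right
    intro hP
    exact hm (hk ▸ hP.1)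

lemma vblock (n : ℤ) (s r : ℕ) : 1 + 1/((s:ℝ)+2) ≤ V r (nuF ω n + s) := by
  have hs1 : (0:ℝ) < (s:ℝ) + 1 := by positivity
  have hs2 : (0:ℝ) < (s:ℝ) + 2 := by positivity
  rcases anchor_disj ω n with h | h
  · have := LB ω s (nuF ω n + s) r (by
      have e : nuF ω n + (s:ℤ) - (s:ℤ) = nuF ω n := by ring
      rw [e]; exact h)
    have hmono : 1/((s:ℝ)+2) ≤ 1/((s:ℝ)+1) := by
      apply one_div_le_one_div_of_le hs1; linarith
    linarith
  · have := LB ω (s+1) (nuF ω n + s) r (by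
      have e : nuF ω n + (s:ℤ) - ((s+1:ℕ):ℤ) = nuF ω n - 1 := by push_cast; ring
      rw [e]; exact h)
    have e2 : ((s+1:ℕ):ℝ) + 1 = (s:ℝ) + 2 := by push_cast; ring
    rw [e2] at this
    exact this

lemma v_depth : ∀ (r : ℕ) (i : ℤ), 1 + 1/((r:ℝ)+1) ≤ V r i := by
  intro r
  induction r with
  | zero =>
    intro i
    have hk : (1:ℝ) ≤ (kF ω i : ℝ) := by exact_mod_cast one_le_kF ω i
    rw [v_zero]
    simp only [Nat.cast_zero]
    norm_num
    exact one_le_kF ω i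
  | succ r ih =>
    intro i
    have hcast : ((r+1:ℕ):ℝ) + 1 = (r:ℝ) + 2 := by push_cast; ring
    rw [hcast, v_succ]
    have hr1 : (0:ℝ) < (r:ℝ) + 1 := by positivity
    have hr2 : (0:ℝ) < (r:ℝ) + 2 := by positivity
    have hfrac : (0:ℝ) < 1 + 1/((r:ℝ)+1) := by positivity
    have hv := ih (i-1)
    have hvpos : (0:ℝ) < V r (i-1) := v_pos ω r (i-1)
    have hk : (1:ℝ) ≤ (kF ω i : ℝ) := by exact_mod_cast one_le_kF ω i
    have keyeq : 2 - 1/(1 + 1/((r:ℝ)+1)) = 1 + 1/((r:ℝ)+2) := by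
      have h1 : 1 + 1/((r:ℝ)+1) ≠ 0 := by positivity
      field_simp
      ring
    have h2 : 1 / V r (i-1) ≤ 1 / (1 + 1/((r:ℝ)+1)) :=
      one_div_le_one_div_of_le hfrac hv
    rcases xiF_cases ω (i-1) with h | h <;> rw [h]
    · have : (0:ℝ) ≤ 1 / V r (i-1) := by positivity
      have : 1/((r:ℝ)+2) ≤ 1 := by rw [div_le_one hr2]; linarith
      push_cast
      linarith [(by positivity : (0:ℝ) ≤ 1 / V r (i-1))]
    · push_cast
      rw [neg_div]
      linarith

/-- successive differences of the backward CF approximants -/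
def dd (r : ℕ) (i : ℤ) : ℝ := |V (r+1) i - V r i|

lemma dd_nonneg (r : ℕ) (i : ℤ) : 0 ≤ dd ω r i := abs_nonneg _

lemma dd_zero (i : ℤ) : dd ω 0 i ≤ 1/2 := by
  have hk : (1:ℝ) ≤ (kF ω (i-1) : ℝ) := by exact_mod_cast one_le_kF ω (i-1)
  have hxi : |(xiF ω (i-1) : ℝ)| = 1 := by
    rcases xiF_cases ω (i-1) with h | h <;> rw [h] <;> norm_num
  show |V 1 i - V 0 i| ≤ 1/2
  have : V 1 i - V 0 i = (xiF ω (i-1) : ℝ) / (2 * (kF ω (i-1) : ℝ)) := by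
    rw [v_succ, v_zero, v_zero]
    ring
  rw [this, abs_div, hxi]
  have h2 : (2:ℝ) ≤ |2 * (kF ω (i-1) : ℝ)| := by
    rw [abs_of_pos (by linarith)]
    linarith
  rw [div_le_div_iff₀ (by linarith) (by norm_num)]
  linarith

lemma dd_succ (r : ℕ) (i : ℤ) :
    dd ω (r+1) i = dd ω r (i-1) / (V (r+1) (i-1) * V r (i-1)) := by
  have p1 : (0:ℝ) < V (r+1) (i-1) := v_pos ω (r+1) (i-1)
  have p2 : (0:ℝ) < V r (i-1) := v_pos ω r (i-1)
  have hxi : |(xiF ω (i-1) : ℝ)| = 1 := by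
    rcases xiF_cases ω (i-1) with h | h <;> rw [h] <;> norm_num
  have h1 : V (r+1+1) i - V (r+1) i
      = (xiF ω (i-1) : ℝ) * (V r (i-1) - V (r+1) (i-1)) / (V (r+1) (i-1) * V r (i-1)) := by
    rw [v_succ ω (r+1) i, v_succ ω r i]
    have q1 : V (r+1) (i-1) ≠ 0 := ne_of_gt p1
    have q2 : V r (i-1) ≠ 0 := ne_of_gt p2
    field_simp
    ring
  show |V (r+1+1) i - V (r+1) i| = |V (r+1) (i-1) - V r (i-1)| / (V (r+1) (i-1) * V r (i-1))
  rw [h1, abs_div, abs_mul, hxi, one_mul, abs_of_pos (mul_pos p1 p2), abs_sub_comm]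

lemma dd_le_depth : ∀ (r : ℕ) (i : ℤ), dd ω r i ≤ 1/(((r:ℝ)+1)*((r:ℝ)+2)) := by
  intro r
  induction r with
  | zero =>
    intro i
    refine le_trans (dd_zero ω i) (le_of_eq ?_)
    simp only [Nat.cast_zero]
    norm_num
  | succ r ih =>
    intro i
    have hr1 : (0:ℝ) < (r:ℝ) + 1 := by positivity
    have hr2 : (0:ℝ) < (r:ℝ) + 2 := by positivity
    have hr3 : (0:ℝ) < (r:ℝ) + 3 := by positivity
    have hcast : ((r+1:ℕ):ℝ) = (r:ℝ) + 1 := by push_cast; ring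
    rw [dd_succ, hcast]
    have hv1 : 1 + 1/((r:ℝ)+2) ≤ V (r+1) (i-1) := by
      have := v_depth ω (r+1) (i-1)
      rw [hcast] at this
      have e : (r:ℝ) + 1 + 1 = (r:ℝ) + 2 := by ring
      rw [e] at this
      exact this
    have hv2 : 1 + 1/((r:ℝ)+1) ≤ V r (i-1) := v_depth ω r (i-1)
    have hd := ih (i-1)
    have hfrac : (0:ℝ) < (1 + 1/((r:ℝ)+2)) * (1 + 1/((r:ℝ)+1)) := by positivity
    have hle : (1 + 1/((r:ℝ)+2)) * (1 + 1/((r:ℝ)+1)) ≤ V (r+1) (i-1) * V r (i-1) := by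
      apply mul_le_mul hv1 hv2 (by positivity) (le_of_lt (v_pos ω (r+1) (i-1)))
    have := div_le_div₀ (by positivity) hd hfrac hle
    apply le_trans this
    rw [div_le_iff₀ (by positivity), div_mul_eq_mul_div, le_div_iff₀ (by positivity)]
    field_simp
    ring_nf
    nlinarith [sq_nonneg ((r:ℝ))]

lemma chain_block (n : ℤ) : ∀ (s r : ℕ),
    dd ω (r+s) (nuF ω n + s) ≤ (2/((s:ℝ)+2))^2 * dd ω r (nuF ω n) := by
  intro s
  induction s with
  | zero =>
    intro r
    norm_num
  | succ s ih =>
    intro r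
    have hs2 : (0:ℝ) < (s:ℝ) + 2 := by positivity
    have hs3 : (0:ℝ) < (s:ℝ) + 3 := by positivity
    have e1 : nuF ω n + ((s+1:ℕ):ℤ) = (nuF ω n + (s:ℕ)) + 1 := by push_cast; ring
    have e2 : r + (s+1) = (r+s) + 1 := by ring
    rw [e1, e2, dd_succ]
    have e3 : (nuF ω n + (s:ℕ)) + 1 - 1 = nuF ω n + (s:ℕ) := by ring
    rw [e3]
    have hb1 : 1 + 1/((s:ℝ)+2) ≤ V (r+s+1) (nuF ω n + s) := vblock ω n s (r+s+1)
    have hb2 : 1 + 1/((s:ℝ)+2) ≤ V (r+s) (nuF ω n + s) := vblock ω n s (r+s)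
    have hfrac : (0:ℝ) < (1 + 1/((s:ℝ)+2)) * (1 + 1/((s:ℝ)+2)) := by positivity
    have hle : (1 + 1/((s:ℝ)+2)) * (1 + 1/((s:ℝ)+2))
        ≤ V (r+s+1) (nuF ω n + s) * V (r+s) (nuF ω n + s) :=
      mul_le_mul hb1 hb2 (by positivity) (le_of_lt (v_pos ω _ _))
    have h1 := div_le_div₀ (mul_nonneg (by positivity) (dd_nonneg ω r (nuF ω n))) (ih r) hfrac hle
    apply le_trans h1
    have ec : ((s+1:ℕ):ℝ) + 2 = (s:ℝ) + 3 := by push_cast; ring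
    rw [ec]
    rw [div_le_iff₀ hfrac]
    have heq : (2/((s:ℝ)+3))^2 * ((1 + 1/((s:ℝ)+2)) * (1 + 1/((s:ℝ)+2)))
        = (2/((s:ℝ)+2))^2 * (((s:ℝ)+3)/((s:ℝ)+2) * (((s:ℝ)+2)/((s:ℝ)+3)))^2 := by
      field_simp
      ring
    have heq2 : (((s:ℝ)+3)/((s:ℝ)+2) * (((s:ℝ)+2)/((s:ℝ)+3)))^2 = 1 := by
      field_simp
    rw [mul_comm ((2/((s:ℝ)+3))^2), mul_assoc, heq, heq2, mul_one]
    exact le_of_eq (mul_comm _ _)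

lemma nuF_ge (n : ℕ) : (n:ℤ) + 1 ≤ nuF ω n := by
  induction n with
  | zero => rw [Nat.cast_zero, nuF_zero]; norm_num
  | succ n ih =>
    have := nuF_succ ω n
    have hh : (0:ℤ) ≤ hF ω ((n:ℤ)+1) := Int.ofNat_nonneg _
    push_cast
    omega

lemma chain_full : ∀ (n : ℕ) (r : ℕ),
    dd ω (r + ((nuF ω n).toNat - 1)) (nuF ω n) ≤ (4/9:ℝ)^n * dd ω r 1 := by
  intro n
  induction n with
  | zero =>
    intro r
    rw [Nat.cast_zero, nuF_zero]
    norm_num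
  | succ n ih =>
    intro r
    set h := hF ω ((n:ℤ)+1) with hh
    have hrec : nuF ω ((n:ℤ)+1) = nuF ω n + ((h:ℤ) + 1) := nuF_succ ω n
    have hge : (n:ℤ) + 1 ≤ nuF ω n := nuF_ge ω n
    have e1 : ((n+1:ℕ):ℤ) = (n:ℤ) + 1 := by push_cast; ring
    rw [e1, hrec]
    have e2 : nuF ω n + ((h:ℤ) + 1) = nuF ω n + ((h+1:ℕ):ℤ) := by push_cast; ring
    rw [e2]
    have e3 : (r + ((nuF ω n + ((h+1:ℕ):ℤ)).toNat - 1)) = (r + ((nuF ω n).toNat - 1)) + (h+1) := by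
      omega
    rw [e3]
    have hc := chain_block ω (n:ℤ) (h+1) (r + ((nuF ω n).toNat - 1))
    apply le_trans hc
    have hfac : (2/(((h+1:ℕ):ℝ)+2))^2 ≤ (4/9 : ℝ) := by
      have hh3 : (3:ℝ) ≤ ((h+1:ℕ):ℝ) + 2 := by push_cast; linarith [Nat.cast_nonneg (α := ℝ) h]
      have h0 : (0:ℝ) < ((h+1:ℕ):ℝ) + 2 := by linarith
      have : 2/(((h+1:ℕ):ℝ)+2) ≤ 2/3 := by
        apply div_le_div_of_nonneg_left (by norm_num) (by norm_num) hh3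
      have h2 : (0:ℝ) ≤ 2/(((h+1:ℕ):ℝ)+2) := by positivity
      nlinarith
    calc (2/(((h+1:ℕ):ℝ)+2))^2 * dd ω (r + ((nuF ω n).toNat - 1)) (nuF ω n)
        ≤ (4/9:ℝ) * ((4/9:ℝ)^n * dd ω r 1) := by
          apply mul_le_mul hfac (ih r) (dd_nonneg ω _ _) (by norm_num)
      _ = (4/9:ℝ)^(n+1) * dd ω r 1 := by ring


/-- the telescoping majorant -/
def aux (m : ℕ) : ℝ := 1/(((m:ℝ)+1)*((m:ℝ)+2))

lemma aux_nonneg (m : ℕ) : 0 ≤ aux m := by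
  unfold aux; positivity

lemma sum_range_aux (M : ℕ) : ∑ m ∈ Finset.range M, aux m = 1 - 1/((M:ℝ)+1) := by
  induction M with
  | zero => simp
  | succ M ih =>
    rw [Finset.sum_range_succ, ih]
    unfold aux
    have h1 : ((M:ℝ)+1) ≠ 0 := by positivity
    have h2 : ((M:ℝ)+2) ≠ 0 := by positivity
    have e : ((M+1:ℕ):ℝ) = (M:ℝ)+1 := by push_cast; ring
    rw [e]
    field_simp
    ring

lemma sum_range_aux_le (M : ℕ) : ∑ m ∈ Finset.range M, aux m ≤ 1 := by
  rw [sum_range_aux]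
  have : (0:ℝ) < (M:ℝ)+1 := by positivity
  have : 0 ≤ 1/((M:ℝ)+1) := by positivity
  linarith

lemma summable_aux : Summable aux := by
  apply summable_of_sum_range_le aux_nonneg sum_range_aux_le

lemma v_cauchy (i : ℤ) : CauchySeq (fun r => V r i) := by
  apply cauchySeq_of_dist_le_of_summable aux _ summable_aux
  intro r
  rw [Real.dist_eq]
  have := dd_le_depth ω r i
  unfold aux
  calc |V r i - V (r+1) i| = dd ω r i := by rw [dd]; rw [abs_sub_comm]
    _ ≤ _ := dd_le_depth ω r i

lemma y_spec (i : ℤ) : Tendsto (fun r => V r i) atTop (𝓝 (yF ω i)) :=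
  (v_cauchy ω i).tendsto_limUnder

lemma y_ge_one (i : ℤ) : 1 ≤ yF ω i :=
  ge_of_tendsto (y_spec ω i) (Eventually.of_forall (fun r => v_ge_one ω r i))

lemma dist_v_y (r₀ : ℕ) (i : ℤ) (B : ℝ) (hB : 0 ≤ B)
    (h : ∀ m : ℕ, dd ω (r₀+m) i ≤ B * aux m) :
    |V r₀ i - yF ω i| ≤ B := by
  have key : ∀ M : ℕ, dist (V r₀ i) (V (r₀+M) i) ≤ B := by
    intro M
    calc dist (V r₀ i) (V (r₀+M) i)
        ≤ ∑ m ∈ Finset.range M, dist (V (r₀+m) i) (V (r₀+(m+1)) i) := by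
          exact dist_le_range_sum_dist (fun m => V (r₀+m) i) M
      _ ≤ ∑ m ∈ Finset.range M, B * aux m := by
          apply Finset.sum_le_sum
          intro m _
          rw [Real.dist_eq]
          have e : r₀ + (m+1) = (r₀+m) + 1 := by ring
          rw [e]
          calc |V (r₀+m) i - V ((r₀+m)+1) i| = dd ω (r₀+m) i := by
                rw [dd, abs_sub_comm]
            _ ≤ B * aux m := h m
      _ = B * ∑ m ∈ Finset.range M, aux m := by rw [Finset.mul_sum]
      _ ≤ B * 1 := by
          apply mul_le_mul_of_nonneg_left (sum_range_aux_le M) hB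
      _ = B := mul_one B
  have hy : Tendsto (fun M : ℕ => V (r₀+M) i) atTop (𝓝 (yF ω i)) := by
    have := (y_spec ω i).comp (tendsto_add_atTop_nat r₀)
    have e : ((fun r => V r i) ∘ fun a => a + r₀) = fun M => V (r₀ + M) i := by
      funext M; simp [Function.comp, Nat.add_comm]
    rwa [e] at this
  have hd : Tendsto (fun M : ℕ => dist (V r₀ i) (V (r₀+M) i)) atTop
      (𝓝 (dist (V r₀ i) (yF ω i))) := (tendsto_const_nhds.dist hy)
  have := le_of_tendsto hd (Eventually.of_forall key)
  rwa [Real.dist_eq] at this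

/-- the finite truncation `t_i` (equals `q_i/q_{i-1}`) -/
def tF (i : ℤ) : ℝ := V (i-1).toNat i

lemma tF_ge_one (i : ℤ) : 1 ≤ tF ω i := v_ge_one ω _ i

lemma est_t_y (n : ℕ) (s : ℕ) :
    |tF ω (nuF ω (n:ℤ) + ((s+1:ℕ):ℤ)) - yF ω (nuF ω (n:ℤ) + ((s+1:ℕ):ℤ))|
      ≤ (4/9:ℝ)^n * (2/((s:ℝ)+3))^2 := by
  set i := nuF ω (n:ℤ) + ((s+1:ℕ):ℤ) with hi
  have hnu : (n:ℤ) + 1 ≤ nuF ω n := nuF_ge ω n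
  set T : ℕ := (nuF ω (n:ℤ)).toNat - 1 with hT
  have hr₀ : (i-1).toNat = T + (s+1) := by omega
  have hB : (0:ℝ) ≤ (4/9:ℝ)^n * (2/((s:ℝ)+3))^2 := by positivity
  rw [show tF ω i = V (i-1).toNat i from rfl, hr₀]
  apply dist_v_y ω (T + (s+1)) i _ hB
  intro m
  have e1 : T + (s+1) + m = (m + T) + (s+1) := by ring
  rw [e1]
  have hcb := chain_block ω (n:ℤ) (s+1) (m+T)
  have ec : ((s+1:ℕ):ℝ) + 2 = (s:ℝ) + 3 := by push_cast; ring
  rw [ec] at hcb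
  have hcf := chain_full ω n m
  have hdd := dd_le_depth ω m 1
  calc dd ω ((m+T) + (s+1)) i ≤ (2/((s:ℝ)+3))^2 * dd ω (m+T) (nuF ω (n:ℤ)) := hcb
    _ ≤ (2/((s:ℝ)+3))^2 * ((4/9:ℝ)^n * dd ω m 1) := by
        apply mul_le_mul_of_nonneg_left _ (by positivity)
        have e2 : m + T = m + ((nuF ω (n:ℤ)).toNat - 1) := by rw [hT]
        rw [e2]
        exact hcf
    _ ≤ (2/((s:ℝ)+3))^2 * ((4/9:ℝ)^n * aux m) := by
        apply mul_le_mul_of_nonneg_left _ (by positivity)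
        apply mul_le_mul_of_nonneg_left _ (by positivity)
        exact hdd
    _ = (4/9:ℝ)^n * (2/((s:ℝ)+3))^2 * aux m := by ring

lemma log_abs_diff {a b : ℝ} (ha : 1 ≤ a) (hb : 1 ≤ b) :
    |Real.log a - Real.log b| ≤ |a - b| := by
  have key : ∀ x y : ℝ, 1 ≤ x → x ≤ y → Real.log y - Real.log x ≤ y - x := by
    intro x y hx hxy
    have hx0 : (0:ℝ) < x := by linarith
    have hy0 : (0:ℝ) < y := by linarith
    have h1 : Real.log y - Real.log x = Real.log (y/x) := (Real.log_div (ne_of_gt hy0) (ne_of_gt hx0)).symm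
    rw [h1]
    have h2 : Real.log (y/x) ≤ y/x - 1 := Real.log_le_sub_one_of_pos (by positivity)
    have h3 : y/x - 1 = (y-x)/x := by field_simp
    have h4 : (y-x)/x ≤ y - x := div_le_self (by linarith) hx
    linarith
  rcases le_total a b with h | h
  · have := key a b ha h
    rw [abs_of_nonpos (by linarith [Real.log_le_log (by linarith : (0:ℝ) < a) h] ), abs_of_nonpos (by linarith)]
    linarith
  · have := key b a hb h
    rw [abs_of_nonneg (by linarith [Real.log_le_log (by linarith : (0:ℝ) < b) h]), abs_of_nonneg (by linarith)]
    linarith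


lemma q_pos_mono : ∀ m : ℕ, 1 ≤ qPlus ω m ∧ qPlus ω m ≤ qPlus ω (m+1) := by
  have hq0 : qPlus ω 0 = 1 := rfl
  have hq1 : qPlus ω 1 = 2 * (kPlus ω 1 : ℤ) := rfl
  intro m
  induction m with
  | zero =>
    constructor
    · rw [hq0]
    · rw [hq0, hq1]
      have : 1 ≤ kPlus ω 1 := one_le_kF ω 1
      omega
  | succ m ih =>
    obtain ⟨h1, h2⟩ := ih
    have hrec : qPlus ω (m+2) = 2 * (kPlus ω (m+2) : ℤ) * qPlus ω (m+1) + xiPlus ω (m+1) * qPlus ω m := rfl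
    have hk : 1 ≤ kPlus ω (m+2) := one_le_kF ω _
    have hxi : xiPlus ω (m+1) = 1 ∨ xiPlus ω (m+1) = -1 := by
      rw [xiPlus]
      simp only [Nat.succ_ne_zero, if_false]
      exact xiF_cases ω _
    have hq1' : 1 ≤ qPlus ω (m+1) := le_trans h1 h2
    constructor
    · exact hq1'
    · rcases hxi with h | h <;> rw [hrec, h] <;> nlinarith [hk]

lemma q_ge_one (m : ℕ) : 1 ≤ qPlus ω m := (q_pos_mono ω m).1

lemma tF_succ_nat (m : ℕ) : tF ω ((m+1:ℕ):ℤ) = V m ((m+1:ℕ):ℤ) := by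
  rw [tF]
  congr 1
  omega

lemma tF_eq_ratio : ∀ m : ℕ,
    tF ω ((m+1:ℕ):ℤ) = (qPlus ω (m+1) : ℝ) / (qPlus ω m : ℝ) := by
  intro m
  induction m with
  | zero =>
    rw [tF_succ_nat, v_zero]
    have e1 : qPlus ω 1 = 2 * (kF ω ((0+1:ℕ):ℤ) : ℤ) := rfl
    have e0 : qPlus ω 0 = 1 := rfl
    rw [e0, e1]
    push_cast
    rw [div_one]
  | succ m ih =>
    rw [tF_succ_nat]
    have e : ((m+1+1:ℕ):ℤ) - 1 = ((m+1:ℕ):ℤ) := by push_cast; ring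
    rw [v_succ, e]
    have hv : V m ((m+1:ℕ):ℤ) = tF ω ((m+1:ℕ):ℤ) := (tF_succ_nat ω m).symm
    rw [hv, ih]
    have hq0 : (0:ℝ) < (qPlus ω m : ℝ) := by exact_mod_cast q_ge_one ω m
    have hq1 : (0:ℝ) < (qPlus ω (m+1) : ℝ) := by exact_mod_cast q_ge_one ω (m+1)
    have hrec : qPlus ω (m+2) = 2 * (kPlus ω (m+2) : ℤ) * qPlus ω (m+1) + xiPlus ω (m+1) * qPlus ω m := rfl
    have hz : (qPlus ω (m+2) : ℝ)
        = 2*(kPlus ω (m+2):ℝ)*(qPlus ω (m+1):ℝ) + (xiPlus ω (m+1):ℝ)*(qPlus ω m:ℝ) := by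
      exact_mod_cast congrArg (Int.cast : ℤ → ℝ) hrec
    have hknat : kF ω ((m+1+1:ℕ):ℤ) = kPlus ω (m+2) := by
      rw [kPlus]
    have hxin : xiF ω ((m+1:ℕ):ℤ) = xiPlus ω (m+1) := by
      rw [xiPlus]
      simp only [Nat.succ_ne_zero, if_false]
    rw [hknat, hxin]
    have hq1ne : (qPlus ω (m+1):ℝ) ≠ 0 := ne_of_gt hq1
    have hq0ne : (qPlus ω m:ℝ) ≠ 0 := ne_of_gt hq0
    rw [div_div_eq_mul_div]
    have e2 : qPlus ω (m+1+1) = qPlus ω (m+2) := rfl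
    rw [e2]
    field_simp
    linarith [hz]


lemma log_q_eq : ∀ m : ℕ,
    Real.log (qPlus ω (m+1) : ℝ) = ∑ j ∈ Finset.range (m+1), Real.log (tF ω ((j+1:ℕ):ℤ)) := by
  intro m
  induction m with
  | zero =>
    rw [Finset.sum_range_one, tF_eq_ratio]
    have e0 : qPlus ω 0 = 1 := rfl
    rw [e0]
    norm_num
  | succ m ih =>
    rw [Finset.sum_range_succ, ← ih, tF_eq_ratio ω (m+1)]
    have hq1 : (0:ℝ) < (qPlus ω (m+1) : ℝ) := by exact_mod_cast q_ge_one ω (m+1)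
    have hq2 : (0:ℝ) < (qPlus ω (m+1+1) : ℝ) := by exact_mod_cast q_ge_one ω (m+1+1)
    rw [Real.log_div (ne_of_gt hq2) (ne_of_gt hq1)]
    ring

lemma Ioc_succ_singleton (b : ℤ) : Finset.Ioc b (b+1) = {b+1} := by
  ext x
  simp only [Finset.mem_Ioc, Finset.mem_singleton]
  omega

lemma sum_Ioc_glue (g : ℤ → ℝ) {a b c : ℤ} (h1 : a ≤ b) (h2 : b ≤ c) :
    ∑ i ∈ Finset.Ioc a b, g i + ∑ i ∈ Finset.Ioc b c, g i = ∑ i ∈ Finset.Ioc a c, g i := by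
  rw [← Finset.sum_union (by
    rw [Finset.disjoint_left]
    intro x hx hx'
    rw [Finset.mem_Ioc] at hx hx'
    omega)]
  rw [Finset.Ioc_union_Ioc_eq_Ioc h1 h2]

lemma sum_Ioc_block (g : ℤ → ℝ) (b : ℤ) : ∀ S : ℕ,
    ∑ i ∈ Finset.Ioc b (b + (S:ℤ)), g i = ∑ s ∈ Finset.range S, g (b + ((s+1:ℕ):ℤ)) := by
  intro S
  induction S with
  | zero => simp
  | succ S ih =>
    have h1 : b ≤ b + (S:ℤ) := by omega
    have h2 : b + (S:ℤ) ≤ (b + (S:ℤ)) + 1 := by omega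
    have e : b + ((S+1:ℕ):ℤ) = (b + (S:ℤ)) + 1 := by push_cast; ring
    rw [e, ← sum_Ioc_glue g h1 h2, ih, Finset.sum_range_succ]
    rw [Ioc_succ_singleton, Finset.sum_singleton]
    congr 1
    push_cast
    ring

lemma Icc_two_eq_Ioc (b : ℤ) : Finset.Icc (2:ℤ) b = Finset.Ioc 1 b := by
  ext x
  simp only [Finset.mem_Icc, Finset.mem_Ioc]
  omega

lemma shift_iter_apply : ∀ (j : ℕ) (ω : DSpace) (n : ℤ), (shiftD^[j] ω).1 n = ω.1 (n + j) := by
  intro j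
  induction j with
  | zero => intro ω n; simp
  | succ j ih =>
    intro ω n
    rw [Function.iterate_succ_apply]
    rw [ih (shiftD ω) n]
    show ω.1 (n + j + 1) = ω.1 (n + (j+1:ℕ))
    congr 1
    push_cast
    ring

lemma nuF_shift (n : ℤ) : nuF (shiftD ω) n = nuF ω (n+1) - nuF ω 1 + 1 := by
  induction n using Int.induction_on with
  | zero =>
    rw [nuF_zero]
    norm_num
  | succ k ih =>
    have h1 := nuF_succ (shiftD ω) k
    have h2 := nuF_succ ω (k+1)
    have e : hF (shiftD ω) (k+1) = hF ω (k+1+1) := rfl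
    rw [e] at h1
    omega
  | pred k ih =>
    have eg2 : -(k:ℤ)-1+1 = -(k:ℤ) := by ring
    rw [eg2]
    have h1 := nuF_succ (shiftD ω) (-(k:ℤ)-1)
    rw [eg2] at h1
    have e : hF (shiftD ω) (-(k:ℤ)) = hF ω (-(k:ℤ)+1) := rfl
    rw [e] at h1
    have h2 := nuF_succ ω (-(k:ℤ))
    omega

lemma nuF_shift_iter : ∀ (j : ℕ) (ω : DSpace) (n : ℤ),
    nuF (shiftD^[j] ω) n = nuF ω (n+j) - nuF ω j + 1 := by
  intro j
  induction j with
  | zero =>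
    intro ω n
    simp [nuF_zero]
  | succ j ih =>
    intro ω n
    rw [Function.iterate_succ_apply, ih (shiftD ω) n, nuF_shift, nuF_shift]
    have e1 : n + (j:ℤ) + 1 = n + ((j+1:ℕ):ℤ) := by push_cast; ring
    have e2 : (j:ℤ) + 1 = ((j+1:ℕ):ℤ) := by push_cast; ring
    rw [e1, e2]
    ring

lemma kF_default {i : ℤ} (h : ¬ ∃ n : ℤ, nuF ω n - 1 = i) : kF ω i = 1 := dif_neg h
lemma xiF_default {i : ℤ} (h : ¬ ∃ n : ℤ, nuF ω n - 1 = i) : xiF ω i = -1 := dif_neg h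

lemma kF_shift_iter (j : ℕ) (i : ℤ) :
    kF (shiftD^[j] ω) i = kF ω (i + (nuF ω j - 1)) := by
  by_cases hex : ∃ n : ℤ, nuF (shiftD^[j] ω) n - 1 = i
  · obtain ⟨n, hn⟩ := hex
    rw [kF_eval (shiftD^[j] ω) hn]
    have hn2 : nuF ω (n+j) - 1 = i + (nuF ω j - 1) := by
      rw [nuF_shift_iter j ω n] at hn
      omega
    rw [kF_eval ω hn2]
    show ((shiftD^[j] ω).1 n).2.1 = (ω.1 (n+j)).2.1
    rw [shift_iter_apply j ω n]
  · rw [kF_default (shiftD^[j] ω) hex, kF_default ω]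
    intro ⟨n, hn⟩
    apply hex
    refine ⟨n - j, ?_⟩
    rw [nuF_shift_iter j ω (n - j)]
    have e : n - (j:ℤ) + (j:ℤ) = n := by ring
    rw [e]
    omega

lemma xiF_shift_iter (j : ℕ) (i : ℤ) :
    xiF (shiftD^[j] ω) i = xiF ω (i + (nuF ω j - 1)) := by
  by_cases hex : ∃ n : ℤ, nuF (shiftD^[j] ω) n - 1 = i
  · obtain ⟨n, hn⟩ := hex
    rw [xiF_eval (shiftD^[j] ω) hn]
    have hn2 : nuF ω (n+j) - 1 = i + (nuF ω j - 1) := by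
      rw [nuF_shift_iter j ω n] at hn
      omega
    rw [xiF_eval ω hn2]
    show ((shiftD^[j] ω).1 n).2.2 = (ω.1 (n+j)).2.2
    rw [shift_iter_apply j ω n]
  · rw [xiF_default (shiftD^[j] ω) hex, xiF_default ω]
    intro ⟨n, hn⟩
    apply hex
    refine ⟨n - j, ?_⟩
    rw [nuF_shift_iter j ω (n - j)]
    have e : n - (j:ℤ) + (j:ℤ) = n := by ring
    rw [e]
    omega

lemma v_shift_iter (j : ℕ) : ∀ (r : ℕ) (i : ℤ),
    backCF (kF (shiftD^[j] ω)) (xiF (shiftD^[j] ω)) r i = V r (i + (nuF ω j - 1)) := by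
  intro r
  induction r with
  | zero =>
    intro i
    show 2 * ((kF (shiftD^[j] ω) i : ℕ) : ℝ) = 2 * ((kF ω (i + (nuF ω j - 1)) : ℕ) : ℝ)
    rw [kF_shift_iter]
  | succ r ih =>
    intro i
    show 2 * ((kF (shiftD^[j] ω) i : ℕ) : ℝ)
          + ((xiF (shiftD^[j] ω) (i-1) : ℤ) : ℝ) / backCF (kF (shiftD^[j] ω)) (xiF (shiftD^[j] ω)) r (i-1)
        = 2 * ((kF ω (i + (nuF ω j - 1)) : ℕ) : ℝ)
          + ((xiF ω (i + (nuF ω j - 1) - 1) : ℤ) : ℝ) / V r (i + (nuF ω j - 1) - 1)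
    rw [kF_shift_iter, xiF_shift_iter, ih (i-1)]
    have e : i - 1 + (nuF ω j - 1) = i + (nuF ω j - 1) - 1 := by ring
    rw [e]

lemma yF_shift_iter (j : ℕ) (i : ℤ) :
    yF (shiftD^[j] ω) i = yF ω (i + (nuF ω j - 1)) := by
  rw [yF, yF]
  congr 1
  funext r
  exact v_shift_iter ω j r i

lemma psiF_shift (j : ℕ) :
    psiF (shiftD^[j] ω) = ∑ i ∈ Finset.Ioc (nuF ω j) (nuF ω (j+1:ℕ)), Real.log (yF ω i) := by
  rw [psiF, Icc_two_eq_Ioc]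
  have hS : nuF (shiftD^[j] ω) 1 = 1 + ((hF ω ((j:ℤ)+1) + 1 : ℕ) : ℤ) := by
    rw [nuF_shift_iter j ω 1]
    have e : (1:ℤ)+(j:ℤ) = (j:ℤ)+1 := by ring
    rw [e]
    have := nuF_succ ω (j:ℤ)
    push_cast
    omega
  have hS2 : nuF ω ((j+1:ℕ):ℤ) = nuF ω j + ((hF ω ((j:ℤ)+1) + 1 : ℕ) : ℤ) := by
    have e : ((j+1:ℕ):ℤ) = (j:ℤ)+1 := by push_cast; ring
    rw [e]
    have := nuF_succ ω (j:ℤ)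
    push_cast
    omega
  rw [hS, hS2]
  rw [sum_Ioc_block _ 1 _, sum_Ioc_block _ (nuF ω j) _]
  apply Finset.sum_congr rfl
  intro s _
  rw [yF_shift_iter ω j]
  congr 2
  omega

lemma birkhoff_eq (n : ℕ) :
    birkhoffPsi ω n = ∑ i ∈ Finset.Ioc 1 (nuF ω n), Real.log (yF ω i) := by
  induction n with
  | zero =>
    rw [birkhoffPsi]
    simp [nuF_zero]
  | succ n ih =>
    rw [birkhoffPsi, Finset.sum_range_succ]
    have : ∑ j ∈ Finset.range n, psiF (shiftD^[j] ω) = birkhoffPsi ω n := rfl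
    rw [this, ih, psiF_shift ω n]
    apply sum_Ioc_glue
    · have := nuF_ge ω n
      omega
    · have h1 := nuF_succ ω (n:ℤ)
      have h2 : (0:ℤ) ≤ hF ω ((n:ℤ)+1) := Int.ofNat_nonneg _
      have e : ((n+1:ℕ):ℤ) = (n:ℤ)+1 := by push_cast; ring
      rw [e]
      omega


/-- the partial-sum sequence whose limit is `g` -/
def XF (n : ℕ) : ℝ :=
  Real.log (tF ω 1) + ∑ i ∈ Finset.Ioc (1:ℤ) (nuF ω n), (Real.log (tF ω i) - Real.log (yF ω i))

lemma x_eq_X (n : ℕ) (hn : 1 ≤ n) :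
    Real.log ((qhatF ω n : ℤ) : ℝ) - birkhoffPsi ω n = XF ω n := by
  have hnu : (n:ℤ) + 1 ≤ nuF ω (n:ℤ) := nuF_ge ω n
  have hq : qhatF ω n = qPlus ω (nuF ω (n:ℤ)).toNat := by
    rw [qhatF, if_neg (by omega)]
  have hM1 : ((nuF ω (n:ℤ)).toNat - 1) + 1 = (nuF ω (n:ℤ)).toNat := by omega
  have hlog : Real.log ((qPlus ω (nuF ω (n:ℤ)).toNat : ℤ):ℝ)
      = ∑ j ∈ Finset.range ((nuF ω (n:ℤ)).toNat), Real.log (tF ω ((j+1:ℕ):ℤ)) := by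
    have h := log_q_eq ω ((nuF ω (n:ℤ)).toNat - 1)
    rw [hM1] at h
    exact h
  have hIoc : ∑ i ∈ Finset.Ioc (0:ℤ) (nuF ω (n:ℤ)), Real.log (tF ω i)
      = ∑ j ∈ Finset.range ((nuF ω (n:ℤ)).toNat), Real.log (tF ω ((j+1:ℕ):ℤ)) := by
    have h := sum_Ioc_block (fun i => Real.log (tF ω i)) 0 ((nuF ω (n:ℤ)).toNat)
    rw [show (0:ℤ) + (((nuF ω (n:ℤ)).toNat:ℕ):ℤ) = nuF ω (n:ℤ) by omega] at h
    rw [h]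
    apply Finset.sum_congr rfl
    intro j _
    congr 2
    omega
  have hsingle : ∑ i ∈ Finset.Ioc (0:ℤ) (1:ℤ), Real.log (tF ω i) = Real.log (tF ω 1) := by
    have e : Finset.Ioc (0:ℤ) (1:ℤ) = {1} := by
      ext x
      simp only [Finset.mem_Ioc, Finset.mem_singleton]
      omega
    rw [e, Finset.sum_singleton]
  have hsplit := sum_Ioc_glue (fun i => Real.log (tF ω i))
    (by norm_num : (0:ℤ) ≤ 1) (by omega : (1:ℤ) ≤ nuF ω (n:ℤ))
  rw [hq, hlog, ← hIoc, birkhoff_eq, XF, Finset.sum_sub_distrib]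
  linarith [hsplit, hsingle]

lemma X_diff (n : ℕ) : |XF ω (n+1) - XF ω n| ≤ 2 * (4/9:ℝ)^n := by
  set S : ℕ := hF ω ((n:ℤ)+1) + 1 with hS
  have hnu1 : nuF ω ((n+1:ℕ):ℤ) = nuF ω (n:ℤ) + (S:ℤ) := by
    have e : ((n+1:ℕ):ℤ) = (n:ℤ)+1 := by push_cast; ring
    rw [e]
    have := nuF_succ ω (n:ℤ)
    push_cast
    omega
  have hg1 : (1:ℤ) ≤ nuF ω (n:ℤ) := by have := nuF_ge ω n; omega
  have hg2 : nuF ω (n:ℤ) ≤ nuF ω ((n+1:ℕ):ℤ) := by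
    rw [hnu1]; omega
  have hglue := sum_Ioc_glue (fun i => Real.log (tF ω i) - Real.log (yF ω i)) hg1 hg2
  have hdiff : XF ω (n+1) - XF ω n
      = ∑ i ∈ Finset.Ioc (nuF ω (n:ℤ)) (nuF ω ((n+1:ℕ):ℤ)),
          (Real.log (tF ω i) - Real.log (yF ω i)) := by
    rw [XF, XF]
    linarith [hglue]
  rw [hdiff, hnu1, sum_Ioc_block]
  have hterm : ∀ s ∈ Finset.range S,
      |Real.log (tF ω (nuF ω (n:ℤ) + ((s+1:ℕ):ℤ))) - Real.log (yF ω (nuF ω (n:ℤ) + ((s+1:ℕ):ℤ)))|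
        ≤ (4/9:ℝ)^n * (4 * aux (s+1)) := by
    intro s _
    have h1 := log_abs_diff (tF_ge_one ω (nuF ω (n:ℤ) + ((s+1:ℕ):ℤ)))
      (y_ge_one ω (nuF ω (n:ℤ) + ((s+1:ℕ):ℤ)))
    have h2 := est_t_y ω n s
    have h3 : (2/((s:ℝ)+3))^2 ≤ 4 * aux (s+1) := by
      rw [aux]
      have e : ((s+1:ℕ):ℝ) = (s:ℝ)+1 := by push_cast; ring
      rw [e]
      have h2' : (0:ℝ) < (s:ℝ)+2 := by positivity
      have h3' : (0:ℝ) < (s:ℝ)+3 := by positivity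
      rw [div_pow, div_le_iff₀ (by positivity), mul_comm (4:ℝ), mul_assoc,
        div_mul_eq_mul_div, le_div_iff₀ (by positivity)]
      ring_nf
      nlinarith [sq_nonneg ((s:ℝ))]
    calc |Real.log (tF ω (nuF ω (n:ℤ) + ((s+1:ℕ):ℤ))) - Real.log (yF ω (nuF ω (n:ℤ) + ((s+1:ℕ):ℤ)))|
        ≤ |tF ω (nuF ω (n:ℤ) + ((s+1:ℕ):ℤ)) - yF ω (nuF ω (n:ℤ) + ((s+1:ℕ):ℤ))| := h1
      _ ≤ (4/9:ℝ)^n * (2/((s:ℝ)+3))^2 := h2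
      _ ≤ (4/9:ℝ)^n * (4 * aux (s+1)) := by
          apply mul_le_mul_of_nonneg_left h3 (by positivity)
  calc |∑ s ∈ Finset.range S, (Real.log (tF ω (nuF ω (n:ℤ) + ((s+1:ℕ):ℤ)))
          - Real.log (yF ω (nuF ω (n:ℤ) + ((s+1:ℕ):ℤ))))|
      ≤ ∑ s ∈ Finset.range S,
          |Real.log (tF ω (nuF ω (n:ℤ) + ((s+1:ℕ):ℤ))) - Real.log (yF ω (nuF ω (n:ℤ) + ((s+1:ℕ):ℤ)))| :=
        Finset.abs_sum_le_sum_abs _ _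
    _ ≤ ∑ s ∈ Finset.range S, (4/9:ℝ)^n * (4 * aux (s+1)) := Finset.sum_le_sum hterm
    _ = (4/9:ℝ)^n * 4 * ∑ s ∈ Finset.range S, aux (s+1) := by
        rw [Finset.mul_sum]
        apply Finset.sum_congr rfl
        intro s _
        ring
    _ ≤ (4/9:ℝ)^n * 4 * (1/2) := by
        apply mul_le_mul_of_nonneg_left _ (by positivity)
        have h := Finset.sum_range_succ' aux S
        rw [sum_range_aux (S+1)] at h
        have ha0 : aux 0 = 1/2 := by rw [aux]; norm_num
        rw [ha0] at h
        have : (0:ℝ) < ((S+1:ℕ):ℝ)+1 := by positivity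
        have h2 : 0 ≤ 1/(((S+1:ℕ):ℝ)+1) := by positivity
        linarith
    _ = 2 * (4/9:ℝ)^n := by ring

end ECFAux
end AuxProof


open Filter in
/-- Approximation of `log q̂_n(ω̂⁺)` by Birkhoff sums of the roof function: there are a
function `g : D → ℝ` and a constant `C > 0` with
`|log q̂_n(ω̂⁺) − S_n(ψ)(ω̂) − g(ω̂)| ≤ C·3^{−n/3}` for all `ω̂ ∈ D` and `n ≥ 4`; in
particular `log q̂_n(ω̂⁺) − S_n(ψ)(ω̂) → g(ω̂)` uniformly and exponentially fast. -/
theorem log_qhat_birkhoff_approx :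
    ∃ g : DSpace → ℝ, ∃ C : ℝ, 0 < C ∧
      (∀ ω : DSpace, ∀ n : ℕ, 4 ≤ n →
        |Real.log (qhatF ω n : ℝ) - birkhoffPsi ω n - g ω| ≤
          C * (3 : ℝ) ^ (-(n : ℝ) / 3)) ∧
      (∀ ω : DSpace,
        Tendsto (fun n : ℕ => Real.log (qhatF ω n : ℝ) - birkhoffPsi ω n)
          atTop (nhds (g ω))) := by
    classical
  have hu : ∀ (ω : DSpace) (n : ℕ), dist (ECFAux.XF ω n) (ECFAux.XF ω (n+1)) ≤ 2 * (4/9:ℝ)^n := by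
    intro ω n
    rw [Real.dist_eq, abs_sub_comm]
    exact ECFAux.X_diff ω n
  have hcau : ∀ ω : DSpace, CauchySeq (fun n => ECFAux.XF ω n) := fun ω =>
    cauchySeq_of_le_geometric (4/9) 2 (by norm_num) (hu ω)
  set g : DSpace → ℝ := fun ω => limUnder atTop (fun n => ECFAux.XF ω n) with hg
  have htend : ∀ ω : DSpace, Tendsto (fun n => ECFAux.XF ω n) atTop (nhds (g ω)) := fun ω =>
    (hcau ω).tendsto_limUnder
  have hdist : ∀ (ω : DSpace) (n : ℕ), |ECFAux.XF ω n - g ω| ≤ 2 * (4/9:ℝ)^n / (1 - 4/9) := by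
    intro ω n
    have := dist_le_of_le_geometric_of_tendsto (4/9) 2 (by norm_num) (hu ω) (htend ω) n
    rwa [Real.dist_eq] at this
  have hpow : ∀ n : ℕ, ((4:ℝ)/9)^n ≤ (3:ℝ) ^ (-(n:ℝ)/3) := by
    intro n
    have hb0 : (0:ℝ) ≤ (3:ℝ) ^ ((-1:ℝ)/3) := Real.rpow_nonneg (by norm_num) _
    have hb3 : ((3:ℝ) ^ ((-1:ℝ)/3))^(3:ℕ) = 1/3 := by
      rw [← Real.rpow_natCast ((3:ℝ) ^ ((-1:ℝ)/3)) 3, ← Real.rpow_mul (by norm_num : (0:ℝ) ≤ 3)]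
      norm_num
    have h49 : (4/9:ℝ) ≤ (3:ℝ) ^ ((-1:ℝ)/3) := by
      apply le_of_pow_le_pow_left₀ (n := 3) (by norm_num) hb0
      rw [hb3]
      norm_num
    have h1 : ((4:ℝ)/9)^n ≤ ((3:ℝ) ^ ((-1:ℝ)/3))^n := pow_le_pow_left₀ (by norm_num) h49 n
    have h2 : ((3:ℝ) ^ ((-1:ℝ)/3))^n = (3:ℝ) ^ (-(n:ℝ)/3) := by
      rw [← Real.rpow_natCast ((3:ℝ) ^ ((-1:ℝ)/3)) n, ← Real.rpow_mul (by norm_num : (0:ℝ) ≤ 3)]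
      congr 1
      ring
    rw [← h2]
    exact h1
  refine ⟨g, 4, by norm_num, ?_, ?_⟩
  · intro ω n hn
    have h1 : Real.log ((qhatF ω n : ℤ) : ℝ) - birkhoffPsi ω n = ECFAux.XF ω n :=
      ECFAux.x_eq_X ω n (by omega)
    rw [sub_sub, ← sub_sub, h1]
    calc |ECFAux.XF ω n - g ω| ≤ 2 * (4/9:ℝ)^n / (1 - 4/9) := hdist ω n
      _ ≤ 4 * (4/9:ℝ)^n := by
          have hp : (0:ℝ) ≤ (4/9:ℝ)^n := by positivity
          have he : 2 * (4/9:ℝ)^n / (1 - 4/9) = (18/5) * (4/9:ℝ)^n := by ring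
          rw [he]
          linarith
      _ ≤ 4 * (3:ℝ)^(-(n:ℝ)/3) := by
          have := hpow n
          linarith
  · intro ω
    apply Tendsto.congr' _ (htend ω)
    filter_upwards [eventually_ge_atTop 1] with n hn
    exact (ECFAux.x_eq_X ω n hn).symm
end
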